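/- arXiv:2410.12306 — 5 statements merged into one kernel-verified Lean document; each statement's English description precedes it below -/
import Mathlib

section
/- Fix an integer n ≥ 2 and reals vm < vM, and fix x ∈ ℝ. Define, for y ≤ x, W⁻(y) = (1/n)·(vM−vm)^{−n}·∫_{vm⁺(y)}^{vM} (v−y)·(v−vm⁺(y))^{n−1} dv, where vm⁺(y) = vm + (x−y)/(n−1). Then W⁻ has a left derivative at y = x (i.e., a derivative within the set (−∞,x]), and this left derivative equals −(1/(n(n−1)))·(x−vm)/(vM−vm). -/
open MeasureTheory

/-- In a first-price auction with `n` bidders and values uniform on `[vm, vM]`,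
the payoff `W⁻(y)` of a deviator with parameter `y ≤ x` (the others using `x`)
has left derivative `-(1/(n(n-1))) (x - vm)/(vM - vm)` at `y = x`. -/
theorem leftDeriv_payoff_below (n : ℕ) (hn : 2 ≤ n) (vm vM : ℝ) (hv : vm < vM) (x : ℝ) :
    HasDerivWithinAt
      (fun y =>
        (1 / (n : ℝ)) * ((vM - vm) ^ n)⁻¹ *
          ∫ v in (vm + (x - y) / ((n : ℝ) - 1))..vM,
            (v - y) * (v - (vm + (x - y) / ((n : ℝ) - 1))) ^ (n - 1))
      (-(1 / ((n : ℝ) * ((n : ℝ) - 1))) * ((x - vm) / (vM - vm)))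
      (Set.Iic x) x := by
  obtain ⟨m, rfl⟩ : ∃ m, n = m + 2 := ⟨n - 2, by omega⟩
  have hcast : ((m + 2 : ℕ) : ℝ) - 1 = (m : ℝ) + 1 := by push_cast; ring
  have hsub : (m + 2) - 1 = m + 1 := rfl
  have h1 : ((m : ℝ) + 1) ≠ 0 := by positivity
  have h2 : ((m : ℝ) + 2) ≠ 0 := by positivity
  have h3 : ((m : ℝ) + 3) ≠ 0 := by positivity
  have hvne : vM - vm ≠ 0 := sub_ne_zero.2 hv.ne'
  -- a y
  set a : ℝ → ℝ := fun y => vm + (x - y) / ((m : ℝ) + 1) with ha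
  -- closed form of the integral
  have key : ∀ y : ℝ,
      (∫ v in (a y)..vM, (v - y) * (v - a y) ^ (m + 1))
        = (vM - a y) ^ (m + 3) / ((m : ℝ) + 3)
          + (a y - y) * (vM - a y) ^ (m + 2) / ((m : ℝ) + 2) := by
    intro y
    have hH : ∀ v : ℝ, HasDerivAt
        (fun v => (v - a y) ^ (m + 3) / ((m : ℝ) + 3)
          + (a y - y) * (v - a y) ^ (m + 2) / ((m : ℝ) + 2))
        ((v - y) * (v - a y) ^ (m + 1)) v := by
      intro v
      have d1 : HasDerivAt (fun v : ℝ => (v - a y) ^ (m + 3))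
          (((m : ℝ) + 3) * (v - a y) ^ (m + 2)) v := by
        have h := ((hasDerivAt_id v).sub_const (a y)).pow (m + 3)
        simp only [Nat.add_sub_cancel, mul_one, id_eq] at h
        refine h.congr_deriv ?_
        push_cast; ring
      have d2 : HasDerivAt (fun v : ℝ => (v - a y) ^ (m + 2))
          (((m : ℝ) + 2) * (v - a y) ^ (m + 1)) v := by
        have h := ((hasDerivAt_id v).sub_const (a y)).pow (m + 2)
        simp only [Nat.add_sub_cancel, mul_one, id_eq] at h
        refine h.congr_deriv ?_
        push_cast; ring
      have := (d1.div_const ((m : ℝ) + 3)).add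
        (((d2.const_mul (a y - y))).div_const ((m : ℝ) + 2))
      refine this.congr_deriv ?_
      rw [pow_succ (v - a y) (m + 1)]
      field_simp
      ring
    have hint : IntervalIntegrable (fun v => (v - y) * (v - a y) ^ (m + 1))
        volume (a y) vM := by
      apply Continuous.intervalIntegrable
      continuity
    have := intervalIntegral.integral_eq_sub_of_hasDerivAt (fun v _ => hH v) hint
    rw [this]
    simp
  -- the closed-form function
  set C : ℝ := 1 / ((m : ℝ) + 2) * ((vM - vm) ^ (m + 2))⁻¹ with hC
  set g : ℝ → ℝ := fun y => C * ((vM - a y) ^ (m + 3) / ((m : ℝ) + 3)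
      + (a y - y) * (vM - a y) ^ (m + 2) / ((m : ℝ) + 2)) with hg
  have hfg : (fun y =>
        (1 / ((m + 2 : ℕ) : ℝ)) * ((vM - vm) ^ (m + 2))⁻¹ *
          ∫ v in (vm + (x - y) / (((m + 2 : ℕ) : ℝ) - 1))..vM,
            (v - y) * (v - (vm + (x - y) / (((m + 2 : ℕ) : ℝ) - 1))) ^ ((m + 2) - 1)) = g := by
    funext y
    rw [hsub, hcast]
    rw [show (vm + (x - y) / ((m : ℝ) + 1)) = a y from rfl, key y, hg, hC]
    push_cast
    ring
  rw [hfg]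
  -- derivative of g at x
  have hax : a x = vm := by simp [ha]
  have hda : HasDerivAt a (-(1 / ((m : ℝ) + 1))) x := by
    have : HasDerivAt (fun y : ℝ => vm + (x - y) / ((m : ℝ) + 1))
        (-(1 / ((m : ℝ) + 1))) x := by
      have := ((hasDerivAt_const x x).sub (hasDerivAt_id x)).div_const ((m : ℝ) + 1)
      have := (hasDerivAt_const x vm).add this
      refine this.congr_deriv ?_
      ring
    exact this
  have hdT : HasDerivAt (fun y => vM - a y) (1 / ((m : ℝ) + 1)) x := by
    have := (hasDerivAt_const x vM).sub hda
    refine this.congr_deriv ?_; ring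
  have d1 : HasDerivAt (fun y => (vM - a y) ^ (m + 3))
      (((m : ℝ) + 3) * (vM - vm) ^ (m + 2) * (1 / ((m : ℝ) + 1))) x := by
    have := hdT.pow (m + 3)
    refine this.congr_deriv ?_
    rw [hax]; push_cast; ring
  have d2 : HasDerivAt (fun y => (vM - a y) ^ (m + 2))
      (((m : ℝ) + 2) * (vM - vm) ^ (m + 1) * (1 / ((m : ℝ) + 1))) x := by
    have := hdT.pow (m + 2)
    refine this.congr_deriv ?_
    rw [hax]; push_cast; ring
  have d3 : HasDerivAt (fun y => a y - y) (-(1 / ((m : ℝ) + 1)) - 1) x :=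
    hda.sub (hasDerivAt_id x)
  have d4 : HasDerivAt (fun y => (a y - y) * (vM - a y) ^ (m + 2))
      ((-(1 / ((m : ℝ) + 1)) - 1) * (vM - vm) ^ (m + 2)
        + (vm - x) * (((m : ℝ) + 2) * (vM - vm) ^ (m + 1) * (1 / ((m : ℝ) + 1)))) x := by
    have := d3.mul d2
    refine this.congr_deriv ?_ <;> rw [hax]
  have dg : HasDerivAt g
      (C * ((((m : ℝ) + 3) * (vM - vm) ^ (m + 2) * (1 / ((m : ℝ) + 1))) / ((m : ℝ) + 3)
        + ((-(1 / ((m : ℝ) + 1)) - 1) * (vM - vm) ^ (m + 2)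
        + (vm - x) * (((m : ℝ) + 2) * (vM - vm) ^ (m + 1) * (1 / ((m : ℝ) + 1)))) / ((m : ℝ) + 2))) x :=
    ((d1.div_const _).add (d4.div_const _)).const_mul C
  have heq : C * ((((m : ℝ) + 3) * (vM - vm) ^ (m + 2) * (1 / ((m : ℝ) + 1))) / ((m : ℝ) + 3)
        + ((-(1 / ((m : ℝ) + 1)) - 1) * (vM - vm) ^ (m + 2)
        + (vm - x) * (((m : ℝ) + 2) * (vM - vm) ^ (m + 1) * (1 / ((m : ℝ) + 1)))) / ((m : ℝ) + 2))
      = -(1 / (((m + 2 : ℕ) : ℝ) * (((m + 2 : ℕ) : ℝ) - 1))) * ((x - vm) / (vM - vm)) := by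
    have hE : (((m : ℝ) + 3) * (vM - vm) ^ (m + 2) * (1 / ((m : ℝ) + 1))) / ((m : ℝ) + 3)
          + ((-(1 / ((m : ℝ) + 1)) - 1) * (vM - vm) ^ (m + 2)
          + (vm - x) * (((m : ℝ) + 2) * (vM - vm) ^ (m + 1) * (1 / ((m : ℝ) + 1)))) / ((m : ℝ) + 2)
        = (vm - x) * (vM - vm) ^ (m + 1) / ((m : ℝ) + 1) := by
      rw [pow_succ (vM - vm) (m + 1)]
      field_simp
      ring
    rw [hC, hE, pow_succ (vM - vm) (m + 1)]
    push_cast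
    generalize hgB : (vM - vm) ^ (m + 1) = B
    have hB : B ≠ 0 := hgB ▸ pow_ne_zero _ hvne
    have e1 : (1 / ((m : ℝ) + 2) * (B * (vM - vm))⁻¹) * ((vm - x) * B / ((m : ℝ) + 1))
        = (vm - x) * (B * B⁻¹) * ((((m : ℝ) + 2))⁻¹ * (vM - vm)⁻¹ * (((m : ℝ) + 1))⁻¹) := by
      simp only [one_div, div_eq_mul_inv, mul_inv]; ring
    rw [e1, mul_inv_cancel₀ hB, mul_one]
    have h5 : ((m : ℝ) + 2) - 1 = (m : ℝ) + 1 := by ring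
    rw [h5]
    simp only [one_div, div_eq_mul_inv, mul_inv]
    ring
  rw [← heq]
  exact dg.hasDerivWithinAt
end

section
/- Fix an integer n ≥ 2 and an integer K ≥ 2. Let (vm^(1), vM^(1)), …, (vm^(K), vM^(K)) be pairs of reals with vm^(k) < vM^(k) for each k, vm^(1) < ⋯ < vm^(K), and Δv^(1) < ⋯ < Δv^(K) where Δv^(k) = vM^(k) − vm^(k). Let (vm(t), vM(t)) be a piecewise-constant function of t ∈ [0,∞) taking values in {(vm^(k), vM^(k)) : 1 ≤ k ≤ K}, with finitely many switching times in each bounded interval, and let x : [0,∞) → ℝ be continuous, differentiable at every non-switching time, with x'(t) = −(1/(n(n−1)))·(x(t) − vm(t))/(vM(t) − vm(t)) there, and x(0) ∈ [vm^(1), vm^(K)]. Write Δv(t) = vM(t) − vm(t) and g = min_{1 ≤ k ≤ K−1} (Δv^(k+1) − Δv^(k)) > 0. Then there exists a constant C ≥ 0, independent of T, such that for all T > 0: ∫_0^T Δv(t)·x'(t) dt ≥ (g/2)·∫_0^T |x'(t)| dt − C. -/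
open MeasureTheory

private lemma min_seg_nonneg (v0 v1 y : ℝ) (h : v0 ≤ v1) : 0 ≤ min y v1 - min y v0 := by
  simp only [min_def]; split_ifs <;> linarith

private lemma min_seg_le (v0 v1 y : ℝ) (h : v0 ≤ v1) : min y v1 - min y v0 ≤ v1 - v0 := by
  simp only [min_def]; split_ifs <;> linarith

private lemma ell_nonneg (v0 v1 p q : ℝ) (h01 : v0 ≤ v1) (hpq : p ≤ q) :
    0 ≤ (min q v1 - min p v1) - (min q v0 - min p v0) := by
  simp only [min_def]; split_ifs <;> linarith

private lemma ell_zero_left (v0 v1 p q : ℝ) (h01 : v0 ≤ v1) (hpq : p ≤ q) (hq : q ≤ v0) :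
    (min q v1 - min p v1) - (min q v0 - min p v0) = 0 := by
  simp only [min_def]; split_ifs <;> linarith

private lemma ell_zero_right (v0 v1 p q : ℝ) (h01 : v0 ≤ v1) (hpq : p ≤ q) (hp : v1 ≤ p) :
    (min q v1 - min p v1) - (min q v0 - min p v0) = 0 := by
  simp only [min_def]; split_ifs <;> linarith

private lemma hasDerivAt_exp_lin (c a t : ℝ) :
    HasDerivAt (fun u : ℝ => Real.exp (c * (u - a))) (c * Real.exp (c * (t - a))) t := by
  have h1 : HasDerivAt (fun u : ℝ => c * (u - a)) c t := by
    simpa using ((hasDerivAt_id t).sub_const a).const_mul c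
  simpa [mul_comm, Function.comp_def] using (Real.hasDerivAt_exp (c * (t - a))).comp t h1

set_option maxHeartbeats 1600000 in
/-- Finite-time lower bound behind revenue inequivalence when the interval width
`Δv^(k) = vM^(k) - vm^(k)` increases with `k`: along the adaptive dynamics
`x' = -(1/(n(n-1))) (x - vm(t))/(vM(t) - vm(t))` in a piecewise-constant
`K`-state environment, with `g` the minimum gap of consecutive widths,
`∫_0^T Δv(t) x'(t) dt ≥ (g/2) ∫_0^T |x'(t)| dt - C` for a constant `C`
independent of `T` (and `g > 0`). -/
theorem revenue_gap_lower_bound (n K : ℕ) (hn : 2 ≤ n) (hK : 2 ≤ K)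
    (vmk vMk : ℕ → ℝ)
    (hlt : ∀ k < K, vmk k < vMk k)
    (hmono : ∀ k, k + 1 < K → vmk k < vmk (k + 1))
    (hDmono : ∀ k, k + 1 < K → vMk k - vmk k < vMk (k + 1) - vmk (k + 1))
    (vm vM : ℝ → ℝ)
    (hstate : ∀ t, 0 ≤ t → ∃ k < K, vm t = vmk k ∧ vM t = vMk k)
    (S : Set ℝ)
    (hSfin : ∀ T : ℝ, (S ∩ Set.Icc 0 T).Finite)
    (hpc : ∀ t, 0 ≤ t → t ∉ S → ∀ᶠ s in nhds t, vm s = vm t ∧ vM s = vM t)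
    (x xd : ℝ → ℝ)
    (hx : ContinuousOn x (Set.Ici 0))
    (hode : ∀ t, 0 ≤ t → t ∉ S → HasDerivAt x (xd t) t)
    (hform : ∀ t, 0 ≤ t → t ∉ S →
      xd t = -(1 / ((n : ℝ) * ((n : ℝ) - 1))) * ((x t - vm t) / (vM t - vm t)))
    (hx0 : x 0 ∈ Set.Icc (vmk 0) (vmk (K - 1)))
    (g : ℝ)
    (hg : IsLeast ((fun k => (vMk (k + 1) - vmk (k + 1)) - (vMk k - vmk k)) ''
      {k | k + 1 < K}) g) :
    0 < g ∧ ∃ C, 0 ≤ C ∧ ∀ T > (0 : ℝ),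
      g / 2 * (∫ t in (0:ℝ)..T, |xd t|) - C ≤ ∫ t in (0:ℝ)..T, (vM t - vm t) * xd t := by
  classical
  obtain ⟨⟨k0, hk0, hgk0⟩, hglb⟩ := hg
  have hgk0' : vMk (k0 + 1) - vmk (k0 + 1) - (vMk k0 - vmk k0) = g := hgk0
  have hg0 : 0 < g := by
    have := hDmono k0 hk0; linarith
  have hgap : ∀ k, k + 1 < K → g ≤ (vMk (k+1) - vmk (k+1)) - (vMk k - vmk k) :=
    fun k hk => hglb ⟨k, hk, rfl⟩
  have hΔpos : ∀ k, k < K → 0 < vMk k - vmk k := fun k hk => sub_pos.mpr (hlt k hk)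
  have hvmono : ∀ i j : ℕ, i ≤ j → j < K → vmk i ≤ vmk j := by
    intro i j hij
    induction hij with
    | refl => exact fun _ => le_rfl
    | @step m h ih => exact fun hK' => (ih (by omega)).trans (hmono m hK').le
  have hDmono' : ∀ i j : ℕ, i ≤ j → j < K → vMk i - vmk i ≤ vMk j - vmk j := by
    intro i j hij
    induction hij with
    | refl => exact fun _ => le_rfl
    | @step m h ih => exact fun hK' => (ih (by omega)).trans (hDmono m hK').le
  have hK1K : K - 1 < K := by omega
  -- the potential function
  set Ψ : ℝ → ℝ := fun y => ∑ j ∈ Finset.range (K-1),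
    (vMk j - vmk j + g/2) * (min y (vmk (j+1)) - min y (vmk j)) with hΨdef
  set C : ℝ := ∑ j ∈ Finset.range (K-1),
    (vMk j - vmk j + g/2) * (vmk (j+1) - vmk j) with hCdef
  have hjK : ∀ j ∈ Finset.range (K-1), j < K ∧ j + 1 < K := by
    intro j hj; rw [Finset.mem_range] at hj; omega
  have hslope_nn : ∀ j ∈ Finset.range (K-1), 0 ≤ vMk j - vmk j + g/2 := by
    intro j hj; have := hΔpos j (hjK j hj).1; linarith
  have hC0 : 0 ≤ C := Finset.sum_nonneg (fun j hj => mul_nonneg (hslope_nn j hj)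
      (by have := hmono j (hjK j hj).2; linarith))
  have hΨ0 : ∀ y, 0 ≤ Ψ y := fun y => Finset.sum_nonneg (fun j hj =>
    mul_nonneg (hslope_nn j hj) (min_seg_nonneg _ _ _ (hmono j (hjK j hj).2).le))
  have hΨC : ∀ y, Ψ y ≤ C := fun y => Finset.sum_le_sum (fun j hj =>
    mul_le_mul_of_nonneg_left (min_seg_le _ _ _ (hmono j (hjK j hj).2).le) (hslope_nn j hj))
  -- key potential inequality
  have lemA : ∀ k, k < K → ∀ p q : ℝ,
      p ∈ Set.Icc (vmk 0) (vmk (K-1)) → q ∈ Set.Icc (vmk 0) (vmk (K-1)) →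
      ((p ≤ q ∧ q ≤ vmk k) ∨ (vmk k ≤ q ∧ q ≤ p)) →
      Ψ q - Ψ p ≤ (vMk k - vmk k) * (q - p) - g/2 * |q - p| := by
    intro k hkK p q hp hq hbtw
    rcases hbtw with ⟨hpq, hqk⟩ | ⟨hkq, hqp⟩
    · rw [abs_of_nonneg (by linarith : (0:ℝ) ≤ q - p)]
      have hsum : Ψ q - Ψ p = ∑ j ∈ Finset.range (K-1),
          (vMk j - vmk j + g/2) *
            ((min q (vmk (j+1)) - min p (vmk (j+1))) - (min q (vmk j) - min p (vmk j))) := by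
        rw [hΨdef, ← Finset.sum_sub_distrib]
        exact Finset.sum_congr rfl (fun j _ => by ring)
      have htel : ∑ j ∈ Finset.range (K-1),
          ((min q (vmk (j+1)) - min p (vmk (j+1))) - (min q (vmk j) - min p (vmk j)))
          = q - p := by
        rw [Finset.sum_range_sub (fun j => min q (vmk j) - min p (vmk j))]
        rw [min_eq_left hq.2, min_eq_left hp.2, min_eq_right hq.1, min_eq_right hp.1]
        ring
      calc Ψ q - Ψ p = _ := hsum
        _ ≤ ∑ j ∈ Finset.range (K-1), (vMk k - vmk k - g/2) *
            ((min q (vmk (j+1)) - min p (vmk (j+1))) - (min q (vmk j) - min p (vmk j))) := by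
          refine Finset.sum_le_sum (fun j hj => ?_)
          obtain ⟨hjK1, hj1K⟩ := hjK j hj
          by_cases hcase : q ≤ vmk j
          · rw [ell_zero_left _ _ _ _ (hmono j hj1K).le hpq hcase]
            simp
          · push_neg at hcase
            have hjk : j + 1 ≤ k := by
              by_contra hcon
              push_neg at hcon
              exact absurd (hqk.trans (hvmono k j (by omega) hjK1)) (not_le.mpr hcase)
            have hsl : vMk j - vmk j + g/2 ≤ vMk k - vmk k - g/2 := by
              have h1 := hgap j hj1K
              have h2 := hDmono' (j+1) k hjk hkK
              linarith
            exact mul_le_mul_of_nonneg_right hsl (ell_nonneg _ _ _ _ (hmono j hj1K).le hpq)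
        _ = (vMk k - vmk k - g/2) * (q - p) := by rw [← Finset.mul_sum, htel]
        _ = (vMk k - vmk k) * (q - p) - g/2 * (q - p) := by ring
    · rw [abs_of_nonpos (by linarith : q - p ≤ 0)]
      have hsum : Ψ p - Ψ q = ∑ j ∈ Finset.range (K-1),
          (vMk j - vmk j + g/2) *
            ((min p (vmk (j+1)) - min q (vmk (j+1))) - (min p (vmk j) - min q (vmk j))) := by
        rw [hΨdef, ← Finset.sum_sub_distrib]
        exact Finset.sum_congr rfl (fun j _ => by ring)
      have htel : ∑ j ∈ Finset.range (K-1),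
          ((min p (vmk (j+1)) - min q (vmk (j+1))) - (min p (vmk j) - min q (vmk j)))
          = p - q := by
        rw [Finset.sum_range_sub (fun j => min p (vmk j) - min q (vmk j))]
        rw [min_eq_left hq.2, min_eq_left hp.2, min_eq_right hq.1, min_eq_right hp.1]
        ring
      have hge : (vMk k - vmk k + g/2) * (p - q) ≤ Ψ p - Ψ q := by
        rw [hsum, ← htel, Finset.mul_sum]
        refine Finset.sum_le_sum (fun j hj => ?_)
        obtain ⟨hjK1, hj1K⟩ := hjK j hj
        by_cases hcase : vmk (j+1) ≤ q
        · rw [ell_zero_right _ _ _ _ (hmono j hj1K).le hqp hcase]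
          simp
        · push_neg at hcase
          have hjk : k ≤ j := by
            by_contra hcon
            push_neg at hcon
            exact absurd ((hvmono (j+1) k (by omega) hkK).trans hkq) (not_le.mpr hcase)
          have hsl : vMk k - vmk k + g/2 ≤ vMk j - vmk j + g/2 := by
            have h2 := hDmono' k j hjk hjK1
            linarith
          exact mul_le_mul_of_nonneg_right hsl (ell_nonneg _ _ _ _ (hmono j hj1K).le hqp)
      linarith
  -- the environment is constant on S-free open intervals
  have hconst : ∀ a b : ℝ, 0 ≤ a → a < b → S ∩ Set.Ioo a b = ∅ →
      ∃ k, k < K ∧ ∀ t ∈ Set.Ioo a b, vm t = vmk k ∧ vM t = vMk k := by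
    intro a b ha hab hS
    obtain ⟨k, hkK, hk1, hk2⟩ := hstate ((a+b)/2) (by linarith)
    refine ⟨k, hkK, ?_⟩
    by_contra hbad
    push_neg at hbad
    obtain ⟨t1, ht1, hne⟩ := hbad
    set U : Set ℝ := {t | t ∈ Set.Ioo a b ∧ (vm t = vmk k ∧ vM t = vMk k)} with hU
    set V : Set ℝ := {t | t ∈ Set.Ioo a b ∧ ¬(vm t = vmk k ∧ vM t = vMk k)} with hV
    have hloc : ∀ t ∈ Set.Ioo a b, ∀ᶠ s in nhds t, s ∈ Set.Ioo a b ∧ vm s = vm t ∧ vM s = vM t := by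
      intro t ht
      have h1 := hpc t (ha.trans ht.1.le)
        (fun hts => Set.eq_empty_iff_forall_notMem.mp hS t ⟨hts, ht⟩)
      filter_upwards [h1, isOpen_Ioo.mem_nhds ht] with s hs1 hs2
      exact ⟨hs2, hs1⟩
    have hUopen : IsOpen U := by
      rw [isOpen_iff_mem_nhds]
      intro t ht
      filter_upwards [hloc t ht.1] with s hs
      exact ⟨hs.1, hs.2.1.trans ht.2.1, hs.2.2.trans ht.2.2⟩
    have hVopen : IsOpen V := by
      rw [isOpen_iff_mem_nhds]
      intro t ht
      filter_upwards [hloc t ht.1] with s hs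
      exact ⟨hs.1, fun hcon => ht.2 ⟨hs.2.1.symm.trans hcon.1, hs.2.2.symm.trans hcon.2⟩⟩
    have hmid : (a+b)/2 ∈ Set.Ioo a b := ⟨by linarith, by linarith⟩
    have hsub : Set.Ioo a b ⊆ U ∪ V := fun t ht => by
      by_cases h : vm t = vmk k ∧ vM t = vMk k
      · exact Or.inl ⟨ht, h⟩
      · exact Or.inr ⟨ht, h⟩
    have hUne : (Set.Ioo a b ∩ U).Nonempty := by
      refine ⟨(a+b)/2, hmid, ?_⟩
      rw [hU]
      exact ⟨hmid, hk1, hk2⟩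
    have hVne : (Set.Ioo a b ∩ V).Nonempty := by
      refine ⟨t1, ht1, ?_⟩
      rw [hV]
      exact ⟨ht1, fun hcon => hne hcon.1 hcon.2⟩
    have hcc := isPreconnected_Ioo (a := a) (b := b) U V hUopen hVopen hsub hUne hVne
    obtain ⟨s, _, hsU, hsV⟩ := hcc
    rw [hV] at hsV
    rw [hU] at hsU
    exact hsV.2 hsU.2
  have hnn : (0:ℝ) < (n:ℝ) * ((n:ℝ) - 1) := by
    have h2 : (2:ℝ) ≤ (n:ℝ) := by exact_mod_cast hn
    nlinarith
  -- the single-piece lemma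
  have piece : ∀ a b : ℝ, 0 ≤ a → a < b → S ∩ Set.Ioo a b = ∅ →
      x a ∈ Set.Icc (vmk 0) (vmk (K-1)) →
      x b ∈ Set.Icc (vmk 0) (vmk (K-1)) ∧
      IntervalIntegrable xd volume a b ∧
      IntervalIntegrable (fun t => |xd t|) volume a b ∧
      IntervalIntegrable (fun t => (vM t - vm t) * xd t) volume a b ∧
      g/2 * (∫ t in a..b, |xd t|) + (Ψ (x b) - Ψ (x a)) ≤ ∫ t in a..b, (vM t - vm t) * xd t := by
    intro a b ha hab hS hboxa
    obtain ⟨k, hkK, hkv⟩ := hconst a b ha hab hS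
    have hΔ : 0 < vMk k - vmk k := hΔpos k hkK
    set θ : ℝ := 1 / ((n:ℝ) * ((n:ℝ) - 1) * (vMk k - vmk k)) with hθdef
    have hθ : 0 < θ := by
      rw [hθdef]; positivity
    set lam : ℝ := x a - vmk k with hlamdef
    have hnotS : ∀ t ∈ Set.Ioo a b, t ∉ S := fun t ht hts =>
      Set.eq_empty_iff_forall_notMem.mp hS t ⟨hts, ht⟩
    have ht0 : ∀ t ∈ Set.Ioo a b, (0:ℝ) ≤ t := fun t ht => ha.trans ht.1.le
    have hxd : ∀ t ∈ Set.Ioo a b, xd t = -θ * (x t - vmk k) := by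
      intro t ht
      rw [hform t (ht0 t ht) (hnotS t ht), (hkv t ht).1, (hkv t ht).2, hθdef]
      have h1 : ((n:ℝ) * ((n:ℝ) - 1)) ≠ 0 := ne_of_gt hnn
      have h2 : vMk k - vmk k ≠ 0 := ne_of_gt hΔ
      field_simp
      try ring
    have hxcont : ContinuousOn x (Set.Icc a b) := hx.mono (fun t ht => ha.trans ht.1)
    have hxform : ∀ t ∈ Set.Icc a b, x t = vmk k + lam * Real.exp (-θ * (t - a)) := by
      intro t ht
      rcases eq_or_lt_of_le ht.1 with heq | hat
      · rw [← heq]; simp [hlamdef]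
      · have hyderiv : ∀ s ∈ Set.Ioo a t, HasDerivWithinAt
            (fun u => (x u - vmk k) * Real.exp (θ * (u - a))) ((fun _ => (0:ℝ)) s)
            (Set.Ioi s) s := by
          intro s hs
          have hsab : s ∈ Set.Ioo a b := ⟨hs.1, lt_of_lt_of_le hs.2 ht.2⟩
          have h1 : HasDerivAt x (xd s) s := hode s (ht0 s hsab) (hnotS s hsab)
          have h2 := hasDerivAt_exp_lin θ a s
          have h3 := (h1.sub_const (vmk k)).mul h2
          have h4 : xd s * Real.exp (θ * (s - a)) +
              (x s - vmk k) * (θ * Real.exp (θ * (s - a))) = 0 := by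
            rw [hxd s hsab]; ring
          rw [h4] at h3
          exact h3.hasDerivWithinAt
        have hycont : ContinuousOn (fun u => (x u - vmk k) * Real.exp (θ * (u - a)))
            (Set.Icc a t) := by
          apply ContinuousOn.mul
          · exact (hxcont.mono (Set.Icc_subset_Icc_right ht.2)).sub continuousOn_const
          · exact (Real.continuous_exp.comp
              (continuous_const.mul (continuous_id.sub continuous_const))).continuousOn
        have h0 := intervalIntegral.integral_eq_sub_of_hasDeriv_right_of_le hat.le hycont
          hyderiv (intervalIntegrable_const (c := (0:ℝ)))
        rw [intervalIntegral.integral_zero] at h0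
        have key : (x t - vmk k) * Real.exp (θ * (t - a)) = lam := by
          rw [hlamdef]
          rw [sub_self, mul_zero, Real.exp_zero, mul_one] at h0
          linarith
        have h3 : Real.exp (θ * (t - a)) * Real.exp (-θ * (t - a)) = 1 := by
          rw [← Real.exp_add]
          norm_num
        have h2 : lam * Real.exp (-θ * (t - a)) =
            (x t - vmk k) * Real.exp (θ * (t - a)) * Real.exp (-θ * (t - a)) := by
          rw [key]
        rw [mul_assoc, h3, mul_one] at h2
        linarith
    have hφderiv : ∀ t : ℝ, HasDerivAt (fun s => vmk k + lam * Real.exp (-θ * (s - a)))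
        (lam * (-θ * Real.exp (-θ * (t - a)))) t := fun t =>
      ((hasDerivAt_exp_lin (-θ) a t).const_mul lam).const_add (vmk k)
    have hφcont : Continuous fun t => lam * (-θ * Real.exp (-θ * (t - a))) :=
      continuous_const.mul (continuous_const.mul (Real.continuous_exp.comp
        (continuous_const.mul (continuous_id.sub continuous_const))))
    have hφint : IntervalIntegrable (fun t => lam * (-θ * Real.exp (-θ * (t - a))))
        volume a b := hφcont.intervalIntegrable a b
    have hIφ : ∫ t in a..b, lam * (-θ * Real.exp (-θ * (t - a))) = x b - x a := by
      rw [intervalIntegral.integral_eq_sub_of_hasDerivAt (fun t _ => hφderiv t) hφint]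
      rw [← hxform b ⟨hab.le, le_rfl⟩, ← hxform a ⟨le_rfl, hab.le⟩]
    have hxdφ : ∀ t ∈ Set.Ioo a b, xd t = lam * (-θ * Real.exp (-θ * (t - a))) := by
      intro t ht
      rw [hxd t ht, hxform t ⟨ht.1.le, ht.2.le⟩]
      ring
    have hbm : ∀ᵐ (t : ℝ), t ≠ b := by
      rw [ae_iff]
      have hset : {t : ℝ | ¬ t ≠ b} = {b} := by ext t; simp
      rw [hset]
      exact Real.volume_singleton
    have hIoc_eq : xd =ᵐ[volume.restrict (Set.Ioc a b)]
        (fun t => lam * (-θ * Real.exp (-θ * (t - a)))) := by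
      rw [Filter.EventuallyEq, ae_restrict_iff' measurableSet_Ioc]
      filter_upwards [hbm] with t htb ht
      exact hxdφ t ⟨ht.1, lt_of_le_of_ne ht.2 htb⟩
    have hint_xd : IntervalIntegrable xd volume a b := by
      rw [intervalIntegrable_iff_integrableOn_Ioc_of_le hab.le]
      exact (hφcont.integrableOn_Ioc).congr hIoc_eq.symm
    have hint_abs : IntervalIntegrable (fun t => |xd t|) volume a b := by
      rw [intervalIntegrable_iff_integrableOn_Ioc_of_le hab.le]
      exact ((hφcont.abs).integrableOn_Ioc).congr ((hIoc_eq.fun_comp (fun z => |z|)).symm)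
    have hint_prod : IntervalIntegrable (fun t => (vM t - vm t) * xd t) volume a b := by
      rw [intervalIntegrable_iff_integrableOn_Ioc_of_le hab.le]
      have hc2 : Continuous fun t => (vMk k - vmk k) * (lam * (-θ * Real.exp (-θ * (t - a)))) :=
        continuous_const.mul hφcont
      refine (hc2.integrableOn_Ioc).congr ?_
      rw [Filter.EventuallyEq, ae_restrict_iff' measurableSet_Ioc]
      filter_upwards [hbm] with t htb ht
      have ht' : t ∈ Set.Ioo a b := ⟨ht.1, lt_of_le_of_ne ht.2 htb⟩
      rw [(hkv t ht').1, (hkv t ht').2, hxdφ t ht']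
    have hIocBA : ∀ (f h : ℝ → ℝ), ∀ᵐ (t : ℝ), t ∈ Set.Ioc b a → f t = h t := by
      intro f h
      have : Set.Ioc b a = ∅ := Set.Ioc_eq_empty (by linarith)
      filter_upwards with t ht
      rw [this] at ht
      exact absurd ht (Set.notMem_empty t)
    have hIΔ : ∫ t in a..b, (vM t - vm t) * xd t = (vMk k - vmk k) * (x b - x a) := by
      rw [intervalIntegral.integral_congr_ae'
        (g := fun t => (vMk k - vmk k) * (lam * (-θ * Real.exp (-θ * (t - a)))))
        (by
          filter_upwards [hbm] with t htb ht
          have ht' : t ∈ Set.Ioo a b := ⟨ht.1, lt_of_le_of_ne ht.2 htb⟩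
          rw [(hkv t ht').1, (hkv t ht').2, hxdφ t ht']) (hIocBA _ _)]
      rw [intervalIntegral.integral_const_mul, hIφ]
    have hEb1 : Real.exp (-θ * (b - a)) ≤ 1 := by
      rw [Real.exp_le_one_iff]
      nlinarith [mul_pos hθ (show (0:ℝ) < b - a by linarith)]
    have hxb_form : x b = vmk k + lam * Real.exp (-θ * (b - a)) := hxform b ⟨hab.le, le_rfl⟩
    have hxa_form : x a = vmk k + lam := by
      have := hxform a ⟨le_rfl, hab.le⟩
      simpa using this
    have hEb0 : (0:ℝ) < Real.exp (-θ * (b - a)) := Real.exp_pos _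
    have hIabs : ∫ t in a..b, |xd t| = |x b - x a| := by
      have h1 : ∫ t in a..b, |xd t| = ∫ t in a..b, |lam * (-θ * Real.exp (-θ * (t - a)))| := by
        refine intervalIntegral.integral_congr_ae' ?_ (hIocBA _ _)
        filter_upwards [hbm] with t htb ht
        have ht' : t ∈ Set.Ioo a b := ⟨ht.1, lt_of_le_of_ne ht.2 htb⟩
        rw [hxdφ t ht']
      rw [h1]
      rcases le_or_gt 0 lam with hl | hl
      · have h2 : ∀ t : ℝ, |lam * (-θ * Real.exp (-θ * (t - a)))| =
            -(lam * (-θ * Real.exp (-θ * (t - a)))) := by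
          intro t
          apply abs_of_nonpos
          have := Real.exp_pos (-θ * (t - a))
          nlinarith [mul_nonneg (mul_nonneg hl hθ.le) this.le]
        have h3 : ∫ t in a..b, |lam * (-θ * Real.exp (-θ * (t - a)))| =
            ∫ t in a..b, -(lam * (-θ * Real.exp (-θ * (t - a)))) :=
          intervalIntegral.integral_congr (fun t _ => h2 t)
        rw [h3, intervalIntegral.integral_neg, hIφ]
        have hxb : x b - x a ≤ 0 := by
          rw [hxb_form, hxa_form]
          nlinarith [mul_nonneg hl (sub_nonneg.mpr hEb1)]
        rw [abs_of_nonpos hxb]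
      · have h2 : ∀ t : ℝ, |lam * (-θ * Real.exp (-θ * (t - a)))| =
            lam * (-θ * Real.exp (-θ * (t - a))) := by
          intro t
          apply abs_of_nonneg
          have := Real.exp_pos (-θ * (t - a))
          nlinarith [mul_nonneg (mul_nonneg (neg_nonneg.mpr hl.le) hθ.le) this.le]
        have h3 : ∫ t in a..b, |lam * (-θ * Real.exp (-θ * (t - a)))| =
            ∫ t in a..b, lam * (-θ * Real.exp (-θ * (t - a))) :=
          intervalIntegral.integral_congr (fun t _ => h2 t)
        rw [h3, hIφ]
        have hxb : 0 ≤ x b - x a := by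
          rw [hxb_form, hxa_form]
          nlinarith [mul_nonneg (neg_nonneg.mpr hl.le) (sub_nonneg.mpr hEb1)]
        rw [abs_of_nonneg hxb]
    have hbtw : (x a ≤ x b ∧ x b ≤ vmk k) ∨ (vmk k ≤ x b ∧ x b ≤ x a) := by
      rcases le_or_gt 0 lam with hl | hl
      · right
        constructor
        · rw [hxb_form]; nlinarith [mul_nonneg hl hEb0.le]
        · rw [hxb_form, hxa_form]; nlinarith [mul_nonneg hl (sub_nonneg.mpr hEb1)]
      · left
        constructor
        · rw [hxb_form, hxa_form]; nlinarith [mul_nonneg (neg_nonneg.mpr hl.le) (sub_nonneg.mpr hEb1)]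
        · rw [hxb_form]; nlinarith [mul_nonneg (neg_nonneg.mpr hl.le) hEb0.le]
    have hboxb : x b ∈ Set.Icc (vmk 0) (vmk (K-1)) := by
      have hk0 : vmk 0 ≤ vmk k := hvmono 0 k (Nat.zero_le k) hkK
      have hkK1 : vmk k ≤ vmk (K-1) := hvmono k (K-1) (by omega) hK1K
      rcases hbtw with ⟨h1, h2⟩ | ⟨h1, h2⟩
      · exact ⟨hboxa.1.trans h1, h2.trans hkK1⟩
      · exact ⟨hk0.trans h1, h2.trans hboxa.2⟩
    have hlem := lemA k hkK (x a) (x b) hboxa hboxb hbtw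
    refine ⟨hboxb, hint_xd, hint_abs, hint_prod, ?_⟩
    rw [hIΔ, hIabs]
    linarith
  -- main induction over the number of switching times
  have main : ∀ m : ℕ, ∀ b : ℝ, 0 < b → (S ∩ Set.Ioo 0 b).ncard = m →
      x b ∈ Set.Icc (vmk 0) (vmk (K-1)) ∧
      IntervalIntegrable xd volume 0 b ∧
      IntervalIntegrable (fun t => |xd t|) volume 0 b ∧
      IntervalIntegrable (fun t => (vM t - vm t) * xd t) volume 0 b ∧
      g/2 * (∫ t in (0:ℝ)..b, |xd t|) + (Ψ (x b) - Ψ (x 0)) ≤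
        ∫ t in (0:ℝ)..b, (vM t - vm t) * xd t := by
    intro m
    induction m with
    | zero =>
      intro b hb hcard
      have hfin : (S ∩ Set.Ioo 0 b).Finite := (hSfin b).subset
        (fun t ht => ⟨ht.1, ht.2.1.le, ht.2.2.le⟩)
      have hempty : S ∩ Set.Ioo 0 b = ∅ := (Set.ncard_eq_zero hfin).mp hcard
      exact piece 0 b le_rfl hb hempty hx0
    | succ m ih =>
      intro b hb hcard
      have hfin : (S ∩ Set.Ioo 0 b).Finite := (hSfin b).subset
        (fun t ht => ⟨ht.1, ht.2.1.le, ht.2.2.le⟩)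
      have hne : (S ∩ Set.Ioo 0 b).Nonempty := by
        rw [Set.nonempty_iff_ne_empty]
        intro h
        rw [h, Set.ncard_empty] at hcard
        omega
      have hFne : hfin.toFinset.Nonempty := by
        rwa [Set.Finite.toFinset_nonempty]
      set a : ℝ := hfin.toFinset.max' hFne with hadef
      have ha_mem : a ∈ S ∩ Set.Ioo 0 b := hfin.mem_toFinset.mp (hfin.toFinset.max'_mem hFne)
      have hamax : ∀ t ∈ S ∩ Set.Ioo 0 b, t ≤ a := fun t ht =>
        hfin.toFinset.le_max' t (hfin.mem_toFinset.mpr ht)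
      have ha0 : 0 < a := ha_mem.2.1
      have hab : a < b := ha_mem.2.2
      have hset : S ∩ Set.Ioo 0 a = (S ∩ Set.Ioo 0 b) \ {a} := by
        ext t
        constructor
        · rintro ⟨ht1, ht2, ht3⟩
          exact ⟨⟨ht1, ht2, ht3.trans hab⟩, fun h => absurd (Set.mem_singleton_iff.mp h) (ne_of_lt ht3)⟩
        · rintro ⟨⟨ht1, ht2, ht3⟩, ht4⟩
          rw [Set.mem_singleton_iff] at ht4
          have := hamax t ⟨ht1, ht2, ht3⟩
          exact ⟨ht1, ht2, lt_of_le_of_ne this ht4⟩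
      have hcard' : (S ∩ Set.Ioo 0 a).ncard = m := by
        rw [hset, Set.ncard_diff_singleton_of_mem ha_mem, hcard]
        omega
      obtain ⟨hbox_a, hi1a, hi2a, hi3a, hineq_a⟩ := ih a ha0 hcard'
      have hSab : S ∩ Set.Ioo a b = ∅ := by
        rw [Set.eq_empty_iff_forall_notMem]
        rintro t ⟨ht1, ht2, ht3⟩
        have := hamax t ⟨ht1, ha0.trans ht2, ht3⟩
        linarith
      obtain ⟨hbox_b, hi1b, hi2b, hi3b, hineq_b⟩ := piece a b ha0.le hab hSab hbox_a
      refine ⟨hbox_b, hi1a.trans hi1b, hi2a.trans hi2b, hi3a.trans hi3b, ?_⟩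
      rw [← intervalIntegral.integral_add_adjacent_intervals hi3a hi3b,
        ← intervalIntegral.integral_add_adjacent_intervals hi2a hi2b]
      linarith
  refine ⟨hg0, C, hC0, ?_⟩
  intro T hT
  obtain ⟨hboxT, _, _, _, hineq⟩ := main ((S ∩ Set.Ioo 0 T).ncard) T hT rfl
  have h1 := hΨ0 (x T)
  have h2 := hΨC (x 0)
  linarith
end

section
/- Fix an integer n ≥ 2 and an integer K ≥ 2. Let (vm^(1), vM^(1)), …, (vm^(K), vM^(K)) be pairs of reals with vm^(k) < vM^(k) for each k, vm^(1) < ⋯ < vm^(K), and Δv^(1) > ⋯ > Δv^(K) where Δv^(k) = vM^(k) − vm^(k). Let (vm(t), vM(t)) be a piecewise-constant function of t ∈ [0,∞) taking values in {(vm^(k), vM^(k)) : 1 ≤ k ≤ K}, with finitely many switching times in each bounded interval, and let x : [0,∞) → ℝ be continuous, differentiable at every non-switching time, with x'(t) = −(1/(n(n−1)))·(x(t) − vm(t))/(vM(t) − vm(t)) there, and x(0) ∈ [vm^(1), vm^(K)]. Write Δv(t) = vM(t) − vm(t) and g = min_{1 ≤ k ≤ K−1} (Δv^(k) − Δv^(k+1))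 > 0. Then there exists a constant C ≥ 0, independent of T, such that for all T > 0: ∫_0^T Δv(t)·x'(t) dt ≤ −(g/2)·∫_0^T |x'(t)| dt + C. -/
open MeasureTheory


noncomputable def psiFun (K : ℕ) (vmk vMk : ℕ → ℝ) (g y : ℝ) : ℝ :=
  if h : ((Finset.range K).filter fun k => vmk k < y).Nonempty then
    (vMk (((Finset.range K).filter fun k => vmk k < y).max' h) -
      vmk (((Finset.range K).filter fun k => vmk k < y).max' h)) - g / 2
  else (vMk 0 - vmk 0) + g / 2

lemma chain_le (K : ℕ) (f : ℕ → ℝ) (h : ∀ k, k + 1 < K → f (k + 1) ≤ f k) :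
    ∀ i j, i ≤ j → j < K → f j ≤ f i := by
  intro i j hij hj
  induction j with
  | zero => simp_all
  | succ j ih =>
    rcases Nat.eq_or_lt_of_le hij with rfl | hlt
    · rfl
    · exact le_trans (h j hj) (ih (Nat.lt_succ_iff.1 hlt) (Nat.lt_of_succ_lt hj))

lemma chain_add (K : ℕ) (f : ℕ → ℝ) (c : ℝ) (hc : 0 ≤ c)
    (h : ∀ k, k + 1 < K → f (k + 1) + c ≤ f k) :
    ∀ i j, i < j → j < K → f j + c ≤ f i := by
  have hle : ∀ i j, i ≤ j → j < K → f j ≤ f i :=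
    chain_le K f (fun k hk => by have := h k hk; linarith)
  intro i j hij hj
  have h1 : f j ≤ f (i + 1) := hle (i + 1) j hij hj
  have h2 : f (i + 1) + c ≤ f i := h i (lt_of_le_of_lt hij hj)
  linarith

section psi
variable {K : ℕ} {vmk vMk : ℕ → ℝ} {g : ℝ}

lemma psiFun_le' (hDanti : ∀ i j, i ≤ j → j < K → vMk j - vmk j ≤ vMk i - vmk i)
    {k : ℕ} (hk : k < K) {y : ℝ} (hy : vmk k < y) :
    psiFun K vmk vMk g y ≤ (vMk k - vmk k) - g / 2 := by
  have hmem : k ∈ (Finset.range K).filter fun k => vmk k < y :=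
    Finset.mem_filter.2 ⟨Finset.mem_range.2 hk, hy⟩
  have hne : ((Finset.range K).filter fun k => vmk k < y).Nonempty := ⟨k, hmem⟩
  rw [psiFun, dif_pos hne]
  set j := ((Finset.range K).filter fun k => vmk k < y).max' hne with hj
  have hjmem := ((Finset.range K).filter fun k => vmk k < y).max'_mem hne
  have hjK : j < K := Finset.mem_range.1 (Finset.mem_filter.1 hjmem).1
  have hkj : k ≤ j := Finset.le_max' _ k hmem
  have := hDanti k j hkj hjK
  linarith

lemma le_psiFun' (hK : 0 < K)
    (hDanti : ∀ i j, i ≤ j → j < K → vMk j - vmk j ≤ vMk i - vmk i)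
    (hDgap : ∀ i j, i < j → j < K → (vMk j - vmk j) + g ≤ vMk i - vmk i)
    (hvmono : ∀ i j, i ≤ j → j < K → vmk i ≤ vmk j)
    {k : ℕ} (hk : k < K) {y : ℝ} (hy : y < vmk k) :
    (vMk k - vmk k) + g / 2 ≤ psiFun K vmk vMk g y := by
  rw [psiFun]
  split_ifs with hne
  · set j := ((Finset.range K).filter fun k => vmk k < y).max' hne with hj
    have hjmem := ((Finset.range K).filter fun k => vmk k < y).max'_mem hne
    have hjK : j < K := Finset.mem_range.1 (Finset.mem_filter.1 hjmem).1
    have hjy : vmk j < y := (Finset.mem_filter.1 hjmem).2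
    have hjk : j < k := by
      by_contra hcon
      push_neg at hcon
      have := hvmono k j hcon hjK
      linarith
    have := hDgap j k hjk hk
    linarith
  · have := hDanti 0 k (Nat.zero_le k) hk
    linarith

lemma abs_psiFun_le' (hK : 0 < K) (hg : 0 ≤ g)
    (hDanti : ∀ i j, i ≤ j → j < K → vMk j - vmk j ≤ vMk i - vmk i)
    (hDpos : ∀ k, k < K → 0 < vMk k - vmk k) (y : ℝ) :
    |psiFun K vmk vMk g y| ≤ (vMk 0 - vmk 0) + g / 2 := by
  have h0 := hDpos 0 hK
  rw [psiFun]
  split_ifs with hne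
  · set j := ((Finset.range K).filter fun k => vmk k < y).max' hne with hj
    have hjmem := ((Finset.range K).filter fun k => vmk k < y).max'_mem hne
    have hjK : j < K := Finset.mem_range.1 (Finset.mem_filter.1 hjmem).1
    have h1 := hDanti 0 j (Nat.zero_le j) hjK
    have h2 := hDpos j hjK
    rw [abs_le]
    constructor <;> linarith
  · rw [abs_le]
    constructor <;> linarith

lemma psiFun_antitone' (hK : 0 < K) (hg : 0 ≤ g)
    (hDanti : ∀ i j, i ≤ j → j < K → vMk j - vmk j ≤ vMk i - vmk i)
    (hDpos : ∀ k, k < K → 0 < vMk k - vmk k) :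
    Antitone (psiFun K vmk vMk g) := by
  intro a b hab
  have hsub : ((Finset.range K).filter fun k => vmk k < a) ⊆
      ((Finset.range K).filter fun k => vmk k < b) := by
    intro k hk
    rw [Finset.mem_filter] at hk ⊢
    exact ⟨hk.1, lt_of_lt_of_le hk.2 hab⟩
  rw [psiFun, psiFun]
  split_ifs with hb ha ha
  · set jb := ((Finset.range K).filter fun k => vmk k < b).max' hb with hjb
    set ja := ((Finset.range K).filter fun k => vmk k < a).max' ha with hja
    have hjbmem := ((Finset.range K).filter fun k => vmk k < b).max'_mem hb
    have hjbK : jb < K := Finset.mem_range.1 (Finset.mem_filter.1 hjbmem).1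
    have hjamem := ((Finset.range K).filter fun k => vmk k < a).max'_mem ha
    have hle : ja ≤ jb := Finset.le_max' _ ja (hsub hjamem)
    have := hDanti ja jb hle hjbK
    linarith
  · set jb := ((Finset.range K).filter fun k => vmk k < b).max' hb with hjb
    have hjbmem := ((Finset.range K).filter fun k => vmk k < b).max'_mem hb
    have hjbK : jb < K := Finset.mem_range.1 (Finset.mem_filter.1 hjbmem).1
    have h1 := hDanti 0 jb (Nat.zero_le jb) hjbK
    linarith
  · exact absurd (ha.mono hsub) hb
  · exact le_rfl
end psi

section psi
variable {K : ℕ} {vmk vMk : ℕ → ℝ} {g : ℝ}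

lemma psiFun_const_right (K : ℕ) (vmk vMk : ℕ → ℝ) (g θ : ℝ) :
    ∃ η > 0, ∀ y ∈ Set.Ioc θ (θ + η), ∀ z ∈ Set.Ioc θ (θ + η),
      psiFun K vmk vMk g y = psiFun K vmk vMk g z := by
  classical
  set F := (Finset.range K).filter fun k => θ < vmk k with hF
  by_cases hFne : F.Nonempty
  · set η := (F.inf' hFne (fun k => vmk k) - θ) / 2 with hη
    have hinf : θ < F.inf' hFne fun k => vmk k := by
      rw [Finset.lt_inf'_iff]
      exact fun k hk => (Finset.mem_filter.1 hk).2
    have hηpos : 0 < η := by rw [hη]; linarith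
    have key : ∀ y ∈ Set.Ioc θ (θ + η),
        ((Finset.range K).filter fun k => vmk k < y) =
          ((Finset.range K).filter fun k => vmk k ≤ θ) := by
      intro y hy
      apply Finset.filter_congr
      intro k hk
      constructor
      · intro h
        by_contra hcon
        push_neg at hcon
        have hmem : k ∈ F := Finset.mem_filter.2 ⟨hk, hcon⟩
        have := Finset.inf'_le (fun k => vmk k) hmem
        have := hy.2
        simp only [hη] at *
        linarith
      · intro h
        exact lt_of_le_of_lt h hy.1
    refine ⟨η, hηpos, fun y hy z hz => ?_⟩
    unfold psiFun
    rw [key y hy, key z hz]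
  · refine ⟨1, one_pos, fun y hy z hz => ?_⟩
    have hall : ∀ k ∈ Finset.range K, ¬ θ < vmk k := by
      intro k hk hcon
      exact hFne ⟨k, Finset.mem_filter.2 ⟨hk, hcon⟩⟩
    have key : ∀ w : ℝ, θ < w →
        ((Finset.range K).filter fun k => vmk k < w) = Finset.range K := by
      intro w hw
      apply Finset.filter_true_of_mem
      intro k hk
      have := hall k hk
      push_neg at this
      linarith
    unfold psiFun
    rw [key y hy.1, key z hz.1]

lemma psiFun_const_left (K : ℕ) (vmk vMk : ℕ → ℝ) (g θ : ℝ) :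
    ∃ η > 0, ∀ y ∈ Set.Ioc (θ - η) θ,
      psiFun K vmk vMk g y = psiFun K vmk vMk g θ := by
  classical
  set F := (Finset.range K).filter fun k => vmk k < θ with hF
  by_cases hFne : F.Nonempty
  · set η := (θ - F.sup' hFne (fun k => vmk k)) / 2 with hη
    have hsup : F.sup' hFne (fun k => vmk k) < θ := by
      rw [Finset.sup'_lt_iff]
      exact fun k hk => (Finset.mem_filter.1 hk).2
    have hηpos : 0 < η := by rw [hη]; linarith
    have key : ∀ y ∈ Set.Ioc (θ - η) θ,
        ((Finset.range K).filter fun k => vmk k < y) = F := by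
      intro y hy
      rw [hF]
      apply Finset.filter_congr
      intro k hk
      constructor
      · intro h
        exact lt_of_lt_of_le h hy.2
      · intro h
        have hmem : k ∈ F := Finset.mem_filter.2 ⟨hk, h⟩
        have := Finset.le_sup' (fun k => vmk k) hmem
        have := hy.1
        simp only [hη] at *
        linarith
    refine ⟨η, hηpos, fun y hy => ?_⟩
    have keyθ : ((Finset.range K).filter fun k => vmk k < θ) = F := hF.symm
    unfold psiFun
    rw [key y hy, keyθ]
  · refine ⟨1, one_pos, fun y hy => ?_⟩
    have key : ∀ w : ℝ, w ≤ θ →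
        ((Finset.range K).filter fun k => vmk k < w) = ∅ := by
      intro w hw
      rw [Finset.filter_eq_empty_iff]
      intro k hk hcon
      exact hFne ⟨k, Finset.mem_filter.2 ⟨hk, lt_of_lt_of_le hcon hw⟩⟩
    unfold psiFun
    rw [key y hy.2, key θ le_rfl]
end psi

lemma master_ftc (S : Set ℝ) (hSfin : ∀ T : ℝ, (S ∩ Set.Icc 0 T).Finite)
    (F d φ : ℝ → ℝ) (m : ℕ) :
    ∀ A B : ℝ, 0 ≤ A → A ≤ B → (S ∩ Set.Ioo A B).ncard ≤ m →
      ContinuousOn F (Set.Icc A B) → IntegrableOn φ (Set.Icc A B) →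
      (∀ t ∈ Set.Ioo A B, t ∉ S → HasDerivWithinAt F (d t) (Set.Ioi t) t ∧ φ t ≤ d t) →
      ∫ t in A..B, φ t ≤ F B - F A := by
  induction m with
  | zero =>
    intro A B hA hAB hcard hcont hint hder
    have hfin : (S ∩ Set.Ioo A B).Finite :=
      (hSfin B).subset fun u hu => ⟨hu.1, le_trans hA hu.2.1.le, hu.2.2.le⟩
    have hemp : S ∩ Set.Ioo A B = ∅ := by
      rw [← Set.ncard_eq_zero hfin]
      omega
    have hnotS : ∀ t ∈ Set.Ioo A B, t ∉ S := by
      intro t ht hts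
      have : t ∈ S ∩ Set.Ioo A B := ⟨hts, ht⟩
      rw [hemp] at this
      exact this
    exact intervalIntegral.integral_le_sub_of_hasDeriv_right_of_le hAB hcont
      (fun t ht => (hder t ht (hnotS t ht)).1) hint
      (fun t ht => (hder t ht (hnotS t ht)).2)
  | succ m ih =>
    intro A B hA hAB hcard hcont hint hder
    by_cases hemp : S ∩ Set.Ioo A B = ∅
    · exact ih A B hA hAB (by simp [hemp]) hcont hint hder
    · have hne : (S ∩ Set.Ioo A B).Nonempty := Set.nonempty_iff_ne_empty.2 hemp
      obtain ⟨s, hsS, hsIoo⟩ := hne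
      have hfin : (S ∩ Set.Ioo A B).Finite :=
        (hSfin B).subset fun u hu => ⟨hu.1, le_trans hA hu.2.1.le, hu.2.2.le⟩
      have hcard' : (S ∩ Set.Ioo A B).ncard - 1 ≤ m := by omega
      have hsmem : s ∈ S ∩ Set.Ioo A B := ⟨hsS, hsIoo⟩
      have hdiff : ((S ∩ Set.Ioo A B) \ {s}).ncard ≤ m := by
        rw [Set.ncard_diff_singleton_of_mem hsmem]
        omega
      have hc1 : (S ∩ Set.Ioo A s).ncard ≤ m := by
        refine le_trans (Set.ncard_le_ncard ?_ hfin.diff) hdiff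
        intro u hu
        exact ⟨⟨hu.1, hu.2.1, hu.2.2.trans hsIoo.2⟩, ne_of_lt hu.2.2⟩
      have hc2 : (S ∩ Set.Ioo s B).ncard ≤ m := by
        refine le_trans (Set.ncard_le_ncard ?_ hfin.diff) hdiff
        intro u hu
        exact ⟨⟨hu.1, hsIoo.1.trans hu.2.1, hu.2.2⟩, (ne_of_gt hu.2.1)⟩
      have hsub1 : Set.Icc A s ⊆ Set.Icc A B := Set.Icc_subset_Icc le_rfl hsIoo.2.le
      have hsub2 : Set.Icc s B ⊆ Set.Icc A B := Set.Icc_subset_Icc hsIoo.1.le le_rfl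
      have h1 := ih A s hA hsIoo.1.le hc1 (hcont.mono hsub1) (hint.mono_set hsub1)
        (fun t ht hts => hder t ⟨ht.1, ht.2.trans hsIoo.2⟩ hts)
      have h2 := ih s B (hA.trans hsIoo.1.le) hsIoo.2.le hc2 (hcont.mono hsub2)
        (hint.mono_set hsub2)
        (fun t ht hts => hder t ⟨hsIoo.1.trans ht.1, ht.2⟩ hts)
      have hii1 : IntervalIntegrable φ volume A s :=
        (intervalIntegrable_iff_integrableOn_Icc_of_le hsIoo.1.le).2 (hint.mono_set hsub1)
      have hii2 : IntervalIntegrable φ volume s B :=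
        (intervalIntegrable_iff_integrableOn_Icc_of_le hsIoo.2.le).2 (hint.mono_set hsub2)
      rw [← intervalIntegral.integral_add_adjacent_intervals hii1 hii2]
      linarith


set_option maxHeartbeats 1000000 in
/-- Finite-time upper bound behind revenue inequivalence when the interval width
`Δv^(k) = vM^(k) - vm^(k)` decreases with `k`: along the adaptive dynamics
`x' = -(1/(n(n-1))) (x - vm(t))/(vM(t) - vm(t))` in a piecewise-constant
`K`-state environment, with `g` the minimum gap of consecutive widths,
`∫_0^T Δv(t) x'(t) dt ≤ -(g/2) ∫_0^T |x'(t)| dt + C` for a constant `C`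
independent of `T` (and `g > 0`). -/
theorem revenue_gap_upper_bound (n K : ℕ) (hn : 2 ≤ n) (hK : 2 ≤ K)
    (vmk vMk : ℕ → ℝ)
    (hlt : ∀ k < K, vmk k < vMk k)
    (hmono : ∀ k, k + 1 < K → vmk k < vmk (k + 1))
    (hDmono : ∀ k, k + 1 < K → vMk (k + 1) - vmk (k + 1) < vMk k - vmk k)
    (vm vM : ℝ → ℝ)
    (hstate : ∀ t, 0 ≤ t → ∃ k < K, vm t = vmk k ∧ vM t = vMk k)
    (S : Set ℝ)
    (hSfin : ∀ T : ℝ, (S ∩ Set.Icc 0 T).Finite)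
    (hpc : ∀ t, 0 ≤ t → t ∉ S → ∀ᶠ s in nhds t, vm s = vm t ∧ vM s = vM t)
    (x xd : ℝ → ℝ)
    (hx : ContinuousOn x (Set.Ici 0))
    (hode : ∀ t, 0 ≤ t → t ∉ S → HasDerivAt x (xd t) t)
    (hform : ∀ t, 0 ≤ t → t ∉ S →
      xd t = -(1 / ((n : ℝ) * ((n : ℝ) - 1))) * ((x t - vm t) / (vM t - vm t)))
    (hx0 : x 0 ∈ Set.Icc (vmk 0) (vmk (K - 1)))
    (g : ℝ)
    (hg : IsLeast ((fun k => (vMk k - vmk k) - (vMk (k + 1) - vmk (k + 1))) ''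
      {k | k + 1 < K}) g) :
    0 < g ∧ ∃ C, 0 ≤ C ∧ ∀ T > (0 : ℝ),
      (∫ t in (0:ℝ)..T, (vM t - vm t) * xd t)
        ≤ -(g / 2) * (∫ t in (0:ℝ)..T, |xd t|) + C := by
  have hgpos : 0 < g := by
    obtain ⟨k, hk, hgk⟩ := hg.1
    have := hDmono k hk
    simp only at hgk
    linarith
  refine ⟨hgpos, ?_⟩
  -- basic constants and monotonicity facts
  have hKpos : 0 < K := by omega
  have hK1 : K - 1 < K := by omega
  have hDpos : ∀ k, k < K → 0 < vMk k - vmk k := fun k hk => sub_pos.2 (hlt k hk)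
  have hDanti : ∀ i j, i ≤ j → j < K → vMk j - vmk j ≤ vMk i - vmk i :=
    chain_le K (fun k => vMk k - vmk k) (fun k hk => (hDmono k hk).le)
  have hDgap : ∀ i j, i < j → j < K → (vMk j - vmk j) + g ≤ vMk i - vmk i :=
    chain_add K (fun k => vMk k - vmk k) g hgpos.le
      (fun k hk => by
        have h := hg.2 ⟨k, hk, rfl⟩
        simp only at h
        show vMk (k + 1) - vmk (k + 1) + g ≤ vMk k - vmk k
        linarith)
  have hvmono : ∀ i j, i ≤ j → j < K → vmk i ≤ vmk j := by
    have hcl := chain_le K (fun k => -vmk k) (fun k hk => by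
      have := hmono k hk
      show -vmk (k + 1) ≤ -vmk k
      linarith)
    intro i j hij hj
    have h2 : -vmk j ≤ -vmk i := hcl i j hij hj
    linarith
  have hn2 : (2:ℝ) ≤ (n:ℝ) := by exact_mod_cast hn
  have hcpos : 0 < 1 / ((n : ℝ) * ((n : ℝ) - 1)) := by
    apply div_pos one_pos
    nlinarith
  -- invariance: x stays in [vmk 0, vmk (K-1)]
  have hvm_range : ∀ t : ℝ, 0 ≤ t → vmk 0 ≤ vm t ∧ vm t ≤ vmk (K - 1) := by
    intro t ht
    obtain ⟨k, hkK, hvmt, _⟩ := hstate t ht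
    rw [hvmt]
    exact ⟨hvmono 0 k (Nat.zero_le k) hkK, hvmono k (K - 1) (by omega) hK1⟩
  have hM : ∀ t : ℝ, 0 ≤ t → x t ≤ vmk (K - 1) := by
    intro t₀ ht₀
    by_contra hgt
    push_neg at hgt
    set A := Set.Icc 0 t₀ ∩ x ⁻¹' Set.Iic (vmk (K - 1)) with hA
    have hxc : ContinuousOn x (Set.Icc 0 t₀) := hx.mono (fun u hu => hu.1)
    have hAclosed : IsClosed A := hxc.preimage_isClosed_of_isClosed isClosed_Icc isClosed_Iic
    have hA0 : (0:ℝ) ∈ A := ⟨⟨le_rfl, ht₀⟩, hx0.2⟩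
    have hAbdd : BddAbove A := ⟨t₀, fun u hu => hu.1.2⟩
    set s := sSup A with hs
    have hsA : s ∈ A := hAclosed.csSup_mem ⟨0, hA0⟩ hAbdd
    have hs0 : 0 ≤ s := hsA.1.1
    have hst : s ≤ t₀ := hsA.1.2
    have hxble : ∀ u, s < u → u ≤ t₀ → vmk (K - 1) < x u := by
      intro u hsu hut
      by_contra hcon
      push_neg at hcon
      have : u ∈ A := ⟨⟨hs0.trans hsu.le, hut⟩, hcon⟩
      exact absurd (le_csSup hAbdd this) (not_le.2 hsu)
    have key := master_ftc S hSfin (fun t => -x t) (fun t => -xd t) (fun _ => 0)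
        ((S ∩ Set.Ioo s t₀).ncard) s t₀ hs0 hst le_rfl
        ((hxc.mono (Set.Icc_subset_Icc hs0 le_rfl)).neg)
        (integrableOn_zero)
        (by
          intro u hu huS
          have hu0 : 0 < u := lt_of_le_of_lt hs0 hu.1
          obtain ⟨k, hkK, hvmu, hvMu⟩ := hstate u hu0.le
          have hDu : 0 < vM u - vm u := by rw [hvmu, hvMu]; exact hDpos k hkK
          have hxu := hxble u hu.1 hu.2.le
          have hvmle : vm u ≤ vmk (K - 1) := (hvm_range u hu0.le).2
          have hq : 0 ≤ (x u - vm u) / (vM u - vm u) := div_nonneg (by linarith) hDu.le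
          have hxd : xd u ≤ 0 := by
            rw [hform u hu0.le huS]
            nlinarith [mul_nonneg hcpos.le hq]
          exact ⟨((hode u hu0.le huS).neg).hasDerivWithinAt, by simpa using hxd⟩)
    simp at key
    have hsle : x s ≤ vmk (K - 1) := hsA.2
    linarith
  have hm : ∀ t : ℝ, 0 ≤ t → vmk 0 ≤ x t := by
    intro t₀ ht₀
    by_contra hgt
    push_neg at hgt
    set A := Set.Icc 0 t₀ ∩ x ⁻¹' Set.Ici (vmk 0) with hA
    have hxc : ContinuousOn x (Set.Icc 0 t₀) := hx.mono (fun u hu => hu.1)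
    have hAclosed : IsClosed A := hxc.preimage_isClosed_of_isClosed isClosed_Icc isClosed_Ici
    have hA0 : (0:ℝ) ∈ A := ⟨⟨le_rfl, ht₀⟩, hx0.1⟩
    have hAbdd : BddAbove A := ⟨t₀, fun u hu => hu.1.2⟩
    set s := sSup A with hs
    have hsA : s ∈ A := hAclosed.csSup_mem ⟨0, hA0⟩ hAbdd
    have hs0 : 0 ≤ s := hsA.1.1
    have hst : s ≤ t₀ := hsA.1.2
    have hxble : ∀ u, s < u → u ≤ t₀ → x u < vmk 0 := by
      intro u hsu hut
      by_contra hcon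
      push_neg at hcon
      have : u ∈ A := ⟨⟨hs0.trans hsu.le, hut⟩, hcon⟩
      exact absurd (le_csSup hAbdd this) (not_le.2 hsu)
    have key := master_ftc S hSfin x xd (fun _ => 0)
        ((S ∩ Set.Ioo s t₀).ncard) s t₀ hs0 hst le_rfl
        (hxc.mono (Set.Icc_subset_Icc hs0 le_rfl))
        (integrableOn_zero)
        (by
          intro u hu huS
          have hu0 : 0 < u := lt_of_le_of_lt hs0 hu.1
          obtain ⟨k, hkK, hvmu, hvMu⟩ := hstate u hu0.le
          have hDu : 0 < vM u - vm u := by rw [hvmu, hvMu]; exact hDpos k hkK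
          have hxu := hxble u hu.1 hu.2.le
          have hvmge : vmk 0 ≤ vm u := (hvm_range u hu0.le).1
          have hq : (x u - vm u) / (vM u - vm u) ≤ 0 :=
            div_nonpos_of_nonpos_of_nonneg (by linarith) hDu.le
          have hxd : 0 ≤ xd u := by
            rw [hform u hu0.le huS]
            nlinarith [mul_nonpos_of_nonneg_of_nonpos hcpos.le hq]
          exact ⟨(hode u hu0.le huS).hasDerivWithinAt, by simpa using hxd⟩)
    simp at key
    have hsge : vmk 0 ≤ x s := hsA.2
    linarith
  -- the potential Φ
  set L : ℝ := (vMk 0 - vmk 0) + g / 2 with hLdef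
  have hLpos : 0 < L := by have := hDpos 0 hKpos; rw [hLdef]; linarith
  set ψ : ℝ → ℝ := psiFun K vmk vMk g with hψdef
  have hψanti : Antitone ψ := psiFun_antitone' hKpos hgpos.le hDanti hDpos
  have hψint : ∀ a b : ℝ, IntervalIntegrable ψ volume a b := fun a b =>
    hψanti.intervalIntegrable
  have hψbd : ∀ y : ℝ, |ψ y| ≤ L := abs_psiFun_le' hKpos hgpos.le hDanti hDpos
  set Φ : ℝ → ℝ := fun y => ∫ u in (0:ℝ)..y, ψ u with hΦdef
  have hΦsub : ∀ a b : ℝ, Φ b - Φ a = ∫ u in a..b, ψ u := fun a b =>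
    intervalIntegral.integral_interval_sub_left (hψint 0 b) (hψint 0 a)
  have hΦlip : ∀ a b : ℝ, |Φ b - Φ a| ≤ L * |b - a| := by
    intro a b
    rw [hΦsub a b]
    have h := intervalIntegral.norm_integral_le_of_norm_le_const
      (C := L) (f := ψ) (a := a) (b := b) (fun u _ => hψbd u)
    simpa [Real.norm_eq_abs] using h
  have hΦcont : Continuous Φ := by
    have hlw : LipschitzWith (Real.toNNReal L) Φ := by
      apply LipschitzWith.of_dist_le_mul
      intro a b
      rw [Real.dist_eq, Real.dist_eq, Real.coe_toNNReal _ hLpos.le]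
      exact hΦlip b a
    exact hlw.continuous
  have hΦright : ∀ θ c₀ η : ℝ, 0 < η → (∀ w ∈ Set.Ioc θ (θ + η), ψ w = c₀) →
      ∀ y ∈ Set.Ioc θ (θ + η), Φ y = Φ θ + c₀ * (y - θ) := by
    intro θ c₀ η hη hconst y hy
    have h1 : Φ y - Φ θ = ∫ u in θ..y, ψ u := hΦsub θ y
    have h2 : ∫ u in θ..y, ψ u = c₀ * (y - θ) := by
      rw [intervalIntegral.integral_of_le hy.1.le]
      rw [setIntegral_congr_fun measurableSet_Ioc
        (g := fun _ => c₀) (fun w hw => hconst w ⟨hw.1, hw.2.trans hy.2⟩)]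
      rw [setIntegral_const, Real.volume_real_Ioc_of_le hy.1.le, smul_eq_mul]
      ring
    linarith
  have hΦleft : ∀ θ η : ℝ, 0 < η → (∀ w ∈ Set.Ioc (θ - η) θ, ψ w = ψ θ) →
      ∀ y ∈ Set.Icc (θ - η) θ, Φ y = Φ θ + ψ θ * (y - θ) := by
    intro θ η hη hconst y hy
    have h1 : Φ θ - Φ y = ∫ u in y..θ, ψ u := hΦsub y θ
    have h2 : ∫ u in y..θ, ψ u = ψ θ * (θ - y) := by
      rw [intervalIntegral.integral_of_le hy.2]
      rw [setIntegral_congr_fun measurableSet_Ioc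
        (g := fun _ => ψ θ) (fun w hw => hconst w ⟨lt_of_le_of_lt hy.1 hw.1, hw.2⟩)]
      rw [setIntegral_const, Real.volume_real_Ioc_of_le hy.2, smul_eq_mul]
      ring
    linarith
  set G : ℝ → ℝ := fun u => Φ (x u) with hGdef
  -- pointwise right-derivative bound
  have hd : ∀ t : ℝ, ∃ dv : ℝ, 0 < t → t ∉ S →
      HasDerivWithinAt G dv (Set.Ioi t) t ∧
        (vM t - vm t) * xd t + g / 2 * |xd t| ≤ dv := by
    intro t
    by_cases hts : 0 < t ∧ t ∉ S
    swap
    · exact ⟨0, fun h1 h2 => absurd ⟨h1, h2⟩ hts⟩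
    obtain ⟨ht0, htS⟩ := hts
    obtain ⟨k, hkK, hvmt, hvMt⟩ := hstate t ht0.le
    have hDt : 0 < vM t - vm t := by rw [hvmt, hvMt]; exact hDpos k hkK
    have hdx : HasDerivAt x (xd t) t := hode t ht0.le htS
    have hxdform := hform t ht0.le htS
    rcases lt_trichotomy (xd t) 0 with hneg | hzero | hpos
    · -- xd t < 0 : x t > vmk k
      have hxgt : vm t < x t := by
        by_contra hcon
        push_neg at hcon
        have hq : (x t - vm t) / (vM t - vm t) ≤ 0 :=
          div_nonpos_of_nonpos_of_nonneg (by linarith) hDt.le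
        have : 0 ≤ xd t := by
          rw [hxdform]; nlinarith [mul_nonpos_of_nonneg_of_nonpos hcpos.le hq]
        linarith
      obtain ⟨η, hη, hconst⟩ := psiFun_const_left K vmk vMk g (x t)
      have haff := hΦleft (x t) η hη hconst
      refine ⟨ψ (x t) * xd t, fun _ _ => ⟨?_, ?_⟩⟩
      · -- derivative
        have hf : HasDerivAt (fun s' => Φ (x t) + ψ (x t) * (x s' - x t))
            (ψ (x t) * xd t) t := ((hdx.sub_const (x t)).const_mul (ψ (x t))).const_add (Φ (x t))
        apply hf.hasDerivWithinAt.congr_of_eventuallyEq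
        · -- eventual equality on the right
          have hslopet : Filter.Tendsto (slope x t) (nhdsWithin t {t}ᶜ) (nhds (xd t)) :=
            hasDerivAt_iff_tendsto_slope.1 hdx
          have hevs : ∀ᶠ s' in nhdsWithin t {t}ᶜ, slope x t s' < 0 :=
            hslopet.eventually (gt_mem_nhds hneg)
          have hmono' : nhdsWithin t (Set.Ioi t) ≤ nhdsWithin t {t}ᶜ :=
            nhdsWithin_mono t (fun s' hs' => ne_of_gt hs')
          have E1 : ∀ᶠ s' in nhdsWithin t (Set.Ioi t), x s' < x t := by
            filter_upwards [hevs.filter_mono hmono', self_mem_nhdsWithin] with s' h1 h2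
            have hst' : (0:ℝ) < s' - t := sub_pos.2 h2
            have hsl : slope x t s' * (s' - t) = x s' - x t := by
              rw [slope_def_field]; field_simp
            nlinarith [mul_neg_of_neg_of_pos h1 hst']
          have E2 : ∀ᶠ s' in nhdsWithin t (Set.Ioi t), x t - η < x s' := by
            have := (hdx.continuousAt.eventually (p := fun y => x t - η < y)
              ((lt_mem_nhds (show x t - η < x t by linarith)).mono (fun y hy => hy)))
            exact this.filter_mono nhdsWithin_le_nhds
          simp only [hGdef]
          filter_upwards [E1, E2] with s' h1 h2
          exact haff (x s') ⟨h2.le, h1.le⟩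
        · simp [hGdef]
      · -- the bound
        have hψle : ψ (x t) ≤ (vMk k - vmk k) - g / 2 :=
          psiFun_le' hDanti hkK (by rw [← hvmt]; exact hxgt)
        rw [hvmt, hvMt, abs_of_neg hneg]
        nlinarith [mul_le_mul_of_nonpos_right hψle hneg.le]
    · -- xd t = 0
      refine ⟨0, fun _ _ => ⟨?_, by simp [hzero]⟩⟩
      have hlittle : (fun s' => x s' - x t) =o[nhds t] (fun s' => s' - t) := by
        have h1 := hasDerivAt_iff_isLittleO.1 hdx
        rw [hzero] at h1
        simpa using h1
      have hb : ∀ a b : ℝ, ‖Φ b - Φ a‖ ≤ L * ‖b - a‖ := fun a b => by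
        rw [Real.norm_eq_abs, Real.norm_eq_abs]; exact hΦlip a b
      have hbig : (fun s' => G s' - G t) =O[nhds t] (fun s' => x s' - x t) := by
        apply Asymptotics.IsBigO.of_bound L
        filter_upwards with s'
        exact hb (x t) (x s')
      have : HasDerivAt G 0 t := by
        rw [hasDerivAt_iff_isLittleO]
        simpa using hbig.trans_isLittleO hlittle
      exact this.hasDerivWithinAt
    · -- xd t > 0 : x t < vmk k
      have hxlt : x t < vm t := by
        by_contra hcon
        push_neg at hcon
        have hq : 0 ≤ (x t - vm t) / (vM t - vm t) := div_nonneg (by linarith) hDt.le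
        have : xd t ≤ 0 := by
          rw [hxdform]; nlinarith [mul_nonneg hcpos.le hq]
        linarith
      have hxltk : x t < vmk k := by rw [← hvmt]; exact hxlt
      obtain ⟨η, hη, hconst⟩ := psiFun_const_right K vmk vMk g (x t)
      set η2 : ℝ := min η (vmk k - x t) with hη2def
      have hη2 : 0 < η2 := lt_min hη (by linarith)
      have hη2η : η2 ≤ η := min_le_left _ _
      have hη2k : η2 ≤ vmk k - x t := min_le_right _ _
      set c₀ : ℝ := ψ (x t + η2 / 2) with hc₀def
      have hc0mem : x t + η2 / 2 ∈ Set.Ioc (x t) (x t + η) :=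
        ⟨by linarith, by linarith⟩
      have hconst2 : ∀ w ∈ Set.Ioc (x t) (x t + η2), ψ w = c₀ := by
        intro w hw
        exact hconst w ⟨hw.1, le_trans hw.2 (by linarith)⟩ _ hc0mem
      have haff := hΦright (x t) c₀ η2 hη2 hconst2
      refine ⟨c₀ * xd t, fun _ _ => ⟨?_, ?_⟩⟩
      · have hf : HasDerivAt (fun s' => Φ (x t) + c₀ * (x s' - x t))
            (c₀ * xd t) t := ((hdx.sub_const (x t)).const_mul c₀).const_add (Φ (x t))
        apply hf.hasDerivWithinAt.congr_of_eventuallyEq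
        · have hslopet : Filter.Tendsto (slope x t) (nhdsWithin t {t}ᶜ) (nhds (xd t)) :=
            hasDerivAt_iff_tendsto_slope.1 hdx
          have hevs : ∀ᶠ s' in nhdsWithin t {t}ᶜ, 0 < slope x t s' :=
            hslopet.eventually (lt_mem_nhds hpos)
          have hmono' : nhdsWithin t (Set.Ioi t) ≤ nhdsWithin t {t}ᶜ :=
            nhdsWithin_mono t (fun s' hs' => ne_of_gt hs')
          have E1 : ∀ᶠ s' in nhdsWithin t (Set.Ioi t), x t < x s' := by
            filter_upwards [hevs.filter_mono hmono', self_mem_nhdsWithin] with s' h1 h2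
            have hst' : (0:ℝ) < s' - t := sub_pos.2 h2
            have hsl : slope x t s' * (s' - t) = x s' - x t := by
              rw [slope_def_field]; field_simp
            nlinarith [mul_pos h1 hst']
          have E2 : ∀ᶠ s' in nhdsWithin t (Set.Ioi t), x s' < x t + η2 := by
            have := (hdx.continuousAt.eventually (p := fun y => y < x t + η2)
              ((gt_mem_nhds (show x t < x t + η2 by linarith)).mono (fun y hy => hy)))
            exact this.filter_mono nhdsWithin_le_nhds
          simp only [hGdef]
          filter_upwards [E1, E2] with s' h1 h2
          exact haff (x s') ⟨h1, h2.le⟩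
        · simp [hGdef]
      · have hc0ge : (vMk k - vmk k) + g / 2 ≤ c₀ :=
          le_psiFun' hKpos hDanti hDgap hvmono hkK (by linarith)
        rw [hvmt, hvMt, abs_of_pos hpos]
        nlinarith [mul_le_mul_of_nonneg_right hc0ge hpos.le]
  choose dfun hdfun using hd
  -- the constant
  refine ⟨L * (vmk (K - 1) - vmk 0), ?_, ?_⟩
  · have : vmk 0 ≤ vmk (K - 1) := hvmono 0 (K - 1) (Nat.zero_le _) hK1
    nlinarith
  intro T hT
  -- integrability on [0, T]
  set ASet : Set ℝ := Set.Icc 0 T \ S with hASet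
  have hAeq : ASet = Set.Icc 0 T \ (S ∩ Set.Icc 0 T) := by
    rw [hASet]; ext u; simp
  have hAmeas : MeasurableSet ASet := by
    rw [hAeq]
    exact measurableSet_Icc.diff (hSfin T).measurableSet
  have hAfin : volume ASet < ⊤ :=
    lt_of_le_of_lt (measure_mono Set.diff_subset) measure_Icc_lt_top
  have hAae : Set.Icc (0:ℝ) T =ᵐ[volume] ASet := by
    rw [MeasureTheory.ae_eq_set]
    constructor
    · refine measure_mono_null ?_ ((hSfin T).measure_zero _)
      intro u hu
      have h1 : u ∈ Set.Icc (0:ℝ) T := hu.1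
      have h2 : u ∉ ASet := hu.2
      rw [hASet, Set.mem_diff, not_and, not_not] at h2
      exact ⟨h2 h1, h1⟩
    · have hempty : ASet \ Set.Icc 0 T = ∅ :=
        Set.diff_eq_empty.mpr (by rw [hASet]; exact Set.diff_subset)
      simp [hempty]
  have hrestrict : volume.restrict (Set.Icc (0:ℝ) T) = volume.restrict ASet :=
    Measure.restrict_congr_set hAae
  -- continuity on ASet
  have hvmcont : ContinuousOn vm ASet := by
    intro u hu
    have h0u : (0:ℝ) ≤ u := hu.1.1
    have := hpc u h0u hu.2
    have hca : ContinuousAt vm u :=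
      Filter.EventuallyEq.continuousAt (by filter_upwards [this] with s hs using hs.1)
    exact hca.continuousWithinAt
  have hvMcont : ContinuousOn vM ASet := by
    intro u hu
    have h0u : (0:ℝ) ≤ u := hu.1.1
    have := hpc u h0u hu.2
    have hca : ContinuousAt vM u :=
      Filter.EventuallyEq.continuousAt (by filter_upwards [this] with s hs using hs.2)
    exact hca.continuousWithinAt
  have hxcont : ContinuousOn x ASet := hx.mono (fun u hu => hu.1.1)
  have hDne : ∀ u ∈ ASet, vM u - vm u ≠ 0 := by
    intro u hu
    obtain ⟨k, hkK, hvmu, hvMu⟩ := hstate u hu.1.1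
    rw [hvmu, hvMu]
    exact (hDpos k hkK).ne'
  have hxdcont : ContinuousOn xd ASet := by
    have hfcont : ContinuousOn
        (fun u => -(1 / ((n : ℝ) * ((n : ℝ) - 1))) * ((x u - vm u) / (vM u - vm u))) ASet :=
      continuousOn_const.mul ((hxcont.sub hvmcont).div ((hvMcont.sub hvmcont)) hDne)
    exact hfcont.congr (fun u hu => hform u hu.1.1 hu.2)
  -- bounds
  set Bv : ℝ := ∑ k ∈ Finset.range K, (|vmk k| + |vMk k|) with hBvdef
  have hBv : ∀ k, k < K → |vmk k| ≤ Bv ∧ |vMk k| ≤ Bv := by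
    intro k hk
    have hmem : k ∈ Finset.range K := Finset.mem_range.2 hk
    have hs : |vmk k| + |vMk k| ≤ Bv := by
      rw [hBvdef]
      exact Finset.single_le_sum (f := fun k => |vmk k| + |vMk k|)
        (fun i _ => by positivity) hmem
    constructor
    · have := abs_nonneg (vMk k); linarith
    · have := abs_nonneg (vmk k); linarith
  obtain ⟨Bx, hBx⟩ := (isCompact_Icc (a := (0:ℝ)) (b := T)).exists_bound_of_continuousOn
    (hx.mono (fun u hu => hu.1))
  set δ : ℝ := vMk (K - 1) - vmk (K - 1) with hδdef
  have hδpos : 0 < δ := hDpos (K - 1) hK1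
  have hδle : ∀ k, k < K → δ ≤ vMk k - vmk k := fun k hk =>
    hDanti k (K - 1) (by omega) hK1
  set Bd : ℝ := (1 / ((n : ℝ) * ((n : ℝ) - 1))) * ((Bx + Bv) / δ) with hBddef
  have hBxnn : 0 ≤ Bx := le_trans (norm_nonneg _) (hBx 0 ⟨le_rfl, hT.le⟩)
  have hBvnn : 0 ≤ Bv := le_trans (abs_nonneg _) (hBv 0 hKpos).1
  have habs_sub : ∀ a b : ℝ, |a - b| ≤ |a| + |b| := fun a b => by
    rw [sub_eq_add_neg]
    exact (abs_add_le _ _).trans (le_of_eq (by rw [abs_neg]))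
  have hBd : ∀ u ∈ ASet, |xd u| ≤ Bd := by
    intro u hu
    obtain ⟨k, hkK, hvmu, hvMu⟩ := hstate u hu.1.1
    have hDu : 0 < vM u - vm u := by rw [hvmu, hvMu]; exact hDpos k hkK
    have hDuδ : δ ≤ vM u - vm u := by rw [hvmu, hvMu]; exact hδle k hkK
    have hxb : |x u| ≤ Bx := by
      have := hBx u hu.1
      rwa [Real.norm_eq_abs] at this
    have hvmb : |vm u| ≤ Bv := by rw [hvmu]; exact (hBv k hkK).1
    have hnum : |x u - vm u| ≤ Bx + Bv := by
      calc |x u - vm u| ≤ |x u| + |vm u| := habs_sub _ _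
        _ ≤ Bx + Bv := add_le_add hxb hvmb
    rw [hform u hu.1.1 hu.2, hBddef]
    have h1 : |(1:ℝ) / ((n : ℝ) * ((n : ℝ) - 1))| = 1 / ((n : ℝ) * ((n : ℝ) - 1)) :=
      abs_of_pos hcpos
    rw [abs_mul, abs_neg, h1, abs_div, abs_of_pos hDu]
    exact mul_le_mul_of_nonneg_left
      (div_le_div₀ (by linarith) hnum hδpos hDuδ) hcpos.le
  -- integrable on Icc 0 T
  have hIObase : ∀ (f : ℝ → ℝ) (Cb : ℝ), ContinuousOn f ASet → (∀ u ∈ ASet, |f u| ≤ Cb) →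
      IntegrableOn f (Set.Icc 0 T) := by
    intro f Cb hfc hfb
    rw [IntegrableOn, hrestrict]
    refine ⟨hfc.aestronglyMeasurable hAmeas, ?_⟩
    apply HasFiniteIntegral.restrict_of_bounded (C := Cb) hAfin
    filter_upwards [ae_restrict_mem hAmeas] with u hu
    simpa [Real.norm_eq_abs] using hfb u hu
  have hBdnn : 0 ≤ Bd := by
    rw [hBddef]
    exact mul_nonneg hcpos.le (div_nonneg (by linarith) hδpos.le)
  have hint1 : IntegrableOn (fun t => (vM t - vm t) * xd t) (Set.Icc 0 T) := by
    apply hIObase _ ((Bv + Bv) * Bd) ((hvMcont.sub hvmcont).mul hxdcont)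
    intro u hu
    obtain ⟨k, hkK, hvmu, hvMu⟩ := hstate u hu.1.1
    have hvMb : |vM u| ≤ Bv := by rw [hvMu]; exact (hBv k hkK).2
    have hvmb : |vm u| ≤ Bv := by rw [hvmu]; exact (hBv k hkK).1
    rw [Pi.mul_apply, Pi.sub_apply, abs_mul]
    have h2 : |vM u - vm u| ≤ Bv + Bv := by
      calc |vM u - vm u| ≤ |vM u| + |vm u| := habs_sub _ _
        _ ≤ Bv + Bv := add_le_add hvMb hvmb
    have h3 := hBd u hu
    exact mul_le_mul h2 h3 (abs_nonneg _) (by linarith)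
  have hint2 : IntegrableOn (fun t => |xd t|) (Set.Icc 0 T) := by
    apply hIObase _ Bd hxdcont.abs
    intro u hu
    rw [abs_abs]
    exact hBd u hu
  have hintφ : IntegrableOn (fun t => (vM t - vm t) * xd t + g / 2 * |xd t|)
      (Set.Icc 0 T) := hint1.add (hint2.const_mul (g / 2))
  -- apply the master lemma
  have hGcont : ContinuousOn G (Set.Icc 0 T) :=
    hΦcont.comp_continuousOn (hx.mono (fun u hu => hu.1))
  have hmain : (∫ t in (0:ℝ)..T, ((vM t - vm t) * xd t + g / 2 * |xd t|)) ≤ G T - G 0 :=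
    master_ftc S hSfin G dfun
      (fun t => (vM t - vm t) * xd t + g / 2 * |xd t|)
      ((S ∩ Set.Ioo 0 T).ncard) 0 T le_rfl hT.le le_rfl hGcont hintφ
      (fun t ht hts => hdfun t ht.1 hts)
  -- bound G T - G 0
  have hxT : x T ∈ Set.Icc (vmk 0) (vmk (K - 1)) := ⟨hm T hT.le, hM T hT.le⟩
  have hx0' : x 0 ∈ Set.Icc (vmk 0) (vmk (K - 1)) := ⟨hm 0 le_rfl, hM 0 le_rfl⟩
  have hGTb : G T - G 0 ≤ L * (vmk (K - 1) - vmk 0) := by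
    have h1 := hΦlip (x 0) (x T)
    have h2 : |x T - x 0| ≤ vmk (K - 1) - vmk 0 := by
      rw [abs_le]
      constructor
      · have := hxT.1; have := hx0'.2; linarith
      · have := hxT.2; have := hx0'.1; linarith
    have h3 : G T - G 0 ≤ |Φ (x T) - Φ (x 0)| := le_abs_self _
    calc G T - G 0 ≤ |Φ (x T) - Φ (x 0)| := h3
      _ ≤ L * |x T - x 0| := h1
      _ ≤ L * (vmk (K - 1) - vmk 0) := by
          exact mul_le_mul_of_nonneg_left h2 hLpos.le
  -- split the integral
  have hii1 : IntervalIntegrable (fun t => (vM t - vm t) * xd t) volume 0 T :=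
    (intervalIntegrable_iff_integrableOn_Icc_of_le hT.le).2 hint1
  have hii2 : IntervalIntegrable (fun t => |xd t|) volume 0 T :=
    (intervalIntegrable_iff_integrableOn_Icc_of_le hT.le).2 hint2
  have hsplit : (∫ t in (0:ℝ)..T, ((vM t - vm t) * xd t + g / 2 * |xd t|))
      = (∫ t in (0:ℝ)..T, (vM t - vm t) * xd t) + g / 2 * (∫ t in (0:ℝ)..T, |xd t|) := by
    rw [intervalIntegral.integral_add hii1 (hii2.const_mul (g / 2)),
      intervalIntegral.integral_const_mul]
  rw [hsplit] at hmain
  have h4 : (∫ t in (0:ℝ)..T, (vM t - vm t) * xd t)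
      ≤ L * (vmk (K - 1) - vmk 0) - g / 2 * (∫ t in (0:ℝ)..T, |xd t|) :=
    le_sub_iff_add_le.2 (hmain.trans hGTb)
  have heq : -(g / 2) * (∫ t in (0:ℝ)..T, |xd t|) + L * (vmk (K - 1) - vmk 0)
      = L * (vmk (K - 1) - vmk 0) - g / 2 * (∫ t in (0:ℝ)..T, |xd t|) := by
    ring
  rw [heq]
  exact h4
end

section
/- Fix an integer n ≥ 2 and an integer K ≥ 2. Let (vm^(1), vM^(1)), …, (vm^(K), vM^(K)) be pairs of reals with vm^(k) < vM^(k) for each k, vm^(1) < ⋯ < vm^(K), and Δv^(1) < ⋯ < Δv^(K) where Δv^(k) = vM^(k) − vm^(k). Let (vm(t), vM(t)) be a piecewise-constant function of t ∈ [0,∞) taking values in {(vm^(k), vM^(k)) : 1 ≤ k ≤ K}, with finitely many switching times in each bounded interval, and let x : [0,∞) → ℝ be continuous, differentiable at every non-switching time, with x'(t) = −(1/(n(n−1)))·(x(t) − vm(t))/(vM(t) − vm(t)) there, and x(0) ∈ [vm^(1), vm^(K)]. Write Δv(t) = vM(t) − vm(t), and suppose the time-average path length satisfies liminf_{T→∞}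 (1/T)·∫_0^T |x'(t)| dt = L > 0. Then liminf_{T→∞} (1/T)·∫_0^T Δv(t)·x'(t) dt ≥ (L/2)·min_{1 ≤ k ≤ K−1} (Δv^(k+1) − Δv^(k)) > 0; consequently liminf_{T→∞} (1/T)·∫_0^T ((n−1)/n)·Δv(t)·x'(t) dt > 0, i.e., the time-averaged expected payoff of each bidder in the first-price auction strictly exceeds that in the second-price auction. -/
open MeasureTheory Filter Set Topology

namespace RevIneq

lemma mono_of_succ (f : ℕ → ℝ) (K : ℕ) (h : ∀ k, k + 1 < K → f k ≤ f (k + 1)) :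
    ∀ i j, i ≤ j → j < K → f i ≤ f j := by
  intro i j hij hjK
  induction j with
  | zero => simp [Nat.le_zero.1 hij]
  | succ m ih =>
    rcases Nat.eq_or_lt_of_le hij with rfl | hlt
    · exact le_rfl
    · exact (ih (Nat.lt_succ_iff.1 hlt) (Nat.lt_of_succ_lt hjK)).trans
        (h m (by omega))

lemma antitoneOn_no_exc (f f' : ℝ → ℝ) (a b : ℝ)
    (hcont : ContinuousOn f (Set.Icc a b))
    (hder : ∀ t ∈ Set.Ioo a b, HasDerivAt f (f' t) t)
    (hneg : ∀ t ∈ Set.Ioo a b, f' t ≤ 0) : AntitoneOn f (Set.Icc a b) := by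
  apply antitoneOn_of_deriv_nonpos (convex_Icc a b) hcont
  · intro t ht
    rw [interior_Icc] at ht
    exact (hder t ht).differentiableAt.differentiableWithinAt
  · intro t ht
    rw [interior_Icc] at ht
    rw [(hder t ht).deriv]
    exact hneg t ht

lemma antitoneOn_finite_exc (f f' : ℝ → ℝ) (S : Set ℝ) :
    ∀ (N : ℕ) (a b : ℝ) (hfin : (S ∩ Set.Ioo a b).Finite), hfin.toFinset.card ≤ N →
    ContinuousOn f (Set.Icc a b) →
    (∀ t ∈ Set.Ioo a b, t ∉ S → HasDerivAt f (f' t) t) →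
    (∀ t ∈ Set.Ioo a b, t ∉ S → f' t ≤ 0) →
    AntitoneOn f (Set.Icc a b) := by
  intro N
  induction N with
  | zero =>
    intro a b hfin hcard hcont hder hneg
    have hempty : S ∩ Set.Ioo a b = ∅ := by
      have := Finset.card_eq_zero.1 (Nat.le_zero.1 hcard)
      rw [← hfin.toFinset_eq_empty]; exact this
    refine antitoneOn_no_exc f f' a b hcont (fun t ht => ?_) (fun t ht => ?_)
    · exact hder t ht (fun hS => absurd (Set.mem_inter hS ht) (by simp [hempty]))
    · exact hneg t ht (fun hS => absurd (Set.mem_inter hS ht) (by simp [hempty]))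
  | succ N ih =>
    intro a b hfin hcard hcont hder hneg
    rcases Set.eq_empty_or_nonempty (S ∩ Set.Ioo a b) with hempty | ⟨s0, hs0⟩
    · refine antitoneOn_no_exc f f' a b hcont (fun t ht => ?_) (fun t ht => ?_)
      · exact hder t ht (fun hS => absurd (Set.mem_inter hS ht) (by simp [hempty]))
      · exact hneg t ht (fun hS => absurd (Set.mem_inter hS ht) (by simp [hempty]))
    · have hs0S : s0 ∈ S := hs0.1
      have hs0I : s0 ∈ Set.Ioo a b := hs0.2
      have hsub1 : (S ∩ Set.Ioo a s0) ⊆ (S ∩ Set.Ioo a b) \ {s0} := by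
        rintro y ⟨hyS, hy⟩
        exact ⟨⟨hyS, hy.1, hy.2.trans hs0I.2⟩, by simp; exact ne_of_lt hy.2⟩
      have hsub2 : (S ∩ Set.Ioo s0 b) ⊆ (S ∩ Set.Ioo a b) \ {s0} := by
        rintro y ⟨hyS, hy⟩
        exact ⟨⟨hyS, hs0I.1.trans hy.1, hy.2⟩, by simp; exact (ne_of_gt hy.1)⟩
      have hfin1 : (S ∩ Set.Ioo a s0).Finite := hfin.subset (hsub1.trans diff_subset)
      have hfin2 : (S ∩ Set.Ioo s0 b).Finite := hfin.subset (hsub2.trans diff_subset)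
      have hcard' : ∀ (u : Set ℝ) (hu : u.Finite), u ⊆ (S ∩ Set.Ioo a b) \ {s0} →
          hu.toFinset.card ≤ N := by
        intro u hu husub
        have h1 : hu.toFinset ⊆ hfin.toFinset.erase s0 := by
          intro y hy
          rw [Set.Finite.mem_toFinset] at hy
          have := husub hy
          rw [Finset.mem_erase, Set.Finite.mem_toFinset]
          exact ⟨by simpa using this.2, this.1⟩
        calc hu.toFinset.card ≤ (hfin.toFinset.erase s0).card := Finset.card_le_card h1
          _ = hfin.toFinset.card - 1 := Finset.card_erase_of_mem (by
              rw [Set.Finite.mem_toFinset]; exact hs0)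
          _ ≤ N := by omega
      have h1 : AntitoneOn f (Set.Icc a s0) :=
        ih a s0 hfin1 (hcard' _ hfin1 hsub1) (hcont.mono (Set.Icc_subset_Icc le_rfl hs0I.2.le))
          (fun t ht => hder t ⟨ht.1, ht.2.trans hs0I.2⟩)
          (fun t ht => hneg t ⟨ht.1, ht.2.trans hs0I.2⟩)
      have h2 : AntitoneOn f (Set.Icc s0 b) :=
        ih s0 b hfin2 (hcard' _ hfin2 hsub2) (hcont.mono (Set.Icc_subset_Icc hs0I.1.le le_rfl))
          (fun t ht => hder t ⟨hs0I.1.trans ht.1, ht.2⟩)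
          (fun t ht => hneg t ⟨hs0I.1.trans ht.1, ht.2⟩)
      intro t1 ht1 t2 ht2 h12
      rcases le_total t2 s0 with h | h
      · exact h1 ⟨ht1.1, h12.trans h⟩ ⟨ht2.1, h⟩ h12
      · rcases le_total t1 s0 with h' | h'
        · exact (h2 ⟨le_rfl, hs0I.2.le⟩ ⟨h, ht2.2⟩ h).trans
            (h1 ⟨ht1.1, h'⟩ ⟨hs0I.1.le, le_rfl⟩ h')
        · exact h2 ⟨h', ht1.2⟩ ⟨h'.trans h12, ht2.2⟩ h12


lemma ftc_finite_exc (f φ : ℝ → ℝ) (S : Set ℝ) :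
    ∀ (N : ℕ) (a b : ℝ), a ≤ b → ∀ (hfin : (S ∩ Set.Ioo a b).Finite), hfin.toFinset.card ≤ N →
    ContinuousOn f (Set.Icc a b) →
    (∀ t ∈ Set.Ioo a b, t ∉ S → HasDerivWithinAt f (φ t) (Set.Ioi t) t) →
    IntervalIntegrable φ volume a b →
    ∫ t in a..b, φ t = f b - f a := by
  intro N
  induction N with
  | zero =>
    intro a b hab hfin hcard hcont hder hint
    have hempty : S ∩ Set.Ioo a b = ∅ := by
      have := Finset.card_eq_zero.1 (Nat.le_zero.1 hcard)
      rw [← hfin.toFinset_eq_empty]; exact this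
    exact intervalIntegral.integral_eq_sub_of_hasDeriv_right_of_le hab hcont
      (fun t ht => hder t ht (fun hS => absurd (Set.mem_inter hS ht) (by simp [hempty]))) hint
  | succ N ih =>
    intro a b hab hfin hcard hcont hder hint
    rcases Set.eq_empty_or_nonempty (S ∩ Set.Ioo a b) with hempty | ⟨s0, hs0⟩
    · exact intervalIntegral.integral_eq_sub_of_hasDeriv_right_of_le hab hcont
        (fun t ht => hder t ht (fun hS => absurd (Set.mem_inter hS ht) (by simp [hempty]))) hint
    · have hs0I : s0 ∈ Set.Ioo a b := hs0.2
      have hsub1 : (S ∩ Set.Ioo a s0) ⊆ (S ∩ Set.Ioo a b) \ {s0} := by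
        rintro y ⟨hyS, hy⟩
        exact ⟨⟨hyS, hy.1, hy.2.trans hs0I.2⟩, by simp; exact ne_of_lt hy.2⟩
      have hsub2 : (S ∩ Set.Ioo s0 b) ⊆ (S ∩ Set.Ioo a b) \ {s0} := by
        rintro y ⟨hyS, hy⟩
        exact ⟨⟨hyS, hs0I.1.trans hy.1, hy.2⟩, by simp; exact (ne_of_gt hy.1)⟩
      have hfin1 : (S ∩ Set.Ioo a s0).Finite := hfin.subset (hsub1.trans diff_subset)
      have hfin2 : (S ∩ Set.Ioo s0 b).Finite := hfin.subset (hsub2.trans diff_subset)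
      have hcard' : ∀ (u : Set ℝ) (hu : u.Finite), u ⊆ (S ∩ Set.Ioo a b) \ {s0} →
          hu.toFinset.card ≤ N := by
        intro u hu husub
        have h1 : hu.toFinset ⊆ hfin.toFinset.erase s0 := by
          intro y hy
          rw [Set.Finite.mem_toFinset] at hy
          have := husub hy
          rw [Finset.mem_erase, Set.Finite.mem_toFinset]
          exact ⟨by simpa using this.2, this.1⟩
        calc hu.toFinset.card ≤ (hfin.toFinset.erase s0).card := Finset.card_le_card h1
          _ = hfin.toFinset.card - 1 := Finset.card_erase_of_mem (by
              rw [Set.Finite.mem_toFinset]; exact hs0)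
          _ ≤ N := by omega
      have hint1 : IntervalIntegrable φ volume a s0 := by
        apply hint.mono_set
        rw [Set.uIcc_of_le hs0I.1.le, Set.uIcc_of_le hab]
        exact Set.Icc_subset_Icc le_rfl hs0I.2.le
      have hint2 : IntervalIntegrable φ volume s0 b := by
        apply hint.mono_set
        rw [Set.uIcc_of_le hs0I.2.le, Set.uIcc_of_le hab]
        exact Set.Icc_subset_Icc hs0I.1.le le_rfl
      have e1 : ∫ t in a..s0, φ t = f s0 - f a :=
        ih a s0 hs0I.1.le hfin1 (hcard' _ hfin1 hsub1)
          (hcont.mono (Set.Icc_subset_Icc le_rfl hs0I.2.le))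
          (fun t ht => hder t ⟨ht.1, ht.2.trans hs0I.2⟩) hint1
      have e2 : ∫ t in s0..b, φ t = f b - f s0 :=
        ih s0 b hs0I.2.le hfin2 (hcard' _ hfin2 hsub2)
          (hcont.mono (Set.Icc_subset_Icc hs0I.1.le le_rfl))
          (fun t ht => hder t ⟨hs0I.1.trans ht.1, ht.2⟩) hint2
      rw [← intervalIntegral.integral_add_adjacent_intervals hint1 hint2, e1, e2]
      ring

lemma stay_le (x xd : ℝ → ℝ) (S : Set ℝ)
    (hSfin : ∀ T : ℝ, (S ∩ Set.Icc 0 T).Finite)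
    (hx : ContinuousOn x (Set.Ici 0))
    (hode : ∀ t, 0 ≤ t → t ∉ S → HasDerivAt x (xd t) t)
    (B : ℝ) (hneg : ∀ t, 0 ≤ t → t ∉ S → B < x t → xd t ≤ 0)
    (h0 : x 0 ≤ B) : ∀ t, 0 ≤ t → x t ≤ B := by
  intro T hT
  by_contra hxT
  push_neg at hxT
  have hT0 : 0 < T := by
    rcases eq_or_lt_of_le hT with rfl | h
    · exact absurd h0 (not_le.2 hxT)
    · exact h
  set A := {t ∈ Set.Icc 0 T | x t ≤ B} with hA
  have hA0 : (0:ℝ) ∈ A := ⟨⟨le_rfl, hT⟩, h0⟩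
  have hAclosed : IsClosed A :=
    ContinuousOn.preimage_isClosed_of_isClosed
      (hx.mono (fun t ht => ht.1)) isClosed_Icc isClosed_Iic
  have hAbdd : BddAbove A := ⟨T, fun t ht => ht.1.2⟩
  obtain ⟨u, hu⟩ : ∃ u : ℝ, u = sSup A := ⟨_, rfl⟩

  have huA : u ∈ A := hu ▸ hAclosed.csSup_mem ⟨0, hA0⟩ hAbdd
  have hu0 : (0:ℝ) ≤ u := hu ▸ le_csSup hAbdd hA0
  have huT : u < T := lt_of_le_of_ne huA.1.2 (by
    rintro rfl
    exact absurd huA.2 (not_le.2 hxT))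
  have hgt : ∀ s, u < s → s ≤ T → B < x s := by
    intro s hs1 hs2
    by_contra h
    push_neg at h
    exact absurd (hu ▸ le_csSup hAbdd ⟨⟨hu0.trans hs1.le, hs2⟩, h⟩ : s ≤ u) (not_le.2 hs1)
  have key : ∀ s, u < s → s ≤ T → x T ≤ x s := by
    intro s hs1 hs2
    have hs0 : (0:ℝ) ≤ s := hu0.trans hs1.le
    have hfin : (S ∩ Set.Ioo s T).Finite :=
      (hSfin T).subset (fun y hy => ⟨hy.1, hs0.trans hy.2.1.le, hy.2.2.le⟩)
    have hanti : AntitoneOn x (Set.Icc s T) :=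
      antitoneOn_finite_exc x xd S hfin.toFinset.card s T hfin le_rfl
        (hx.mono (fun t ht => hs0.trans ht.1))
        (fun t ht hS => hode t (hs0.trans ht.1.le) hS)
        (fun t ht hS => hneg t (hs0.trans ht.1.le) hS (hgt t (hs1.trans ht.1) ht.2.le))
    exact hanti ⟨le_rfl, hs2⟩ ⟨hs2, le_rfl⟩ hs2
  have hne : (𝓝[Set.Ioc u T] u).NeBot := left_nhdsWithin_Ioc_neBot huT
  have htend : Filter.Tendsto x (𝓝[Set.Ioc u T] u) (𝓝 (x u)) :=
    ((hx u hu0).mono (fun s hs => hu0.trans hs.1.le)).tendsto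
  have hev : ∀ᶠ s in 𝓝[Set.Ioc u T] u, x T ≤ x s :=
    eventually_mem_nhdsWithin.mono (fun s hs => key s hs.1 hs.2)
  have : x T ≤ x u := ge_of_tendsto htend hev
  exact absurd (lt_of_le_of_lt (this.trans huA.2) hxT) (lt_irrefl _)


noncomputable def stepFn (K : ℕ) (V J : ℕ → ℝ) (a : ℝ) (y : ℝ) : ℝ :=
  a + ∑ k ∈ Finset.range K, if V k ≤ y then J k else 0

noncomputable def rampFn (K : ℕ) (V J : ℕ → ℝ) (a : ℝ) (y : ℝ) : ℝ :=
  a * y + ∑ k ∈ Finset.range K, J k * max (y - V k) 0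

lemma stepFn_measurable (K : ℕ) (V J : ℕ → ℝ) (a : ℝ) : Measurable (stepFn K V J a) := by
  unfold stepFn
  apply Measurable.add measurable_const
  apply Finset.measurable_sum
  intro k _
  exact Measurable.ite measurableSet_Ici measurable_const measurable_const

lemma stepFn_abs_le (K : ℕ) (V J : ℕ → ℝ) (a : ℝ) (y : ℝ) :
    |stepFn K V J a y| ≤ |a| + ∑ k ∈ Finset.range K, |J k| := by
  unfold stepFn
  refine (abs_add_le _ _).trans ?_
  gcongr
  refine (Finset.abs_sum_le_sum_abs _ _).trans ?_
  apply Finset.sum_le_sum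
  intro k _
  split <;> simp [abs_nonneg]

lemma rampFn_continuous (K : ℕ) (V J : ℕ → ℝ) (a : ℝ) : Continuous (rampFn K V J a) := by
  unfold rampFn
  refine Continuous.add (continuous_const.mul continuous_id) ?_
  apply continuous_finset_sum
  intro k _
  exact continuous_const.mul ((continuous_id.sub continuous_const).max continuous_const)

lemma rampFn_lip (K : ℕ) (V J : ℕ → ℝ) (a : ℝ) (y z : ℝ) :
    |rampFn K V J a y - rampFn K V J a z| ≤ (|a| + ∑ k ∈ Finset.range K, |J k|) * |y - z| := by
  have hid : rampFn K V J a y - rampFn K V J a z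
      = a * (y - z) + ∑ k ∈ Finset.range K, J k * (max (y - V k) 0 - max (z - V k) 0) := by
    unfold rampFn
    have hterm : ∀ k ∈ Finset.range K,
        J k * (max (y - V k) 0 - max (z - V k) 0)
          = J k * max (y - V k) 0 - J k * max (z - V k) 0 := fun k _ => by ring
    rw [Finset.sum_congr rfl hterm, Finset.sum_sub_distrib]
    ring
  rw [hid]
  refine (abs_add_le _ _).trans ?_
  rw [abs_mul]
  have h2 : |∑ k ∈ Finset.range K, J k * (max (y - V k) 0 - max (z - V k) 0)|
      ≤ (∑ k ∈ Finset.range K, |J k|) * |y - z| := by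
    refine (Finset.abs_sum_le_sum_abs _ _).trans ?_
    rw [Finset.sum_mul]
    apply Finset.sum_le_sum
    intro k _
    rw [abs_mul]
    apply mul_le_mul_of_nonneg_left _ (abs_nonneg _)
    simpa using abs_max_sub_max_le_abs (y - V k) (z - V k) 0
  have h3 : (|a| + ∑ k ∈ Finset.range K, |J k|) * |y - z|
      = |a| * |y - z| + (∑ k ∈ Finset.range K, |J k|) * |y - z| := by ring
  linarith

lemma max_term_hasDeriv (c v q : ℝ) (h : v ≠ q) :
    HasDerivAt (fun y => c * max (y - v) 0) (if v ≤ q then c else 0) q := by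
  rcases lt_or_gt_of_ne h with hlt | hgt
  · rw [if_pos hlt.le]
    have hd : HasDerivAt (fun y : ℝ => c * (y - v)) c q := by
      simpa using ((hasDerivAt_id q).sub_const v).const_mul c
    apply hd.congr_of_eventuallyEq
    filter_upwards [eventually_gt_nhds hlt] with y hy
    rw [max_eq_left (by linarith)]
  · rw [if_neg (not_le.2 hgt)]
    have hd : HasDerivAt (fun _ : ℝ => c * (0:ℝ)) 0 q := by
      simpa using hasDerivAt_const q (c * (0:ℝ))
    apply hd.congr_of_eventuallyEq
    filter_upwards [eventually_lt_nhds hgt] with y hy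
    rw [max_eq_right (by linarith)]

lemma rampFn_hasDeriv (K : ℕ) (V J : ℕ → ℝ) (a : ℝ) (q : ℝ) (hq : ∀ k < K, V k ≠ q) :
    HasDerivAt (rampFn K V J a) (stepFn K V J a q) q := by
  unfold rampFn stepFn
  apply HasDerivAt.add
  · simpa using (hasDerivAt_id q).const_mul a
  · exact HasDerivAt.fun_sum (fun k hk =>
      max_term_hasDeriv (J k) (V k) q (hq k (Finset.mem_range.1 hk)))

lemma rampFn_right_affine (K : ℕ) (V J : ℕ → ℝ) (a : ℝ) (q : ℝ) :
    ∃ δ > 0, ∀ y, q ≤ y → y < q + δ →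
      rampFn K V J a y = rampFn K V J a q + stepFn K V J a q * (y - q) := by
  classical
  set F := (Finset.range K).filter (fun k => q < V k) with hF
  have hδ : ∃ δ : ℝ, 0 < δ ∧ ∀ k ∈ F, δ ≤ V k - q := by
    by_cases hFe : F.Nonempty
    · refine ⟨F.inf' hFe (fun k => V k - q), ?_, ?_⟩
      · rw [Finset.lt_inf'_iff]
        intro k hk
        have := (Finset.mem_filter.1 hk).2
        linarith
      · intro k hk
        exact Finset.inf'_le _ hk
    · exact ⟨1, one_pos, fun k hk => absurd ⟨k, hk⟩ hFe⟩
  obtain ⟨δ, hδ0, hδle⟩ := hδ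
  refine ⟨δ, hδ0, fun y h1 h2 => ?_⟩
  have key : ∀ k ∈ Finset.range K,
      J k * max (y - V k) 0 = J k * max (q - V k) 0 + (if V k ≤ q then J k else 0) * (y - q) := by
    intro k hk
    by_cases hVk : V k ≤ q
    · rw [if_pos hVk, max_eq_left (by linarith), max_eq_left (by linarith)]
      ring
    · push_neg at hVk
      have hkF : k ∈ F := Finset.mem_filter.2 ⟨hk, hVk⟩
      have := hδle k hkF
      rw [if_neg (not_le.2 hVk), max_eq_right (by linarith), max_eq_right (by linarith)]
      ring
  unfold rampFn stepFn
  rw [Finset.sum_congr rfl key, Finset.sum_add_distrib, add_mul, Finset.sum_mul]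
  ring

lemma rampFn_left_affine (K : ℕ) (V J : ℕ → ℝ) (a : ℝ) (q : ℝ) :
    ∃ δ > 0, ∀ y, q - δ < y → y ≤ q →
      rampFn K V J a y = rampFn K V J a q
        + (a + ∑ k ∈ Finset.range K, if V k < q then J k else 0) * (y - q) := by
  classical
  set F := (Finset.range K).filter (fun k => V k < q) with hF
  have hδ : ∃ δ : ℝ, 0 < δ ∧ ∀ k ∈ F, δ ≤ q - V k := by
    by_cases hFe : F.Nonempty
    · refine ⟨F.inf' hFe (fun k => q - V k), ?_, ?_⟩
      · rw [Finset.lt_inf'_iff]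
        intro k hk
        have := (Finset.mem_filter.1 hk).2
        linarith
      · intro k hk
        exact Finset.inf'_le _ hk
    · exact ⟨1, one_pos, fun k hk => absurd ⟨k, hk⟩ hFe⟩
  obtain ⟨δ, hδ0, hδle⟩ := hδ
  refine ⟨δ, hδ0, fun y h1 h2 => ?_⟩
  have key : ∀ k ∈ Finset.range K,
      J k * max (y - V k) 0 = J k * max (q - V k) 0 + (if V k < q then J k else 0) * (y - q) := by
    intro k hk
    by_cases hVk : V k < q
    · have hkF : k ∈ F := Finset.mem_filter.2 ⟨hk, hVk⟩
      have := hδle k hkF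
      rw [if_pos hVk, max_eq_left (by linarith), max_eq_left (by linarith)]
      ring
    · push_neg at hVk
      rw [if_neg (not_lt.2 hVk), max_eq_right (by linarith), max_eq_right (by linarith)]
      ring
  unfold rampFn
  rw [Finset.sum_congr rfl key, Finset.sum_add_distrib, add_mul, Finset.sum_mul]
  ring

lemma lip_comp_deriv_zero (G : ℝ → ℝ) (Lip : ℝ)
    (hlip : ∀ y z, |G y - G z| ≤ Lip * |y - z|) (x : ℝ → ℝ) (t : ℝ)
    (hx : HasDerivAt x 0 t) : HasDerivAt (fun s => G (x s)) 0 t := by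
  have hLip0 : 0 ≤ Lip := by
    have := hlip (1 + 1) 1
    simp at this
    nlinarith [abs_nonneg (G (1+1) - G 1)]
  have h1 := hasDerivAt_iff_tendsto.1 hx
  rw [hasDerivAt_iff_tendsto]
  simp only [smul_zero, sub_zero] at h1 ⊢
  have h2 : Filter.Tendsto (fun s => Lip * (‖s - t‖⁻¹ * ‖x s - x t‖)) (𝓝 t) (𝓝 0) := by
    simpa using h1.const_mul Lip
  apply squeeze_zero (fun s => by positivity) (fun s => ?_) h2
  have := hlip (x s) (x t)
  calc ‖s - t‖⁻¹ * ‖G (x s) - G (x t)‖ ≤ ‖s - t‖⁻¹ * (Lip * ‖x s - x t‖) := by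
        apply mul_le_mul_of_nonneg_left _ (by positivity)
        simpa [Real.norm_eq_abs] using this
    _ = Lip * (‖s - t‖⁻¹ * ‖x s - x t‖) := by ring


end RevIneq

open RevIneq

set_option maxHeartbeats 2000000

/-- Revenue inequivalence under monotonic increase of the interval widths
`Δv^(k)`: if the time-average path length of the adaptive dynamics has
`liminf = L > 0`, then the time-averaged revenue difference
`(1/T) ∫_0^T Δv(t) x'(t) dt` has `liminf ≥ (L/2) min_k (Δv^(k+1) - Δv^(k)) > 0`,
so the time-averaged first-price payoff strictly exceeds the second-price one. -/
theorem revenue_inequivalence_increasing (n K : ℕ) (hn : 2 ≤ n) (hK : 2 ≤ K)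
    (vmk vMk : ℕ → ℝ)
    (hlt : ∀ k < K, vmk k < vMk k)
    (hmono : ∀ k, k + 1 < K → vmk k < vmk (k + 1))
    (hDmono : ∀ k, k + 1 < K → vMk k - vmk k < vMk (k + 1) - vmk (k + 1))
    (vm vM : ℝ → ℝ)
    (hstate : ∀ t, 0 ≤ t → ∃ k < K, vm t = vmk k ∧ vM t = vMk k)
    (S : Set ℝ)
    (hSfin : ∀ T : ℝ, (S ∩ Set.Icc 0 T).Finite)
    (hpc : ∀ t, 0 ≤ t → t ∉ S → ∀ᶠ s in nhds t, vm s = vm t ∧ vM s = vM t)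
    (x xd : ℝ → ℝ)
    (hx : ContinuousOn x (Set.Ici 0))
    (hode : ∀ t, 0 ≤ t → t ∉ S → HasDerivAt x (xd t) t)
    (hform : ∀ t, 0 ≤ t → t ∉ S →
      xd t = -(1 / ((n : ℝ) * ((n : ℝ) - 1))) * ((x t - vm t) / (vM t - vm t)))
    (hx0 : x 0 ∈ Set.Icc (vmk 0) (vmk (K - 1)))
    (g : ℝ)
    (hg : IsLeast ((fun k => (vMk (k + 1) - vmk (k + 1)) - (vMk k - vmk k)) ''
      {k | k + 1 < K}) g)
    (L : ℝ) (hLpos : 0 < L)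
    (hL : liminf (fun T : ℝ => T⁻¹ * ∫ t in (0:ℝ)..T, |xd t|) atTop = L) :
    (0 < L / 2 * g
      ∧ L / 2 * g ≤ liminf (fun T : ℝ => T⁻¹ * ∫ t in (0:ℝ)..T, (vM t - vm t) * xd t) atTop)
    ∧ 0 < liminf (fun T : ℝ =>
        T⁻¹ * ∫ t in (0:ℝ)..T, ((n : ℝ) - 1) / (n : ℝ) * ((vM t - vm t) * xd t)) atTop := by
  classical
  -- ## basic constants
  have hn2 : (2:ℝ) ≤ (n:ℝ) := by exact_mod_cast hn
  obtain ⟨c, hc⟩ : ∃ y : ℝ, y = 1 / ((n:ℝ) * ((n:ℝ) - 1)) := ⟨_, rfl⟩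
  have hform' : ∀ t, 0 ≤ t → t ∉ S → xd t = -c * ((x t - vm t) / (vM t - vm t)) := by
    rw [hc]; exact hform
  have hcpos : 0 < c := by
    rw [hc]
    have h : 0 < (n:ℝ) * ((n:ℝ) - 1) := by nlinarith
    positivity
  obtain ⟨D, hDdef⟩ : ∃ y : ℕ → ℝ, y = fun k => vMk k - vmk k := ⟨_, rfl⟩
  have hDpos : ∀ k, k < K → 0 < D k := by
    rw [hDdef]; exact fun k hk => sub_pos.2 (hlt k hk)
  have hgap : ∀ k, k + 1 < K → g ≤ D (k+1) - D k := by
    intro k hk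
    have := hg.2 ⟨k, hk, rfl⟩
    rw [hDdef]
    simpa using this
  have hgpos : 0 < g := by
    obtain ⟨k, hk, hkeq⟩ := hg.1
    simp only [Set.mem_setOf_eq] at hk
    have h2 := hDmono k hk
    simp only [] at hkeq
    linarith [hkeq]
  have hDm : ∀ i j, i ≤ j → j < K → D i ≤ D j := by
    rw [hDdef]; exact mono_of_succ _ K (fun k hk => (hDmono k hk).le)
  have hvmm : ∀ i j, i ≤ j → j < K → vmk i ≤ vmk j :=
    mono_of_succ vmk K (fun k hk => (hmono k hk).le)
  have hK1K : K - 1 < K := by omega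
  obtain ⟨B0, hB0⟩ : ∃ y : ℝ, y = vmk 0 := ⟨_, rfl⟩
  obtain ⟨B1, hB1⟩ : ∃ y : ℝ, y = vmk (K-1) := ⟨_, rfl⟩
  obtain ⟨W, hWdef⟩ : ∃ y : ℝ, y = B1 - B0 := ⟨_, rfl⟩
  have hWnn : 0 ≤ W := by
    rw [hWdef, hB0, hB1]; exact sub_nonneg.2 (hvmm 0 (K-1) (by omega) hK1K)
  have hvmr : ∀ t, 0 ≤ t → B0 ≤ vm t ∧ vm t ≤ B1 := by
    intro t ht
    obtain ⟨k, hk, h1, _⟩ := hstate t ht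
    rw [h1, hB0, hB1]
    exact ⟨hvmm 0 k (by omega) hk, hvmm k (K-1) (by omega) hK1K⟩
  have hΔr : ∀ t, 0 ≤ t → 0 < vM t - vm t ∧ D 0 ≤ vM t - vm t ∧ vM t - vm t ≤ D (K-1) := by
    intro t ht
    obtain ⟨k, hk, h1, h2⟩ := hstate t ht
    rw [h1, h2]
    have e : ∀ m, D m = vMk m - vmk m := by rw [hDdef]; intro m; rfl
    rw [← e k]
    exact ⟨hDpos k hk, hDm 0 k (by omega) hk, hDm k (K-1) (by omega) hK1K⟩
  -- ## invariance
  have hxup : ∀ t, 0 ≤ t → x t ≤ B1 := by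
    apply stay_le x xd S hSfin hx hode B1 _ (hB1 ▸ hx0.2)
    intro t ht hS hgt
    rw [hform' t ht hS]
    have h1 : 0 < x t - vm t := by have := (hvmr t ht).2; linarith
    have h2 : 0 < vM t - vm t := (hΔr t ht).1
    have h3 : 0 < (x t - vm t) / (vM t - vm t) := div_pos h1 h2
    nlinarith
  have hxlo : ∀ t, 0 ≤ t → B0 ≤ x t := by
    have hst := stay_le (fun s => -x s) (fun s => -xd s) S hSfin hx.neg
      (fun t ht hS => (hode t ht hS).neg) (-B0) ?_ (by simp only [hB0]; simpa using hx0.1)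
    · intro t ht
      have := hst t ht
      simp only [neg_le_neg_iff] at this
      linarith [this]
    · intro t ht hS hgt
      have h0 : x t < B0 := by linarith
      have h1 : x t - vm t < 0 := by have := (hvmr t ht).1; linarith
      have h2 : 0 < vM t - vm t := (hΔr t ht).1
      have h3 : (x t - vm t) / (vM t - vm t) < 0 := div_neg_of_neg_of_pos h1 h2
      rw [hform' t ht hS]
      nlinarith
  have hxW : ∀ t, 0 ≤ t → |x t - vm t| ≤ W := by
    intro t ht
    rw [abs_le]
    have h1 := hvmr t ht
    have h2 := hxup t ht
    have h3 := hxlo t ht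
    rw [hWdef]
    constructor <;> linarith
  obtain ⟨Mx, hMxdef⟩ : ∃ y : ℝ, y = c * W / D 0 := ⟨_, rfl⟩
  have hD0 : 0 < D 0 := hDpos 0 (by omega)
  have hMxnn : 0 ≤ Mx := by
    rw [hMxdef]
    exact div_nonneg (mul_nonneg hcpos.le hWnn) hD0.le
  have hxdb : ∀ t, 0 ≤ t → t ∉ S → |xd t| ≤ Mx := by
    intro t ht hS
    rw [hform' t ht hS]
    have h2 := (hΔr t ht).1
    have h2' := (hΔr t ht).2.1
    have h4 := hxW t ht
    rw [abs_mul, abs_neg, abs_of_pos hcpos, abs_div, abs_of_pos h2, hMxdef, mul_div_assoc]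
    apply mul_le_mul_of_nonneg_left _ hcpos.le
    exact div_le_div₀ hWnn h4 hD0 h2'
  -- ## the step and ramp functions
  obtain ⟨M, hMdef⟩ : ∃ y : ℕ → ℝ, y = fun k => if k = 0 then D 0 - g/2
      else if k < K then (D (k-1) + D k)/2 else D (K-1) + g/2 := ⟨_, rfl⟩
  obtain ⟨Jf, hJdef⟩ : ∃ y : ℕ → ℝ, y = fun k => M (k+1) - M k := ⟨_, rfl⟩
  obtain ⟨H, hHdef⟩ : ∃ y : ℝ → ℝ, y = stepFn K vmk Jf (M 0) := ⟨_, rfl⟩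
  obtain ⟨G, hGdef⟩ : ∃ y : ℝ → ℝ, y = rampFn K vmk Jf (M 0) := ⟨_, rfl⟩
  have hM0 : M 0 = D 0 - g/2 := by rw [hMdef]; simp
  have hMmid : ∀ k, 1 ≤ k → k < K → M k = (D (k-1) + D k)/2 := by
    intro k h1 h2
    rw [hMdef]
    simp only []
    rw [if_neg (by omega : ¬ k = 0), if_pos h2]
  have hMK : ∀ k, 1 ≤ k → ¬ (k < K) → M k = D (K-1) + g/2 := by
    intro k h1 h2
    rw [hMdef]
    simp only []
    rw [if_neg (by omega : ¬ k = 0), if_neg h2]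
  have hMle : ∀ j, j < K → M j ≤ D j - g/2 := by
    intro j hj
    rcases Nat.eq_zero_or_pos j with rfl | hj1
    · rw [hM0]
    · rw [hMmid j hj1 hj]
      have hgapj : g ≤ D j - D (j-1) := by
        have := hgap (j-1) (by omega)
        rw [(by omega : j - 1 + 1 = j)] at this
        linarith
      linarith
  have hMge : ∀ j, j < K → D j + g/2 ≤ M (j+1) := by
    intro j hj
    by_cases hjK : j + 1 < K
    · rw [hMmid (j+1) (by omega) hjK]
      have := hgap j hjK
      simp only [Nat.add_sub_cancel]
      linarith
    · rw [hMK (j+1) (by omega) hjK]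
      have hje : j = K - 1 := by omega
      rw [hje]
  have hJnn : ∀ k, k < K → 0 ≤ Jf k := by
    intro k hk
    rw [hJdef]
    have h1 := hMle k hk
    have h2 := hMge k hk
    simp only []
    linarith
  have hMtel : ∀ m : ℕ, M 0 + ∑ k ∈ Finset.range m, Jf k = M m := by
    intro m
    rw [hJdef]
    rw [Finset.sum_range_sub (f := M)]
    ring
  have hHval : ∀ q : ℝ, H q = M 0 + ∑ k ∈ (Finset.range K).filter (fun k => vmk k ≤ q), Jf k := by
    intro q
    rw [hHdef]
    unfold stepFn
    rw [Finset.sum_filter]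
  have hP1 : ∀ j, j < K → ∀ q : ℝ, q < vmk j → H q ≤ D j - g/2 := by
    intro j hj q hq
    rw [hHval q]
    have hsub : (Finset.range K).filter (fun k => vmk k ≤ q) ⊆ Finset.range j := by
      intro k hk
      rw [Finset.mem_filter, Finset.mem_range] at hk
      rw [Finset.mem_range]
      by_contra h
      push_neg at h
      have := hvmm j k h hk.1
      linarith [hk.2]
    have hsum : ∑ k ∈ (Finset.range K).filter (fun k => vmk k ≤ q), Jf k
        ≤ ∑ k ∈ Finset.range j, Jf k := by
      apply Finset.sum_le_sum_of_subset_of_nonneg hsub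
      intro k hk _
      exact hJnn k (lt_trans (Finset.mem_range.1 hk) hj)
    have h5 := hMtel j
    have h6 := hMle j hj
    linarith
  have hP2 : ∀ j, j < K → ∀ q : ℝ, vmk j < q → D j + g/2 ≤ H q := by
    intro j hj q hq
    rw [hHval q]
    have hsub : Finset.range (j+1) ⊆ (Finset.range K).filter (fun k => vmk k ≤ q) := by
      intro k hk
      rw [Finset.mem_range] at hk
      rw [Finset.mem_filter, Finset.mem_range]
      have hkj : k ≤ j := by omega
      exact ⟨by omega, (hvmm k j hkj hj).trans hq.le⟩
    have hsum : ∑ k ∈ Finset.range (j+1), Jf k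
        ≤ ∑ k ∈ (Finset.range K).filter (fun k => vmk k ≤ q), Jf k := by
      apply Finset.sum_le_sum_of_subset_of_nonneg hsub
      intro k hk _
      exact hJnn k (Finset.mem_range.1 (Finset.mem_filter.1 hk).1)
    have h5 := hMtel (j+1)
    have h6 := hMge j hj
    linarith
  obtain ⟨Lip, hLipdef⟩ : ∃ y : ℝ, y = |M 0| + ∑ k ∈ Finset.range K, |Jf k| := ⟨_, rfl⟩
  have hLipnn : 0 ≤ Lip := by
    rw [hLipdef]
    positivity
  have hGlip : ∀ y z, |G y - G z| ≤ Lip * |y - z| := by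
    rw [hGdef, hLipdef]; exact fun y z => rampFn_lip K vmk Jf (M 0) y z
  have hHb : ∀ y, |H y| ≤ Lip := by
    rw [hHdef, hLipdef]; exact fun y => stepFn_abs_le K vmk Jf (M 0) y
  obtain ⟨CC, hCCdef⟩ : ∃ y : ℝ, y = Lip * W := ⟨_, rfl⟩
  have hCCnn : 0 ≤ CC := by rw [hCCdef]; exact mul_nonneg hLipnn hWnn
  -- ## pointwise master inequality
  have hmaster : ∀ t, 0 ≤ t → t ∉ S →
      g/2 * |xd t| + H (x t) * xd t ≤ (vM t - vm t) * xd t := by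
    intro t ht hS
    obtain ⟨k, hk, h1, h2⟩ := hstate t ht
    have hΔpos : 0 < vM t - vm t := (hΔr t ht).1
    have hxdf := hform' t ht hS
    have hDk : vM t - vm t = D k := by rw [hDdef, h1, h2]
    rcases lt_trichotomy (x t) (vm t) with hlt' | heq' | hgt'
    · have hxdpos : 0 < xd t := by
        rw [hxdf]
        have hq : (x t - vm t) / (vM t - vm t) < 0 := div_neg_of_neg_of_pos (by linarith) hΔpos
        nlinarith
      rw [abs_of_pos hxdpos]
      have hH := hP1 k hk (x t) (by rw [← h1]; exact hlt')
      have h5 : H (x t) * xd t ≤ (D k - g/2) * xd t := mul_le_mul_of_nonneg_right hH hxdpos.le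
      rw [hDk]
      linarith
    · have hz : xd t = 0 := by rw [hxdf, heq']; simp
      rw [hz]
      simp
    · have hxdneg : xd t < 0 := by
        rw [hxdf]
        have hq : 0 < (x t - vm t) / (vM t - vm t) := div_pos (by linarith) hΔpos
        nlinarith
      rw [abs_of_neg hxdneg]
      have hH := hP2 k hk (x t) (by rw [← h1]; exact hgt')
      have h5 : H (x t) * xd t ≤ (D k + g/2) * xd t := mul_le_mul_of_nonpos_right hH hxdneg.le
      rw [hDk]
      linarith
  -- ## countable crossing set
  obtain ⟨Cr, hCrdef⟩ : ∃ y : Set ℝ, y = {t : ℝ | 0 ≤ t ∧ t ∉ S ∧ xd t ≠ 0 ∧ ∃ k, k < K ∧ x t = vmk k} := ⟨_, rfl⟩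
  have hCrnbhd : ∀ t ∈ Cr, ({t} : Set ℝ) ∈ 𝓝[Cr] t := by
    intro t ht
    rw [hCrdef] at ht
    obtain ⟨ht0, htS, hxd0, k, hk, hxtk⟩ := ht
    have hdt := hode t ht0 htS
    have hρ : ∃ ρ : ℝ, 0 < ρ ∧ ∀ j, j < K → vmk j ≠ x t → ρ ≤ |vmk j - x t| := by
      by_cases hFe : ((Finset.range K).filter (fun j => vmk j ≠ x t)).Nonempty
      · refine ⟨((Finset.range K).filter (fun j => vmk j ≠ x t)).inf' hFe
            (fun j => |vmk j - x t|), ?_, ?_⟩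
        · rw [Finset.lt_inf'_iff]
          intro j hj
          exact abs_pos.2 (sub_ne_zero.2 (Finset.mem_filter.1 hj).2)
        · intro j hj hne
          exact Finset.inf'_le _ (Finset.mem_filter.2 ⟨Finset.mem_range.2 hj, hne⟩)
      · exact ⟨1, one_pos, fun j hj hne =>
          absurd ⟨j, Finset.mem_filter.2 ⟨Finset.mem_range.2 hj, hne⟩⟩ hFe⟩
    obtain ⟨ρ, hρ0, hρle⟩ := hρ
    have hcont : ∀ᶠ s in 𝓝 t, |x s - x t| < ρ := by
      have h1 : Filter.Tendsto x (𝓝 t) (𝓝 (x t)) := hdt.continuousAt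
      have h3 := Metric.tendsto_nhds.1 h1 ρ hρ0
      filter_upwards [h3] with s hs
      rwa [Real.dist_eq] at hs
    have hne : ∀ᶠ s in 𝓝[≠] t, x s ≠ x t := by
      have hslope := hasDerivAt_iff_tendsto_slope.1 hdt
      have h2 : ∀ᶠ s in 𝓝[≠] t, slope x t s ≠ 0 := hslope.eventually (eventually_ne_nhds hxd0)
      filter_upwards [h2] with s hs heq
      apply hs
      simp [slope_def_field, heq]
    have hfinal : ∀ᶠ s in 𝓝[≠] t, s ∉ Cr := by
      filter_upwards [hne, hcont.filter_mono nhdsWithin_le_nhds] with s h1 h2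
      intro hsCr
      rw [hCrdef] at hsCr
      obtain ⟨_, _, _, j, hj, hsj⟩ := hsCr
      have hvne : vmk j ≠ x t := by rw [← hsj]; exact h1
      have h3 := hρle j hj hvne
      rw [← hsj] at h3
      linarith
    rw [eventually_nhdsWithin_iff] at hfinal
    obtain ⟨u, hu1, hu2, hu3⟩ := eventually_nhds_iff.1 hfinal
    rw [mem_nhdsWithin]
    refine ⟨u, hu2, hu3, fun s hs => ?_⟩
    rw [Set.mem_singleton_iff]
    by_contra hne'
    exact hu1 s hs.1 (by simpa using hne') hs.2
  have hCrc : Cr.Countable := by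
    obtain ⟨tset, htsub, htc, htcover⟩ :=
      TopologicalSpace.countable_cover_nhdsWithin (f := fun t => ({t} : Set ℝ)) hCrnbhd
    apply htc.mono
    intro y hy
    obtain ⟨z, hz1, hz2⟩ := Set.mem_iUnion₂.1 (htcover hy)
    rw [Set.mem_singleton_iff] at hz2
    rw [hz2]
    exact hz1
  -- ## the key integral estimate
  have key : ∀ T : ℝ, 0 ≤ T →
      g/2 * (∫ t in (0:ℝ)..T, |xd t|) - CC ≤ (∫ t in (0:ℝ)..T, (vM t - vm t) * xd t)
      ∧ (∫ t in (0:ℝ)..T, (vM t - vm t) * xd t) ≤ (D (K-1) * Mx) * T := by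
    intro T hT
    have hPfin := hSfin T
    have hPnull : volume (S ∩ Set.Icc 0 T) = 0 := hPfin.measure_zero _
    obtain ⟨A, hAdef⟩ : ∃ y : Set ℝ, y = Set.Icc (0:ℝ) T \ (S ∩ Set.Icc 0 T) := ⟨_, rfl⟩
    have hAmeas : MeasurableSet A := by
      rw [hAdef]
      exact measurableSet_Icc.diff hPfin.measurableSet
    have hrestr : volume.restrict A = volume.restrict (Set.Icc (0:ℝ) T) := by
      rw [hAdef]
      exact Measure.restrict_congr_set (diff_ae_eq_self.2
        (measure_mono_null Set.inter_subset_right hPnull))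
    have hAmem : ∀ t ∈ A, (0 ≤ t ∧ t ≤ T) ∧ t ∉ S := by
      intro t ht
      rw [hAdef] at ht
      exact ⟨⟨ht.1.1, ht.1.2⟩, fun hS => ht.2 ⟨hS, ht.1⟩⟩
    have haeA : ∀ᵐ t ∂volume.restrict (Set.Icc (0:ℝ) T), t ∈ A := by
      rw [← hrestr]
      exact ae_restrict_mem hAmeas
    -- measurability
    have hx_aem : AEMeasurable x (volume.restrict (Set.Icc (0:ℝ) T)) :=
      (hx.mono Set.Icc_subset_Ici_self).aemeasurable measurableSet_Icc
    have hvm_cont : ContinuousOn vm A := by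
      intro t ht
      have hev := hpc t ((hAmem t ht).1.1) ((hAmem t ht).2)
      have hconst : vm =ᶠ[𝓝 t] fun _ => vm t := hev.mono fun s hs => hs.1
      exact hconst.continuousAt.continuousWithinAt
    have hvM_cont : ContinuousOn vM A := by
      intro t ht
      have hev := hpc t ((hAmem t ht).1.1) ((hAmem t ht).2)
      have hconst : vM =ᶠ[𝓝 t] fun _ => vM t := hev.mono fun s hs => hs.2
      exact hconst.continuousAt.continuousWithinAt
    have hvm_aem : AEMeasurable vm (volume.restrict (Set.Icc (0:ℝ) T)) := by
      rw [← hrestr]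
      exact hvm_cont.aemeasurable hAmeas
    have hvM_aem : AEMeasurable vM (volume.restrict (Set.Icc (0:ℝ) T)) := by
      rw [← hrestr]
      exact hvM_cont.aemeasurable hAmeas
    have hform_ae : ∀ᵐ t ∂volume.restrict (Set.Icc (0:ℝ) T),
        xd t = -c * ((x t - vm t) / (vM t - vm t)) := by
      filter_upwards [haeA] with t ht
      exact hform' t ((hAmem t ht).1.1) ((hAmem t ht).2)
    have hform_eq : xd =ᶠ[ae (volume.restrict (Set.Icc (0:ℝ) T))]
        fun t => -c * ((x t - vm t) / (vM t - vm t)) := hform_ae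
    have hxd_aem : AEMeasurable xd (volume.restrict (Set.Icc (0:ℝ) T)) :=
      AEMeasurable.congr (((hx_aem.sub hvm_aem).div (hvM_aem.sub hvm_aem)).const_mul (-c))
        hform_eq.symm
    have hΔ_aem : AEMeasurable (fun t => vM t - vm t) (volume.restrict (Set.Icc (0:ℝ) T)) :=
      hvM_aem.sub hvm_aem
    -- bounds
    have hxd_bd : ∀ᵐ t ∂volume.restrict (Set.Icc (0:ℝ) T), |xd t| ≤ Mx := by
      filter_upwards [haeA] with t ht
      exact hxdb t ((hAmem t ht).1.1) ((hAmem t ht).2)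
    have hΔbd : ∀ᵐ t ∂volume.restrict (Set.Icc (0:ℝ) T), |vM t - vm t| ≤ D (K-1) := by
      filter_upwards [haeA] with t ht
      have h := hΔr t ((hAmem t ht).1.1)
      rw [abs_of_pos h.1]
      exact h.2.2
    -- integrability helper
    have hIntOf : ∀ (ψ : ℝ → ℝ) (Cb : ℝ), AEMeasurable ψ (volume.restrict (Set.Icc (0:ℝ) T)) →
        (∀ᵐ t ∂volume.restrict (Set.Icc (0:ℝ) T), |ψ t| ≤ Cb) →
        IntervalIntegrable ψ volume 0 T := by
      intro ψ Cb hm hb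
      rw [intervalIntegrable_iff_integrableOn_Icc_of_le hT]
      apply Integrable.mono' (integrableOn_const (C := Cb) measure_Icc_lt_top.ne)
        hm.aestronglyMeasurable
      simpa [Real.norm_eq_abs] using hb
    have hint_abs : IntervalIntegrable (fun t => |xd t|) volume 0 T := by
      apply hIntOf _ Mx ((continuous_abs.measurable).comp_aemeasurable hxd_aem)
      simpa [abs_abs] using hxd_bd
    have hDKMx_nn : 0 ≤ D (K-1) * Mx := by
      have : 0 < D (K-1) := hDpos _ hK1K
      exact mul_nonneg this.le hMxnn
    have hint_main : IntervalIntegrable (fun t => (vM t - vm t) * xd t) volume 0 T := by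
      apply hIntOf _ (D (K-1) * Mx) (hΔ_aem.mul hxd_aem)
      filter_upwards [hxd_bd, hΔbd] with t h1 h2
      rw [Pi.mul_apply, abs_mul]
      exact mul_le_mul h2 h1 (abs_nonneg _) ((abs_nonneg _).trans h2)
    have hHx_aem : AEMeasurable (fun t => H (x t)) (volume.restrict (Set.Icc (0:ℝ) T)) := by
      rw [hHdef]
      exact (stepFn_measurable K vmk Jf (M 0)).comp_aemeasurable hx_aem
    have hHxbd : ∀ᵐ t ∂volume.restrict (Set.Icc (0:ℝ) T), |H (x t) * xd t| ≤ Lip * Mx := by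
      filter_upwards [hxd_bd] with t h1
      rw [abs_mul]
      exact mul_le_mul (hHb _) h1 (abs_nonneg _) hLipnn
    have hint_Hx : IntervalIntegrable (fun t => H (x t) * xd t) volume 0 T :=
      hIntOf _ (Lip * Mx) (hHx_aem.mul hxd_aem) hHxbd
    -- the FTC for G ∘ x
    obtain ⟨φ, hφdef⟩ : ∃ y : ℝ → ℝ,
        y = fun t => derivWithin (fun s => G (x s)) (Set.Ioi t) t := ⟨_, rfl⟩
    have hdiffw : ∀ t, 0 < t → t ∉ S →
        HasDerivWithinAt (fun s => G (x s)) (φ t) (Set.Ioi t) t := by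
      intro t ht hS
      have hdt := hode t ht.le hS
      suffices hd : DifferentiableWithinAt ℝ (fun s => G (x s)) (Set.Ioi t) t by
        rw [hφdef]
        exact hd.hasDerivWithinAt
      by_cases hxd0 : xd t = 0
      · have hz : HasDerivAt (fun s => G (x s)) 0 t :=
          lip_comp_deriv_zero G Lip hGlip x t (hxd0 ▸ hdt)
        exact hz.differentiableAt.differentiableWithinAt
      by_cases hcross : ∃ k, k < K ∧ x t = vmk k
      · -- one-sided affine analysis
        obtain ⟨k, hk, hxtk⟩ := hcross
        rcases lt_or_gt_of_ne hxd0 with hneg | hpos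
        · -- xd t < 0 : moving left, use left affine piece
          obtain ⟨δ, hδ0, hδ⟩ := rampFn_left_affine K vmk Jf (M 0) (x t)
          have hslope := hasDerivAt_iff_tendsto_slope.1 hdt
          have hsl : ∀ᶠ s in 𝓝[≠] t, slope x t s < 0 :=
            hslope.eventually (eventually_lt_nhds hneg)
          have hsl' : ∀ᶠ s in 𝓝[>] t, x s ≤ x t := by
            filter_upwards [hsl.filter_mono (nhdsWithin_mono t (fun s hs => ne_of_gt hs)),
              eventually_mem_nhdsWithin] with s h1 h2
            have h3 : 0 < s - t := by simp at h2; linarith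
            rw [slope_def_field, div_neg_iff] at h1
            rcases h1 with ⟨h4, h5⟩ | ⟨h4, h5⟩ <;> linarith
          have hcl : ∀ᶠ s in 𝓝[>] t, x t - δ < x s := by
            have h1 : Filter.Tendsto x (𝓝 t) (𝓝 (x t)) := hdt.continuousAt
            have h3 := Metric.tendsto_nhds.1 h1 δ hδ0
            apply Filter.Eventually.filter_mono nhdsWithin_le_nhds
            filter_upwards [h3] with s hs
            rw [Real.dist_eq, abs_lt] at hs
            linarith [hs.1]
          have haff : ∀ᶠ s in 𝓝[>] t, G (x s)
              = G (x t) + (M 0 + ∑ j ∈ Finset.range K, if vmk j < x t then Jf j else 0)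
                * (x s - x t) := by
            filter_upwards [hsl', hcl] with s h1 h2
            rw [hGdef]
            exact hδ (x s) h2 h1
          have hwd : HasDerivWithinAt
              (fun s => G (x t) + (M 0 + ∑ j ∈ Finset.range K, if vmk j < x t then Jf j else 0)
                * (x s - x t))
              ((M 0 + ∑ j ∈ Finset.range K, if vmk j < x t then Jf j else 0) * xd t)
              (Set.Ioi t) t := by
            exact (((hdt.hasDerivWithinAt.sub_const (x t)).const_mul _).const_add _)
          have : HasDerivWithinAt (fun s => G (x s))
              ((M 0 + ∑ j ∈ Finset.range K, if vmk j < x t then Jf j else 0) * xd t)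
              (Set.Ioi t) t := by
            apply hwd.congr_of_eventuallyEq
            · exact haff
            · simp
          exact this.differentiableWithinAt
        · -- xd t > 0 : moving right, use right affine piece
          obtain ⟨δ, hδ0, hδ⟩ := rampFn_right_affine K vmk Jf (M 0) (x t)
          have hslope := hasDerivAt_iff_tendsto_slope.1 hdt
          have hsl : ∀ᶠ s in 𝓝[≠] t, 0 < slope x t s :=
            hslope.eventually (eventually_gt_nhds hpos)
          have hsl' : ∀ᶠ s in 𝓝[>] t, x t ≤ x s := by
            filter_upwards [hsl.filter_mono (nhdsWithin_mono t (fun s hs => ne_of_gt hs)),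
              eventually_mem_nhdsWithin] with s h1 h2
            have h3 : 0 < s - t := by simp at h2; linarith
            rw [slope_def_field, div_pos_iff] at h1
            rcases h1 with ⟨h4, h5⟩ | ⟨h4, h5⟩ <;> linarith
          have hcl : ∀ᶠ s in 𝓝[>] t, x s < x t + δ := by
            have h1 : Filter.Tendsto x (𝓝 t) (𝓝 (x t)) := hdt.continuousAt
            have h3 := Metric.tendsto_nhds.1 h1 δ hδ0
            apply Filter.Eventually.filter_mono nhdsWithin_le_nhds
            filter_upwards [h3] with s hs
            rw [Real.dist_eq, abs_lt] at hs
            linarith [hs.2]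
          have haff : ∀ᶠ s in 𝓝[>] t, G (x s) = G (x t) + H (x t) * (x s - x t) := by
            filter_upwards [hsl', hcl] with s h1 h2
            rw [hGdef, hHdef]
            exact hδ (x s) h1 (by linarith)
          have hwd : HasDerivWithinAt (fun s => G (x t) + H (x t) * (x s - x t))
              (H (x t) * xd t) (Set.Ioi t) t :=
            (((hdt.hasDerivWithinAt.sub_const (x t)).const_mul _).const_add _)
          have : HasDerivWithinAt (fun s => G (x s)) (H (x t) * xd t) (Set.Ioi t) t := by
            apply hwd.congr_of_eventuallyEq
            · exact haff
            · simp
          exact this.differentiableWithinAt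
      · -- not a kink : chain rule
        have hq : ∀ k, k < K → vmk k ≠ x t := fun k hk heq => hcross ⟨k, hk, heq.symm⟩
        have hGd : HasDerivAt G (H (x t)) (x t) := by
          rw [hGdef, hHdef]
          exact rampFn_hasDeriv K vmk Jf (M 0) (x t) hq
        exact (hGd.comp t hdt).differentiableAt.differentiableWithinAt
    have hφval : ∀ t, 0 < t → t ∉ S → t ∉ Cr → φ t = H (x t) * xd t := by
      intro t ht hS hCr
      have hdt := hode t ht.le hS
      by_cases hxd0 : xd t = 0
      · have hz : HasDerivAt (fun s => G (x s)) 0 t :=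
          lip_comp_deriv_zero G Lip hGlip x t (hxd0 ▸ hdt)
        rw [hφdef]
        show derivWithin (fun s => G (x s)) (Set.Ioi t) t = _
        rw [hz.hasDerivWithinAt.derivWithin (uniqueDiffWithinAt_Ioi t), hxd0, mul_zero]
      · have hcross : ¬ ∃ k, k < K ∧ x t = vmk k := by
          intro hex
          exact hCr (by rw [hCrdef]; exact ⟨ht.le, hS, hxd0, hex⟩)
        have hq : ∀ k, k < K → vmk k ≠ x t := fun k hk heq => hcross ⟨k, hk, heq.symm⟩
        have hGd : HasDerivAt G (H (x t)) (x t) := by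
          rw [hGdef, hHdef]
          exact rampFn_hasDeriv K vmk Jf (M 0) (x t) hq
        rw [hφdef]
        show derivWithin (fun s => G (x s)) (Set.Ioi t) t = _
        exact (hGd.comp t hdt).hasDerivWithinAt.derivWithin (uniqueDiffWithinAt_Ioi t)
    have hCrnull : (volume.restrict (Set.Icc (0:ℝ) T)) Cr = 0 :=
      le_antisymm (le_trans (Measure.restrict_le_self Cr)
        (le_of_eq (hCrc.measure_zero _))) (zero_le)
    have haeCr : ∀ᵐ t ∂volume.restrict (Set.Icc (0:ℝ) T), t ∉ Cr := by
      rw [MeasureTheory.ae_iff]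
      simpa using hCrnull
    have hae0 : ∀ᵐ t ∂volume.restrict (Set.Icc (0:ℝ) T), t ≠ 0 := by
      rw [MeasureTheory.ae_iff]
      apply le_antisymm _ (zero_le)
      apply le_trans (Measure.restrict_le_self _)
      simp only [ne_eq, not_not]
      have : {a : ℝ | a = 0} = {(0:ℝ)} := by ext a; simp
      rw [this]
      simp
    have hφ_ae : (fun t => H (x t) * xd t) =ᵐ[volume.restrict (Set.Icc (0:ℝ) T)] φ := by
      filter_upwards [haeA, haeCr, hae0] with t h1 h2 h3
      have ht0 : 0 < t := lt_of_le_of_ne ((hAmem t h1).1.1) (Ne.symm h3)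
      exact (hφval t ht0 ((hAmem t h1).2) h2).symm
    have hint_φ : IntervalIntegrable φ volume 0 T := by
      apply hIntOf _ (Lip * Mx) (AEMeasurable.congr (hHx_aem.mul hxd_aem) hφ_ae)
      filter_upwards [hφ_ae, hHxbd] with t h1 h2
      rw [← h1]
      exact h2
    have hcontGx : ContinuousOn (fun s => G (x s)) (Set.Icc 0 T) := by
      rw [hGdef]
      exact (rampFn_continuous K vmk Jf (M 0)).comp_continuousOn
        (hx.mono Set.Icc_subset_Ici_self)
    have hfin' : (S ∩ Set.Ioo (0:ℝ) T).Finite :=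
      hPfin.subset (fun y hy => ⟨hy.1, hy.2.1.le, hy.2.2.le⟩)
    have hFTC : ∫ t in (0:ℝ)..T, φ t = G (x T) - G (x 0) :=
      ftc_finite_exc _ φ S hfin'.toFinset.card 0 T hT hfin' le_rfl hcontGx
        (fun t ht hS => hdiffw t ht.1 hS) hint_φ
    have hHxint_eq : ∫ t in (0:ℝ)..T, H (x t) * xd t = G (x T) - G (x 0) := by
      rw [← hFTC]
      apply intervalIntegral.integral_congr_ae
      have h1 := (ae_restrict_iff' measurableSet_Icc).1 hφ_ae
      filter_upwards [h1] with t h2 h3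
      rw [Set.uIoc_of_le hT] at h3
      exact h2 ⟨h3.1.le, h3.2⟩
    -- master inequality, integrated
    have hmaster_ae : (fun t => g/2 * |xd t| + H (x t) * xd t)
        ≤ᵐ[volume.restrict (Set.Icc (0:ℝ) T)] (fun t => (vM t - vm t) * xd t) := by
      filter_upwards [haeA] with t h1
      exact hmaster t ((hAmem t h1).1.1) ((hAmem t h1).2)
    have hint_lhs : IntervalIntegrable (fun t => g/2 * |xd t| + H (x t) * xd t) volume 0 T :=
      (hint_abs.const_mul (g/2)).add hint_Hx
    have hmono := intervalIntegral.integral_mono_ae_restrict hT hint_lhs hint_main hmaster_ae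
    have he1 : ∫ t in (0:ℝ)..T, (g/2 * |xd t| + H (x t) * xd t)
        = g/2 * (∫ t in (0:ℝ)..T, |xd t|) + ∫ t in (0:ℝ)..T, H (x t) * xd t := by
      rw [intervalIntegral.integral_add (hint_abs.const_mul (g/2)) hint_Hx,
        intervalIntegral.integral_const_mul]
    have hGbnd : |G (x T) - G (x 0)| ≤ CC := by
      refine (hGlip (x T) (x 0)).trans ?_
      rw [hCCdef]
      apply mul_le_mul_of_nonneg_left _ hLipnn
      rw [abs_le, hWdef]
      have h1 := hxup T hT
      have h2 := hxlo T hT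
      have h3 := hxup 0 le_rfl
      have h4 := hxlo 0 le_rfl
      constructor <;> linarith
    constructor
    · rw [he1, hHxint_eq] at hmono
      have h5 := (abs_le.1 hGbnd).1
      linarith
    · have hb2 : (fun t => (vM t - vm t) * xd t)
          ≤ᵐ[volume.restrict (Set.Icc (0:ℝ) T)] (fun _ => D (K-1) * Mx) := by
        filter_upwards [hxd_bd, hΔbd] with t h1 h2
        calc (vM t - vm t) * xd t ≤ |(vM t - vm t) * xd t| := le_abs_self _
          _ ≤ D (K-1) * Mx := by
            rw [abs_mul]
            exact mul_le_mul h2 h1 (abs_nonneg _) ((abs_nonneg _).trans h2)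
      have h6 := intervalIntegral.integral_mono_ae_restrict hT hint_main
        (intervalIntegrable_const) hb2
      rw [intervalIntegral.integral_const, smul_eq_mul] at h6
      calc (∫ t in (0:ℝ)..T, (vM t - vm t) * xd t) ≤ (T - 0) * (D (K-1) * Mx) := h6
        _ = (D (K-1) * Mx) * T := by ring
  -- ## liminf endgame
  have hAb_bdd : Filter.IsBoundedUnder (· ≥ ·) Filter.atTop
      (fun T : ℝ => T⁻¹ * ∫ t in (0:ℝ)..T, |xd t|) := by
    refine ⟨0, Filter.eventually_map.mpr ?_⟩
    filter_upwards [Filter.eventually_ge_atTop (0:ℝ)] with T hT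
    have h1 : 0 ≤ ∫ t in (0:ℝ)..T, |xd t| :=
      intervalIntegral.integral_nonneg hT (fun u _ => abs_nonneg _)
    exact mul_nonneg (inv_nonneg.2 hT) h1
  have hFbd : ∀ᶠ T in Filter.atTop,
      T⁻¹ * (∫ t in (0:ℝ)..T, (vM t - vm t) * xd t) ≤ D (K-1) * Mx := by
    filter_upwards [Filter.eventually_gt_atTop (0:ℝ)] with T hT
    have h2 := (key T hT.le).2
    calc T⁻¹ * (∫ t in (0:ℝ)..T, (vM t - vm t) * xd t)
        ≤ T⁻¹ * ((D (K-1) * Mx) * T) := mul_le_mul_of_nonneg_left h2 (inv_nonneg.2 hT.le)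
      _ = D (K-1) * Mx := by field_simp
  have hFcob : Filter.IsCoboundedUnder (· ≥ ·) Filter.atTop
      (fun T : ℝ => T⁻¹ * ∫ t in (0:ℝ)..T, (vM t - vm t) * xd t) :=
    Filter.IsBoundedUnder.isCoboundedUnder_ge ⟨D (K-1) * Mx, Filter.eventually_map.mpr hFbd⟩
  have hev_main : ∀ ε : ℝ, 0 < ε → ∀ᶠ T in Filter.atTop,
      g/2 * (L - ε) - ε ≤ T⁻¹ * ∫ t in (0:ℝ)..T, (vM t - vm t) * xd t := by
    intro ε hε
    have h1 : ∀ᶠ T in Filter.atTop, L - ε < T⁻¹ * ∫ t in (0:ℝ)..T, |xd t| := by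
      apply Filter.eventually_lt_of_lt_liminf _ hAb_bdd
      rw [hL]
      linarith
    filter_upwards [h1, Filter.eventually_ge_atTop (max 1 (CC/ε)),
      Filter.eventually_gt_atTop (0:ℝ)] with T hT1 hT2 hT3
    have hkey := (key T hT3.le).1
    have hTinv : (0:ℝ) ≤ T⁻¹ := inv_nonneg.2 hT3.le
    have hCT : CC * T⁻¹ ≤ ε := by
      have h4 : CC/ε ≤ T := le_trans (le_max_right _ _) hT2
      rw [div_le_iff₀ hε] at h4
      calc CC * T⁻¹ ≤ (T * ε) * T⁻¹ :=
            mul_le_mul_of_nonneg_right h4 hTinv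
        _ = ε := by field_simp
    have h5 := mul_le_mul_of_nonneg_left hkey hTinv
    have h6 : T⁻¹ * (g/2 * (∫ t in (0:ℝ)..T, |xd t|) - CC)
        = g/2 * (T⁻¹ * ∫ t in (0:ℝ)..T, |xd t|) - CC * T⁻¹ := by ring
    rw [h6] at h5
    have h7 : g/2 * (L - ε) ≤ g/2 * (T⁻¹ * ∫ t in (0:ℝ)..T, |xd t|) :=
      mul_le_mul_of_nonneg_left hT1.le (by linarith)
    linarith
  have main2 : L / 2 * g
      ≤ liminf (fun T : ℝ => T⁻¹ * ∫ t in (0:ℝ)..T, (vM t - vm t) * xd t) atTop := by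
    by_contra hcon
    push_neg at hcon
    obtain ⟨lf, hlf⟩ : ∃ y : ℝ,
        y = liminf (fun T : ℝ => T⁻¹ * ∫ t in (0:ℝ)..T, (vM t - vm t) * xd t) atTop := ⟨_, rfl⟩
    rw [← hlf] at hcon
    obtain ⟨ε, hεdef⟩ : ∃ y : ℝ, y = (L/2*g - lf)/(g+2) := ⟨_, rfl⟩
    have hε : 0 < ε := by
      rw [hεdef]
      exact div_pos (by linarith) (by linarith)
    have h8 := Filter.le_liminf_of_le hFcob (hev_main ε hε)
    rw [← hlf] at h8
    have h9 : ε * (g/2+1) = (L/2*g - lf)/2 := by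
      rw [hεdef]
      field_simp
    nlinarith [h8, h9, hcon]
  have hc' : 0 < ((n:ℝ)-1)/(n:ℝ) := div_pos (by linarith) (by linarith)
  have hrw : (fun T : ℝ => T⁻¹ * ∫ t in (0:ℝ)..T, ((n:ℝ)-1)/(n:ℝ) * ((vM t - vm t) * xd t))
      = fun T : ℝ => ((n:ℝ)-1)/(n:ℝ) * (T⁻¹ * ∫ t in (0:ℝ)..T, (vM t - vm t) * xd t) := by
    funext T
    rw [intervalIntegral.integral_const_mul]
    ring
  obtain ⟨ε0, hε0def⟩ : ∃ y : ℝ, y = g*L/4/(g/2+1) := ⟨_, rfl⟩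
  have hε0 : 0 < ε0 := by
    rw [hε0def]
    exact div_pos (by nlinarith) (by linarith)
  have hpos4 : ∀ᶠ T in Filter.atTop,
      g*L/4 ≤ T⁻¹ * ∫ t in (0:ℝ)..T, (vM t - vm t) * xd t := by
    filter_upwards [hev_main ε0 hε0] with T hT
    have h10 : ε0*(g/2+1) = g*L/4 := by
      rw [hε0def]
      field_simp
    nlinarith [hT]
  have hlast : 0 < liminf (fun T : ℝ =>
      T⁻¹ * ∫ t in (0:ℝ)..T, ((n:ℝ)-1)/(n:ℝ) * ((vM t - vm t) * xd t)) atTop := by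
    rw [hrw]
    have hcob : Filter.IsCoboundedUnder (· ≥ ·) Filter.atTop
        (fun T : ℝ => ((n:ℝ)-1)/(n:ℝ) *
          (T⁻¹ * ∫ t in (0:ℝ)..T, (vM t - vm t) * xd t)) := by
      apply Filter.IsBoundedUnder.isCoboundedUnder_ge
      refine ⟨((n:ℝ)-1)/(n:ℝ) * (D (K-1) * Mx), Filter.eventually_map.mpr ?_⟩
      filter_upwards [hFbd] with T hT
      exact mul_le_mul_of_nonneg_left hT hc'.le
    have hev : ∀ᶠ T in Filter.atTop, ((n:ℝ)-1)/(n:ℝ) * (g*L/4)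
        ≤ ((n:ℝ)-1)/(n:ℝ) * (T⁻¹ * ∫ t in (0:ℝ)..T, (vM t - vm t) * xd t) := by
      filter_upwards [hpos4] with T hT
      exact mul_le_mul_of_nonneg_left hT hc'.le
    have h11 := Filter.le_liminf_of_le hcob hev
    have h12 : 0 < ((n:ℝ)-1)/(n:ℝ) * (g*L/4) := mul_pos hc' (by nlinarith)
    linarith
  exact ⟨⟨mul_pos (by linarith) hgpos, main2⟩, hlast⟩
end

section
/- Fix an integer n ≥ 2 and an integer K ≥ 2. Let (vm^(1), vM^(1)), …, (vm^(K), vM^(K)) be pairs of reals with vm^(k) < vM^(k) for each k, vm^(1) < ⋯ < vm^(K), and Δv^(1) > ⋯ > Δv^(K) where Δv^(k) = vM^(k) − vm^(k). Let (vm(t), vM(t)) be a piecewise-constant function of t ∈ [0,∞) taking values in {(vm^(k), vM^(k)) : 1 ≤ k ≤ K}, with finitely many switching times in each bounded interval, and let x : [0,∞) → ℝ be continuous, differentiable at every non-switching time, with x'(t) = −(1/(n(n−1)))·(x(t) − vm(t))/(vM(t) − vm(t)) there, and x(0) ∈ [vm^(1), vm^(K)]. Write Δv(t) = vM(t) − vm(t),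 and suppose the time-average path length satisfies liminf_{T→∞} (1/T)·∫_0^T |x'(t)| dt = L > 0. Then limsup_{T→∞} (1/T)·∫_0^T Δv(t)·x'(t) dt ≤ −(L/2)·min_{1 ≤ k ≤ K−1} (Δv^(k) − Δv^(k+1)) < 0; consequently limsup_{T→∞} (1/T)·∫_0^T ((n−1)/n)·Δv(t)·x'(t) dt < 0, i.e., the time-averaged expected payoff of each bidder in the first-price auction is strictly smaller than that in the second-price auction. -/
open MeasureTheory Filter Set intervalIntegral

/-- A function that is locally constant on a preconnected set is constant there. -/
lemma aux_locally_constant {β : Type*} (v : ℝ → β) (s : Set ℝ)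
    (hs : IsPreconnected s)
    (h : ∀ u ∈ s, ∀ᶠ w in nhds u, v w = v u) :
    ∀ t ∈ s, ∀ t' ∈ s, v t' = v t := by
  intro t ht t' ht'
  set U : Set ℝ := {u | ∀ᶠ w in nhds u, v w = v t} with hUdef
  set V : Set ℝ := {u | v u ≠ v t ∧ ∀ᶠ w in nhds u, v w = v u} with hVdef
  have hUopen : IsOpen U := by
    rw [isOpen_iff_mem_nhds]
    intro u hu
    exact hu.eventually_nhds
  have hVopen : IsOpen V := by
    rw [isOpen_iff_mem_nhds]
    intro u hu
    obtain ⟨hne, hev⟩ := hu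
    filter_upwards [hev, hev.eventually_nhds] with w hw hw'
    refine ⟨by rw [hw]; exact hne, ?_⟩
    filter_upwards [hw'] with z hz
    rw [hz, hw]
  have hcover : s ⊆ U ∪ V := by
    intro u hu
    by_cases hvu : v u = v t
    · left
      exact (h u hu).mono fun w hw => hw.trans hvu
    · right
      exact ⟨hvu, h u hu⟩
  have htU : t ∈ U := h t ht
  rcases hcover ht' with h' | h'
  · exact h'.self_of_nhds
  · exfalso
    obtain ⟨z, hzs, hzU, hzV⟩ := hs U V hUopen hVopen hcover ⟨t, ht, htU⟩ ⟨t', ht', h'⟩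
    exact hzV.1 hzU.self_of_nhds

/-- FTC through finitely many exceptional points, by induction on their number. -/
lemma aux_ftc_excep (S : Set ℝ) (hSfin : ∀ T : ℝ, (S ∩ Set.Icc 0 T).Finite)
    (F f : ℝ → ℝ)
    (hbase : ∀ a b : ℝ, 0 ≤ a → a < b → S ∩ Set.Ioo a b = ∅ →
      IntervalIntegrable f volume a b ∧ (∫ t in a..b, f t) = F b - F a) :
    ∀ a b : ℝ, 0 ≤ a → a ≤ b →
      IntervalIntegrable f volume a b ∧ (∫ t in a..b, f t) = F b - F a := by
  have hfin : ∀ a b : ℝ, 0 ≤ a → (S ∩ Set.Ioo a b).Finite := by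
    intro a b ha
    exact (hSfin b).subset
      (fun u hu => ⟨hu.1, ⟨le_trans ha (le_of_lt hu.2.1), le_of_lt hu.2.2⟩⟩)
  have hempty : ∀ a b : ℝ, 0 ≤ a → a ≤ b → S ∩ Set.Ioo a b = ∅ →
      IntervalIntegrable f volume a b ∧ (∫ t in a..b, f t) = F b - F a := by
    intro a b ha hab hS
    rcases eq_or_lt_of_le hab with rfl | hab'
    · exact ⟨IntervalIntegrable.refl, by simp⟩
    · exact hbase a b ha hab' hS
  have main : ∀ N : ℕ, ∀ a b : ℝ, 0 ≤ a → a ≤ b → (S ∩ Set.Ioo a b).ncard ≤ N →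
      IntervalIntegrable f volume a b ∧ (∫ t in a..b, f t) = F b - F a := by
    intro N
    induction N with
    | zero =>
      intro a b ha hab hcard
      refine hempty a b ha hab ?_
      rw [← Set.ncard_eq_zero (hfin a b ha)]
      omega
    | succ N ih =>
      intro a b ha hab hcard
      by_cases hS : S ∩ Set.Ioo a b = ∅
      · exact hempty a b ha hab hS
      · obtain ⟨s, hsS, hsI⟩ := Set.nonempty_iff_ne_empty.2 hS
        have hs0 : 0 ≤ s := le_trans ha (le_of_lt hsI.1)
        have hcard1 : (S ∩ Set.Ioo a s).ncard ≤ N := by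
          have hsub : S ∩ Set.Ioo a s ⊆ (S ∩ Set.Ioo a b) \ {s} := by
            intro u hu
            exact ⟨⟨hu.1, hu.2.1, lt_trans hu.2.2 hsI.2⟩, fun hus => by
              simp only [Set.mem_singleton_iff] at hus
              exact absurd (hus ▸ hu.2.2) (lt_irrefl s)⟩
          have h1 := Set.ncard_le_ncard hsub (((hfin a b ha)).diff)
          have h2 := Set.ncard_diff_singleton_of_mem (Set.mem_inter hsS hsI)
          omega
        have hcard2 : (S ∩ Set.Ioo s b).ncard ≤ N := by
          have hsub : S ∩ Set.Ioo s b ⊆ (S ∩ Set.Ioo a b) \ {s} := by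
            intro u hu
            exact ⟨⟨hu.1, lt_trans hsI.1 hu.2.1, hu.2.2⟩, fun hus => by
              simp only [Set.mem_singleton_iff] at hus
              exact absurd (hus ▸ hu.2.1) (lt_irrefl s)⟩
          have h1 := Set.ncard_le_ncard hsub (((hfin a b ha)).diff)
          have h2 := Set.ncard_diff_singleton_of_mem (Set.mem_inter hsS hsI)
          omega
        obtain ⟨hi1, he1⟩ := ih a s ha (le_of_lt hsI.1) hcard1
        obtain ⟨hi2, he2⟩ := ih s b hs0 (le_of_lt hsI.2) hcard2
        refine ⟨hi1.trans hi2, ?_⟩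
        rw [← integral_add_adjacent_intervals hi1 hi2, he1, he2]
        ring
  intro a b ha hab
  exact main (S ∩ Set.Ioo a b).ncard a b ha hab le_rfl

/-- Continuity of a finite min. -/
lemma aux_continuous_inf' {ι : Type*} (s : Finset ι) (f : ι → ℝ → ℝ) :
    ∀ (hs : s.Nonempty), (∀ i ∈ s, Continuous (f i)) →
      Continuous fun y => s.inf' hs (fun i => f i y) := by
  induction s using Finset.cons_induction with
  | empty => intro hs; exact absurd hs (by simp)
  | cons i s hi ih =>
    intro hs hf
    rcases s.eq_empty_or_nonempty with rfl | hne
    · simpa using hf i (by simp)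
    · have : (fun y => (Finset.cons i s hi).inf' hs fun j => f j y)
          = fun y => min (f i y) (s.inf' hne fun j => f j y) := by
        funext y
        rw [Finset.inf'_cons (H := hne)]
      rw [this]
      exact (hf i (by simp)).min (ih hne (fun j hj => hf j (by simp [hj])))

/-- Integrability through finitely many exceptional points, by induction on their number. -/
lemma aux_int_excep (S : Set ℝ) (hSfin : ∀ T : ℝ, (S ∩ Set.Icc 0 T).Finite)
    (f : ℝ → ℝ)
    (hbase : ∀ a b : ℝ, 0 ≤ a → a < b → S ∩ Set.Ioo a b = ∅ →
      IntervalIntegrable f volume a b) :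
    ∀ a b : ℝ, 0 ≤ a → a ≤ b → IntervalIntegrable f volume a b := by
  have hfin : ∀ a b : ℝ, 0 ≤ a → (S ∩ Set.Ioo a b).Finite := by
    intro a b ha
    exact (hSfin b).subset
      (fun u hu => ⟨hu.1, ⟨le_trans ha (le_of_lt hu.2.1), le_of_lt hu.2.2⟩⟩)
  have hempty : ∀ a b : ℝ, 0 ≤ a → a ≤ b → S ∩ Set.Ioo a b = ∅ →
      IntervalIntegrable f volume a b := by
    intro a b ha hab hS
    rcases eq_or_lt_of_le hab with rfl | hab'
    · exact IntervalIntegrable.refl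
    · exact hbase a b ha hab' hS
  have main : ∀ N : ℕ, ∀ a b : ℝ, 0 ≤ a → a ≤ b → (S ∩ Set.Ioo a b).ncard ≤ N →
      IntervalIntegrable f volume a b := by
    intro N
    induction N with
    | zero =>
      intro a b ha hab hcard
      refine hempty a b ha hab ?_
      rw [← Set.ncard_eq_zero (hfin a b ha)]
      omega
    | succ N ih =>
      intro a b ha hab hcard
      by_cases hS : S ∩ Set.Ioo a b = ∅
      · exact hempty a b ha hab hS
      · obtain ⟨s, hsS, hsI⟩ := Set.nonempty_iff_ne_empty.2 hS
        have hs0 : 0 ≤ s := le_trans ha (le_of_lt hsI.1)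
        have hcard1 : (S ∩ Set.Ioo a s).ncard ≤ N := by
          have hsub : S ∩ Set.Ioo a s ⊆ (S ∩ Set.Ioo a b) \ {s} := by
            intro u hu
            exact ⟨⟨hu.1, hu.2.1, lt_trans hu.2.2 hsI.2⟩, fun hus => by
              simp only [Set.mem_singleton_iff] at hus
              exact absurd (hus ▸ hu.2.2) (lt_irrefl s)⟩
          have h1 := Set.ncard_le_ncard hsub (((hfin a b ha)).diff)
          have h2 := Set.ncard_diff_singleton_of_mem (Set.mem_inter hsS hsI)
          omega
        have hcard2 : (S ∩ Set.Ioo s b).ncard ≤ N := by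
          have hsub : S ∩ Set.Ioo s b ⊆ (S ∩ Set.Ioo a b) \ {s} := by
            intro u hu
            exact ⟨⟨hu.1, lt_trans hsI.1 hu.2.1, hu.2.2⟩, fun hus => by
              simp only [Set.mem_singleton_iff] at hus
              exact absurd (hus ▸ hu.2.1) (lt_irrefl s)⟩
          have h1 := Set.ncard_le_ncard hsub (((hfin a b ha)).diff)
          have h2 := Set.ncard_diff_singleton_of_mem (Set.mem_inter hsS hsI)
          omega
        exact (ih a s ha (le_of_lt hsI.1) hcard1).trans (ih s b hs0 (le_of_lt hsI.2) hcard2)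
  intro a b ha hab
  exact main (S ∩ Set.Ioo a b).ncard a b ha hab le_rfl

set_option maxHeartbeats 4000000 in
/-- Revenue inequivalence under monotonic decrease of the interval widths
`Δv^(k)`: if the time-average path length of the adaptive dynamics has
`liminf = L > 0`, then the time-averaged revenue difference
`(1/T) ∫_0^T Δv(t) x'(t) dt` has `limsup ≤ -(L/2) min_k (Δv^(k) - Δv^(k+1)) < 0`,
so the time-averaged first-price payoff is strictly below the second-price one. -/
theorem revenue_inequivalence_decreasing (n K : ℕ) (hn : 2 ≤ n) (hK : 2 ≤ K)
    (vmk vMk : ℕ → ℝ)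
    (hlt : ∀ k < K, vmk k < vMk k)
    (hmono : ∀ k, k + 1 < K → vmk k < vmk (k + 1))
    (hDmono : ∀ k, k + 1 < K → vMk (k + 1) - vmk (k + 1) < vMk k - vmk k)
    (vm vM : ℝ → ℝ)
    (hstate : ∀ t, 0 ≤ t → ∃ k < K, vm t = vmk k ∧ vM t = vMk k)
    (S : Set ℝ)
    (hSfin : ∀ T : ℝ, (S ∩ Set.Icc 0 T).Finite)
    (hpc : ∀ t, 0 ≤ t → t ∉ S → ∀ᶠ s in nhds t, vm s = vm t ∧ vM s = vM t)
    (x xd : ℝ → ℝ)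
    (hx : ContinuousOn x (Set.Ici 0))
    (hode : ∀ t, 0 ≤ t → t ∉ S → HasDerivAt x (xd t) t)
    (hform : ∀ t, 0 ≤ t → t ∉ S →
      xd t = -(1 / ((n : ℝ) * ((n : ℝ) - 1))) * ((x t - vm t) / (vM t - vm t)))
    (hx0 : x 0 ∈ Set.Icc (vmk 0) (vmk (K - 1)))
    (g : ℝ)
    (hg : IsLeast ((fun k => (vMk k - vmk k) - (vMk (k + 1) - vmk (k + 1))) ''
      {k | k + 1 < K}) g)
    (L : ℝ) (hLpos : 0 < L)
    (hL : liminf (fun T : ℝ => T⁻¹ * ∫ t in (0:ℝ)..T, |xd t|) atTop = L) :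
    (limsup (fun T : ℝ => T⁻¹ * ∫ t in (0:ℝ)..T, (vM t - vm t) * xd t) atTop
        ≤ -(L / 2 * g)
      ∧ -(L / 2 * g) < 0)
    ∧ limsup (fun T : ℝ =>
        T⁻¹ * ∫ t in (0:ℝ)..T, ((n : ℝ) - 1) / (n : ℝ) * ((vM t - vm t) * xd t)) atTop < 0 := by
  classical
  -- ## Basic constants and facts
  have hn2 : (2:ℝ) ≤ (n:ℝ) := by exact_mod_cast hn
  have hnn : 0 < (n:ℝ) * ((n:ℝ) - 1) := by nlinarith
  have hcpos : 0 < 1 / ((n:ℝ) * ((n:ℝ) - 1)) := by positivity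
  set c : ℝ := 1 / ((n:ℝ) * ((n:ℝ) - 1)) with hc
  have hK1 : K - 1 < K := by omega
  have h1K : 1 ≤ K - 1 := by omega
  have hDpos : ∀ k, k < K → 0 < vMk k - vmk k := fun k hk => sub_pos.2 (hlt k hk)
  have hmle : ∀ j k, j ≤ k → k < K → vmk j ≤ vmk k := by
    intro j k hjk
    induction k, hjk using Nat.le_induction with
    | base => intro _; exact le_rfl
    | succ k hk ih =>
      intro hk1
      exact le_trans (ih (by omega)) (le_of_lt (hmono k hk1))
  have hDle : ∀ j k, j ≤ k → k < K → vMk k - vmk k ≤ vMk j - vmk j := by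
    intro j k hjk
    induction k, hjk using Nat.le_induction with
    | base => intro _; exact le_rfl
    | succ k hk ih =>
      intro hk1
      exact le_trans (le_of_lt (hDmono k hk1)) (ih (by omega))
  have hgle : ∀ k, k + 1 < K → g ≤ (vMk k - vmk k) - (vMk (k+1) - vmk (k+1)) :=
    fun k hk => hg.2 ⟨k, hk, rfl⟩
  have hgpos : 0 < g := by
    obtain ⟨k0, hk0, hEq⟩ := hg.1
    have := hDmono k0 hk0
    rw [← hEq]
    simp only []
    linarith
  have hDminpos : 0 < vMk (K-1) - vmk (K-1) := hDpos (K-1) hK1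
  have hAg : g ≤ (vMk 0 - vmk 0) - (vMk (K-1) - vmk (K-1)) := by
    have h1 := hgle 0 (by omega)
    have h2 := hDle 1 (K-1) (by omega) hK1
    linarith
  have hApos : 0 < (vMk 0 - vmk 0) - (vMk (K-1) - vmk (K-1)) := lt_of_lt_of_le hgpos hAg
  have hm0b : vmk 0 ≤ vmk (K-1) := hmle 0 (K-1) (by omega) hK1
  have hmleb : ∀ k, k < K → vmk k ≤ vmk (K-1) := fun k hk => hmle k (K-1) (by omega) hK1
  have hm0le : ∀ k, k < K → vmk 0 ≤ vmk k := fun k hk => hmle 0 k (by omega) hk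
  have hDleb : ∀ k, k < K → vMk (K-1) - vmk (K-1) ≤ vMk k - vmk k :=
    fun k hk => hDle k (K-1) (by omega) hK1
  have hDle0 : ∀ k, k < K → vMk k - vmk k ≤ vMk 0 - vmk 0 :=
    fun k hk => hDle 0 k (by omega) hk
  -- ## Constancy of (vm, vM) on S-free intervals
  have hnotS : ∀ a b : ℝ, S ∩ Set.Ioo a b = ∅ → ∀ t ∈ Set.Ioo a b, t ∉ S := by
    intro a b hemp t ht hts
    have : t ∈ S ∩ Set.Ioo a b := ⟨hts, ht⟩
    rw [hemp] at this
    exact this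
  have hconstIoo : ∀ a b : ℝ, 0 ≤ a → a < b → S ∩ Set.Ioo a b = ∅ →
      ∃ k, k < K ∧ ∀ t ∈ Set.Ioo a b, vm t = vmk k ∧ vM t = vMk k := by
    intro a b ha hab hemp
    have hmid : (a + b)/2 ∈ Set.Ioo a b := ⟨by linarith, by linarith⟩
    have hmid0 : (0:ℝ) ≤ (a + b)/2 := le_trans ha (le_of_lt hmid.1)
    have hconst := aux_locally_constant (fun t => (vm t, vM t)) (Set.Ioo a b)
      isPreconnected_Ioo (by
        intro u hu
        filter_upwards [hpc u (le_trans ha (le_of_lt hu.1)) (hnotS a b hemp u hu)]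
          with w hw
        simp only [Prod.mk.injEq]
        exact hw) ((a + b)/2) hmid
    obtain ⟨k, hkK, hk1, hk2⟩ := hstate ((a + b)/2) hmid0
    refine ⟨k, hkK, fun t ht => ?_⟩
    have := hconst t ht
    simp only [Prod.mk.injEq] at this
    exact ⟨this.1.trans hk1, this.2.trans hk2⟩
  have hxIcc : ∀ a b : ℝ, 0 ≤ a → ContinuousOn x (Set.Icc a b) :=
    fun a b ha => hx.mono (fun t ht => le_trans ha ht.1)
  -- ## FTC for ψ(x(t))·xd(t)
  -- transfer integrability from a continuous model agreeing on the open interval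
  have hII : ∀ (f w : ℝ → ℝ) (a b : ℝ), a ≤ b → ContinuousOn w (Set.Icc a b) →
      (∀ t ∈ Set.Ioo a b, f t = w t) → IntervalIntegrable f volume a b := by
    intro f w a b hab hwc heq
    have h1 : IntervalIntegrable w volume a b := hwc.intervalIntegrable_of_Icc hab
    rw [intervalIntegrable_iff, uIoc_of_le hab] at h1 ⊢
    have hrw : volume.restrict (Set.Ioc a b) = volume.restrict (Set.Ioo a b) :=
      (Measure.restrict_congr_set Ioo_ae_eq_Ioc).symm
    unfold IntegrableOn at h1 ⊢
    rw [hrw] at h1 ⊢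
    apply h1.congr
    rw [EventuallyEq, ae_restrict_iff' measurableSet_Ioo]
    exact ae_of_all _ (fun t ht => (heq t ht).symm)
  have hFTC : ∀ (ψ Ψ : ℝ → ℝ), Continuous ψ → (∀ y, HasDerivAt Ψ (ψ y) y) →
      ∀ a b : ℝ, 0 ≤ a → a ≤ b →
      IntervalIntegrable (fun t => ψ (x t) * xd t) volume a b ∧
      (∫ t in a..b, ψ (x t) * xd t) = Ψ (x b) - Ψ (x a) := by
    intro ψ Ψ hψ hΨ
    have hΨc : Continuous Ψ := by
      apply continuous_iff_continuousAt.2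
      exact fun y => (hΨ y).continuousAt
    apply aux_ftc_excep S hSfin (fun t => Ψ (x t))
    intro a b ha hab hemp
    obtain ⟨k, hkK, hconst⟩ := hconstIoo a b ha hab hemp
    have hxc := hxIcc a b ha
    have hwc : ContinuousOn
        (fun t => ψ (x t) * (-c * ((x t - vmk k) / (vMk k - vmk k)))) (Set.Icc a b) :=
      (hψ.comp_continuousOn hxc).mul
        (continuousOn_const.mul ((hxc.sub continuousOn_const).div_const _))
    have heqw : ∀ t ∈ Set.Ioo a b,
        ψ (x t) * xd t = ψ (x t) * (-c * ((x t - vmk k) / (vMk k - vmk k))) := by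
      intro t ht
      have h1 := hform t (le_trans ha (le_of_lt ht.1)) (hnotS a b hemp t ht)
      rw [(hconst t ht).1, (hconst t ht).2] at h1
      rw [h1]
    have hint : IntervalIntegrable (fun t => ψ (x t) * xd t) volume a b :=
      hII _ _ a b (le_of_lt hab) hwc heqw
    refine ⟨hint, ?_⟩
    apply intervalIntegral.integral_eq_sub_of_hasDeriv_right_of_le (le_of_lt hab)
      (hΨc.comp_continuousOn hxc) _ hint
    intro t ht
    have hdx := hode t (le_trans ha (le_of_lt ht.1)) (hnotS a b hemp t ht)
    exact ((hΨ (x t)).comp t hdx).hasDerivWithinAt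
  have hIxd : ∀ a b : ℝ, 0 ≤ a → a ≤ b →
      IntervalIntegrable xd volume a b ∧ (∫ t in a..b, xd t) = x b - x a := by
    intro a b ha hab
    obtain ⟨h1, h2⟩ := hFTC (fun _ => 1) id continuous_const (fun y => hasDerivAt_id y) a b ha hab
    have hfe : (fun t => (1:ℝ) * xd t) = xd := by funext t; ring
    rw [hfe] at h1 h2
    exact ⟨h1, h2⟩
  have hInt1 : ∀ a b : ℝ, 0 ≤ a → a ≤ b →
      IntervalIntegrable (fun t => (vM t - vm t) * xd t) volume a b := by
    apply aux_int_excep S hSfin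
    intro a b ha hab hemp
    obtain ⟨k, hkK, hconst⟩ := hconstIoo a b ha hab hemp
    have hxc := hxIcc a b ha
    apply hII _ (fun t => (vMk k - vmk k) * (-c * ((x t - vmk k) / (vMk k - vmk k))))
      a b (le_of_lt hab)
      (continuousOn_const.mul
        (continuousOn_const.mul ((hxc.sub continuousOn_const).div_const _)))
    intro t ht
    have h1 := hform t (le_trans ha (le_of_lt ht.1)) (hnotS a b hemp t ht)
    rw [(hconst t ht).1, (hconst t ht).2] at h1 ⊢
    rw [h1]
  have hInt2 : ∀ a b : ℝ, 0 ≤ a → a ≤ b →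
      IntervalIntegrable (fun t => |xd t|) volume a b := by
    apply aux_int_excep S hSfin
    intro a b ha hab hemp
    obtain ⟨k, hkK, hconst⟩ := hconstIoo a b ha hab hemp
    have hxc := hxIcc a b ha
    apply hII _ (fun t => |(-c * ((x t - vmk k) / (vMk k - vmk k)))|)
      a b (le_of_lt hab)
      ((continuousOn_const.mul ((hxc.sub continuousOn_const).div_const _)).abs)
    intro t ht
    have h1 := hform t (le_trans ha (le_of_lt ht.1)) (hnotS a b hemp t ht)
    rw [(hconst t ht).1, (hconst t ht).2] at h1
    rw [h1]
  -- ## a.e. goodness on intervals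
  have haeS : ∀ a b : ℝ, 0 ≤ a → ∀ᵐ t ∂(volume.restrict (Set.Icc a b)),
      t ∈ Set.Icc a b ∧ t ∉ S := by
    intro a b ha
    have h1 : ∀ᵐ t ∂(volume.restrict (Set.Icc a b)), t ∈ Set.Icc a b :=
      ae_restrict_mem measurableSet_Icc
    have h2 : ∀ᵐ t ∂(volume.restrict (Set.Icc a b)), t ∉ S := by
      rw [ae_iff]
      have hset : {t | ¬ t ∉ S} = S := by simp
      rw [hset, Measure.restrict_apply' measurableSet_Icc]
      refine measure_mono_null ?_ ((hSfin b).measure_zero volume)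
      intro u hu
      exact Set.mem_inter hu.1 (Set.mem_Icc.mpr ⟨le_trans ha hu.2.1, hu.2.2⟩)
    exact h1.and h2
  -- ## Invariance of [vmk 0, vmk (K-1)]
  have hupper : ∀ t, 0 ≤ t → x t ≤ vmk (K-1) := by
    intro t1 ht1
    by_contra hgt
    push_neg at hgt
    have ht1pos : 0 < t1 := by
      rcases eq_or_lt_of_le ht1 with h | h
      · exact absurd hgt (not_lt.2 (h ▸ hx0.2))
      · exact h
    set Aset := {t : ℝ | t ∈ Set.Icc 0 t1 ∧ x t ≤ vmk (K-1)} with hAdef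
    have hclosed : IsClosed Aset :=
      ContinuousOn.preimage_isClosed_of_isClosed (hxIcc 0 t1 le_rfl) isClosed_Icc isClosed_Iic
    have hbdd : BddAbove Aset := ⟨t1, fun u hu => hu.1.2⟩
    have hne : Aset.Nonempty := ⟨0, Set.mem_Icc.2 ⟨le_rfl, le_of_lt ht1pos⟩, hx0.2⟩
    set ts := sSup Aset with htsdef
    have htsmem : ts ∈ Aset := hclosed.csSup_mem hne hbdd
    have hts0 : 0 ≤ ts := htsmem.1.1
    have htst1 : ts < t1 :=
      lt_of_le_of_ne htsmem.1.2 (fun h => absurd (h ▸ htsmem.2) (not_le.2 hgt))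
    have habove : ∀ s, ts < s → s ≤ t1 → vmk (K-1) < x s := by
      intro s hs1 hs2
      by_contra hxs
      push_neg at hxs
      have hmem : s ∈ Aset := ⟨Set.mem_Icc.2 ⟨le_trans hts0 (le_of_lt hs1), hs2⟩, hxs⟩
      exact absurd (le_csSup hbdd hmem) (not_le.2 hs1)
    have hkey : ∀ t', ts < t' → t' ≤ t1 → x t1 ≤ x t' := by
      intro t' h1 h2
      have h0 : 0 ≤ t' := le_trans hts0 (le_of_lt h1)
      obtain ⟨hIint, hIeq⟩ := hIxd t' t1 h0 h2
      have hle : (∫ u in t'..t1, xd u) ≤ ∫ u in t'..t1, (0:ℝ) := by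
        apply intervalIntegral.integral_mono_ae_restrict h2 hIint intervalIntegrable_const
        filter_upwards [haeS t' t1 h0] with u hu
        obtain ⟨huI, huS⟩ := hu
        have hu0 : 0 ≤ u := le_trans h0 huI.1
        obtain ⟨k, hkK, hk1, hk2⟩ := hstate u hu0
        have hxu : vmk (K-1) < x u := habove u (lt_of_lt_of_le h1 huI.1) huI.2
        have hf := hform u hu0 huS
        rw [hk1, hk2] at hf
        rw [hf]
        have hnum : 0 < x u - vmk k := by
          have := hmleb k hkK; linarith
        have hden := hDpos k hkK
        have hq : 0 < c * ((x u - vmk k) / (vMk k - vmk k)) := by positivity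
        linarith
      rw [intervalIntegral.integral_zero] at hle
      rw [hIeq] at hle
      linarith
    have htend : Filter.Tendsto x (nhdsWithin ts (Set.Ioi ts)) (nhds (x ts)) :=
      (hx ts hts0).mono (fun s hs => le_trans hts0 (le_of_lt hs))
    have hev : ∀ᶠ t' in nhdsWithin ts (Set.Ioi ts), x t1 ≤ x t' := by
      have h1 : Set.Iio t1 ∈ nhdsWithin ts (Set.Ioi ts) :=
        nhdsWithin_le_nhds (Iio_mem_nhds htst1)
      filter_upwards [h1, self_mem_nhdsWithin] with t' ht' ht''
      exact hkey t' ht'' (le_of_lt ht')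
    have hfin := ge_of_tendsto htend hev
    have := htsmem.2
    linarith
  have hlower : ∀ t, 0 ≤ t → vmk 0 ≤ x t := by
    intro t1 ht1
    by_contra hgt
    push_neg at hgt
    have ht1pos : 0 < t1 := by
      rcases eq_or_lt_of_le ht1 with h | h
      · exact absurd hgt (not_lt.2 (h ▸ hx0.1))
      · exact h
    set Aset := {t : ℝ | t ∈ Set.Icc 0 t1 ∧ vmk 0 ≤ x t} with hAdef
    have hclosed : IsClosed Aset := by
      have : Aset = Set.Icc 0 t1 ∩ x ⁻¹' (Set.Ici (vmk 0)) := rfl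
      rw [this]
      exact ContinuousOn.preimage_isClosed_of_isClosed (hxIcc 0 t1 le_rfl) isClosed_Icc
        isClosed_Ici
    have hbdd : BddAbove Aset := ⟨t1, fun u hu => hu.1.2⟩
    have hne : Aset.Nonempty := ⟨0, Set.mem_Icc.2 ⟨le_rfl, le_of_lt ht1pos⟩, hx0.1⟩
    set ts := sSup Aset with htsdef
    have htsmem : ts ∈ Aset := hclosed.csSup_mem hne hbdd
    have hts0 : 0 ≤ ts := htsmem.1.1
    have htst1 : ts < t1 :=
      lt_of_le_of_ne htsmem.1.2 (fun h => absurd (h ▸ htsmem.2) (not_le.2 hgt))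
    have hbelow : ∀ s, ts < s → s ≤ t1 → x s < vmk 0 := by
      intro s hs1 hs2
      by_contra hxs
      push_neg at hxs
      have hmem : s ∈ Aset := ⟨Set.mem_Icc.2 ⟨le_trans hts0 (le_of_lt hs1), hs2⟩, hxs⟩
      exact absurd (le_csSup hbdd hmem) (not_le.2 hs1)
    have hkey : ∀ t', ts < t' → t' ≤ t1 → x t' ≤ x t1 := by
      intro t' h1 h2
      have h0 : 0 ≤ t' := le_trans hts0 (le_of_lt h1)
      obtain ⟨hIint, hIeq⟩ := hIxd t' t1 h0 h2
      have hle : (∫ u in t'..t1, (0:ℝ)) ≤ ∫ u in t'..t1, xd u := by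
        apply intervalIntegral.integral_mono_ae_restrict h2 intervalIntegrable_const hIint
        filter_upwards [haeS t' t1 h0] with u hu
        obtain ⟨huI, huS⟩ := hu
        have hu0 : 0 ≤ u := le_trans h0 huI.1
        obtain ⟨k, hkK, hk1, hk2⟩ := hstate u hu0
        have hxu : x u < vmk 0 := hbelow u (lt_of_lt_of_le h1 huI.1) huI.2
        have hf := hform u hu0 huS
        rw [hk1, hk2] at hf
        rw [hf]
        have hnum : x u - vmk k < 0 := by
          have := hm0le k hkK; linarith
        have hden := hDpos k hkK
        have hq : (x u - vmk k) / (vMk k - vmk k) < 0 := div_neg_of_neg_of_pos hnum hden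
        nlinarith
      rw [intervalIntegral.integral_zero] at hle
      rw [hIeq] at hle
      linarith
    have htend : Filter.Tendsto x (nhdsWithin ts (Set.Ioi ts)) (nhds (x ts)) :=
      (hx ts hts0).mono (fun s hs => le_trans hts0 (le_of_lt hs))
    have hev : ∀ᶠ t' in nhdsWithin ts (Set.Ioi ts), x t' ≤ x t1 := by
      have h1 : Set.Iio t1 ∈ nhdsWithin ts (Set.Ioi ts) :=
        nhdsWithin_le_nhds (Iio_mem_nhds htst1)
      filter_upwards [h1, self_mem_nhdsWithin] with t' ht' ht''
      exact hkey t' ht'' (le_of_lt ht')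
    have hfin := le_of_tendsto htend hev
    have := htsmem.2
    linarith
  -- ## Global bound on xd
  have hxdbd : ∀ t, 0 ≤ t → t ∉ S →
      |xd t| ≤ c * (vmk (K-1) - vmk 0) / (vMk (K-1) - vmk (K-1)) := by
    intro t ht hts
    obtain ⟨k, hkK, h1, h2⟩ := hstate t ht
    have hf := hform t ht hts
    rw [h1, h2] at hf
    rw [hf, abs_mul, abs_neg, abs_of_pos hcpos, abs_div,
      abs_of_pos (hDpos k hkK)]
    have habs : |x t - vmk k| ≤ vmk (K-1) - vmk 0 := by
      rw [abs_le]
      constructor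
      · have := hlower t ht; have := hmleb k hkK; linarith
      · have := hupper t ht; have := hm0le k hkK; linarith
    have h3 : |x t - vmk k| / (vMk k - vmk k)
        ≤ (vmk (K-1) - vmk 0) / (vMk (K-1) - vmk (K-1)) :=
      div_le_div₀ (by linarith) habs hDminpos (hDleb k hkK)
    calc c * (|x t - vmk k| / (vMk k - vmk k))
        ≤ c * ((vmk (K-1) - vmk 0) / (vMk (K-1) - vmk (K-1))) :=
          mul_le_mul_of_nonneg_left h3 (le_of_lt hcpos)
      _ = c * (vmk (K-1) - vmk 0) / (vMk (K-1) - vmk (K-1)) := by ring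
  -- the eventual upper bound
  have hEV : ∀ η : ℝ, 0 < η →
      ∀ᶠ T in atTop,
        T⁻¹ * (∫ t in (0:ℝ)..T, (vM t - vm t) * xd t) ≤ -(L / 2 * g) + η := by
    intro η hη
    obtain ⟨Dm, hDmdef⟩ : ∃ Dm : ℝ, Dm = vMk (K-1) - vmk (K-1) := ⟨_, rfl⟩
    obtain ⟨mB, hmBdef⟩ : ∃ mB : ℝ, mB = vmk (K-1) := ⟨_, rfl⟩
    obtain ⟨A, hAdef⟩ : ∃ A : ℝ, A = (vMk 0 - vmk 0) - Dm := ⟨_, rfl⟩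
    have hDm0 : 0 < Dm := by rw [hDmdef]; exact hDminpos
    have hA0 : 0 < A := by rw [hAdef, hDmdef]; exact hApos
    have hgA : g ≤ A := by rw [hAdef, hDmdef]; exact hAg
    have hmB : ∀ k, k < K → vmk k ≤ mB := by
      intro k hk; rw [hmBdef]; exact hmleb k hk
    have hDmle : ∀ k, k < K → Dm ≤ vMk k - vmk k := by
      intro k hk; rw [hDmdef]; exact hDleb k hk
    obtain ⟨M, hMdef⟩ : ∃ M : ℝ, M = max 1 (2 * A * c * (A + g) / (Dm * η)) := ⟨_, rfl⟩
    have hM1 : (1:ℝ) ≤ M := by rw [hMdef]; exact le_max_left _ _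
    have hMge : 2 * A * c * (A + g) / (Dm * η) ≤ M := by
      rw [hMdef]; exact le_max_right _ _
    have hMpos : (0:ℝ) < M := lt_of_lt_of_le one_pos hM1
    obtain ⟨r, hrdef⟩ : ∃ r : ℝ, r = (A + g) / M := ⟨_, rfl⟩
    have hrpos : 0 < r := by
      rw [hrdef]; exact div_pos (by linarith) hMpos
    have hMr : M * r = A + g := by
      rw [hrdef]; field_simp
    obtain ⟨δ, hδdef⟩ : ∃ δ : ℝ, δ = A * (c * r / Dm) := ⟨_, rfl⟩
    have hδpos : 0 < δ := by
      rw [hδdef]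
      exact mul_pos hA0 (div_pos (mul_pos hcpos hrpos) hDm0)
    have hδle : δ ≤ η / 2 := by
      have hDη : (0:ℝ) < Dm * η := mul_pos hDm0 hη
      rw [div_le_iff₀ hDη] at hMge
      have hδeq : δ = (A * c * (A + g)) / (M * Dm) := by
        rw [hδdef, hrdef]
        field_simp
      rw [hδeq, div_le_iff₀ (mul_pos hMpos hDm0)]
      nlinarith [hMge]
    have hKne : (Finset.range (K-1)).Nonempty := ⟨0, Finset.mem_range.2 (by omega)⟩
    obtain ⟨T1, hT1val⟩ : ∃ T1 : ℝ → ℝ, ∀ y, T1 y = Dm + M * (mB - y) := ⟨_, fun _ => rfl⟩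
    obtain ⟨G, hGval⟩ : ∃ G : ℝ → ℝ, ∀ y, G y = (Finset.range (K-1)).inf' hKne
        (fun k => max (vMk (k+1) - vmk (k+1)) ((vMk k - vmk k) + M * (vmk k - y))) :=
      ⟨_, fun _ => rfl⟩
    obtain ⟨φ, hφval⟩ : ∃ φ : ℝ → ℝ, ∀ y, φ y = g/2 + min (T1 y) (G y) := ⟨_, fun _ => rfl⟩
    have hGle : ∀ y k, k + 1 < K →
        G y ≤ max (vMk (k+1) - vmk (k+1)) ((vMk k - vmk k) + M * (vmk k - y)) := by
      intro y k hk
      rw [hGval]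
      exact Finset.inf'_le _ (Finset.mem_range.2 (by omega))
    have hleG : ∀ y (a : ℝ),
        (∀ j, j + 1 < K → a ≤ max (vMk (j+1) - vmk (j+1)) ((vMk j - vmk j) + M * (vmk j - y)))
        → a ≤ G y := by
      intro y a h
      rw [hGval]
      apply Finset.le_inf'
      intro j hj
      exact h j (by have := Finset.mem_range.1 hj; omega)
    -- Claim U : left of vmk k - r, φ is large
    have hU : ∀ k, k < K → ∀ X, X ≤ vmk k - r → (vMk k - vmk k) + g/2 ≤ φ X := by
      intro k hkK X hX
      rw [hφval, hT1val]
      have h1 : vMk k - vmk k ≤ Dm + M * (mB - X) := by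
        have hm : r ≤ mB - X := by have := hmB k hkK; linarith
        have h2 : M * r ≤ M * (mB - X) := mul_le_mul_of_nonneg_left hm hMpos.le
        rw [hMr] at h2
        have h3 := hDle0 k hkK
        have h4 : vMk 0 - vmk 0 = Dm + A := by rw [hAdef]; ring
        linarith
      have h2 : vMk k - vmk k ≤ G X := by
        apply hleG
        intro j hj1
        rcases le_or_gt k j with hkj | hjk
        · apply le_trans _ (le_max_right _ _)
          have hmj : vmk k ≤ vmk j := hmle k j hkj (by omega)
          have h3 : M * r ≤ M * (vmk j - X) :=
            mul_le_mul_of_nonneg_left (by linarith) hMpos.le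
          rw [hMr] at h3
          have h4 := hDmle j (by omega)
          have h5 := hDle0 k hkK
          have h6 : vMk 0 - vmk 0 = Dm + A := by rw [hAdef]; ring
          linarith
        · exact le_trans (hDle (j+1) k (by omega) hkK) (le_max_left _ _)
      have := le_min h1 h2
      linarith
    -- Claim Dn : right of vmk k + r, φ is small
    have hDn : ∀ k, k < K → ∀ X, vmk k + r ≤ X → φ X ≤ (vMk k - vmk k) - g/2 := by
      intro k hkK X hX
      rw [hφval]
      rcases lt_or_ge (k+1) K with hk1 | hk1
      · have h1 := hGle X k hk1
        have h2 : max (vMk (k+1) - vmk (k+1)) ((vMk k - vmk k) + M * (vmk k - X))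
            ≤ (vMk k - vmk k) - g := by
          apply max_le
          · have := hgle k hk1; linarith
          · have h3 : M * r ≤ M * (X - vmk k) :=
              mul_le_mul_of_nonneg_left (by linarith) hMpos.le
            rw [hMr] at h3
            have h4 : M * (vmk k - X) = -(M * (X - vmk k)) := by ring
            linarith
        have h3 := min_le_right (T1 X) (G X)
        linarith
      · have hkeq : k = K - 1 := by omega
        have hDk : vMk k - vmk k = Dm := by rw [hkeq, hDmdef]
        have hmk : vmk k = mB := by rw [hkeq, hmBdef]
        have h3 : M * r ≤ M * (X - mB) := by
          apply mul_le_mul_of_nonneg_left _ hMpos.le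
          rw [← hmk]
          linarith
        rw [hMr] at h3
        have h1 : T1 X ≤ Dm - (A + g) := by
          rw [hT1val]
          have h4 : M * (mB - X) = -(M * (X - mB)) := by ring
          linarith
        have h5 := min_le_left (T1 X) (G X)
        linarith
    -- Claim Blow : left of mB, φ is at least g/2 + Dm
    have hBlow : ∀ X, X ≤ mB → g/2 + Dm ≤ φ X := by
      intro X hX
      rw [hφval]
      have h1 : Dm ≤ T1 X := by
        rw [hT1val]
        have := mul_nonneg hMpos.le (by linarith : (0:ℝ) ≤ mB - X)
        linarith
      have h2 : Dm ≤ G X := by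
        apply hleG
        intro j hj
        exact le_trans (hDmle (j+1) hj) (le_max_left _ _)
      have := le_min h1 h2
      linarith
    -- Claim Bup : right of vmk k, φ is at most g/2 + D k
    have hBup : ∀ k, k < K → ∀ X, vmk k ≤ X → φ X ≤ g/2 + (vMk k - vmk k) := by
      intro k hkK X hX
      rw [hφval]
      rcases lt_or_ge (k+1) K with hk1 | hk1
      · have h1 := hGle X k hk1
        have h2 : max (vMk (k+1) - vmk (k+1)) ((vMk k - vmk k) + M * (vmk k - X))
            ≤ vMk k - vmk k := by
          apply max_le
          · exact hDle k (k+1) (by omega) hk1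
          · have := mul_nonpos_of_nonneg_of_nonpos hMpos.le
              (by linarith : vmk k - X ≤ 0)
            linarith
        have h3 := min_le_right (T1 X) (G X)
        linarith
      · have hkeq : k = K - 1 := by omega
        have hDk : vMk k - vmk k = Dm := by rw [hkeq, hDmdef]
        have hmk : vmk k = mB := by rw [hkeq, hmBdef]
        have h1 : T1 X ≤ Dm := by
          rw [hT1val]
          have := mul_nonpos_of_nonneg_of_nonpos hMpos.le
            (by rw [← hmk]; linarith : mB - X ≤ 0)
          linarith
        have h5 := min_le_left (T1 X) (G X)
        linarith
    -- Claim Bnd : global linear upper bound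
    have hBnd : ∀ y, φ y ≤ g/2 + (Dm + M * (mB - y)) := by
      intro y
      rw [hφval]
      have h1 := min_le_left (T1 y) (G y)
      have h2 := hT1val y
      linarith
    -- continuity of φ
    have hφc : Continuous φ := by
      have hfe : φ = fun y => g/2 + min (Dm + M * (mB - y))
          ((Finset.range (K-1)).inf' hKne
            (fun k => max (vMk (k+1) - vmk (k+1)) ((vMk k - vmk k) + M * (vmk k - y)))) := by
        funext y
        rw [hφval, hT1val, hGval]
      rw [hfe]
      apply continuous_const.add
      apply Continuous.min
      · exact continuous_const.add (continuous_const.mul (continuous_const.sub continuous_id))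
      · apply aux_continuous_inf' (Finset.range (K-1))
          (fun k y => max (vMk (k+1) - vmk (k+1)) ((vMk k - vmk k) + M * (vmk k - y))) hKne
        intro i _
        exact continuous_const.max
          (continuous_const.add (continuous_const.mul (continuous_const.sub continuous_id)))
    -- potential function
    obtain ⟨Φ, hΦval⟩ : ∃ Φ : ℝ → ℝ, ∀ y, Φ y = ∫ s in (0:ℝ)..y, φ s := ⟨_, fun _ => rfl⟩
    have hΦd : ∀ y, HasDerivAt Φ (φ y) y := by
      have hfe : Φ = fun y => ∫ s in (0:ℝ)..y, φ s := funext hΦval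
      rw [hfe]
      exact fun y => intervalIntegral.integral_hasDerivAt_right
        (hφc.intervalIntegrable _ _) (hφc.stronglyMeasurableAtFilter _ _) hφc.continuousAt
    have hΦdiff : ∀ a b : ℝ, Φ b - Φ a = ∫ s in a..b, φ s := by
      intro a b
      rw [hΦval, hΦval]
      exact intervalIntegral.integral_interval_sub_left
        (hφc.intervalIntegrable _ _) (hφc.intervalIntegrable _ _)
    obtain ⟨a0, ha0def⟩ : ∃ a0 : ℝ, a0 = g/2 + Dm := ⟨_, rfl⟩
    have ha0pos : 0 < a0 := by rw [ha0def]; linarith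
    have hmid : ∀ z, mB ≤ z → z ≤ mB + a0/M → Φ z ≤ Φ mB + a0 * (a0/M) := by
      intro z h1 h2
      have h3 : (∫ s in mB..z, φ s) ≤ ∫ _ in mB..z, a0 := by
        apply intervalIntegral.integral_mono_on h1 (hφc.intervalIntegrable _ _)
          intervalIntegrable_const
        intro u hu
        have h4 := hBnd u
        have h5 : M * (mB - u) ≤ 0 :=
          mul_nonpos_of_nonneg_of_nonpos hMpos.le (by linarith [hu.1])
        rw [ha0def]
        linarith
      rw [intervalIntegral.integral_const, smul_eq_mul] at h3
      have h6 := hΦdiff mB z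
      have h7 : (z - mB) * a0 ≤ (a0/M) * a0 :=
        mul_le_mul_of_nonneg_right (by linarith) ha0pos.le
      have h8 : (a0/M) * a0 = a0 * (a0/M) := by ring
      linarith
    have hCle : ∀ y, Φ y ≤ Φ mB + a0 * (a0/M) := by
      intro y
      have ha0M : 0 ≤ a0 * (a0/M) := by positivity
      rcases le_total y mB with hy | hy
      · have h1 : 0 ≤ ∫ s in y..mB, φ s := by
          apply intervalIntegral.integral_nonneg hy
          intro u hu
          have := hBlow u hu.2
          linarith
        have h2 := hΦdiff y mB
        linarith
      · rcases le_total y (mB + a0/M) with hy2 | hy2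
        · exact hmid y hy hy2
        · have h1 : (∫ s in (mB + a0/M)..y, φ s) ≤ ∫ _ in (mB + a0/M)..y, (0:ℝ) := by
            apply intervalIntegral.integral_mono_on hy2 (hφc.intervalIntegrable _ _)
              intervalIntegrable_const
            intro u hu
            have h5 := hBnd u
            have h6 : a0/M ≤ u - mB := by linarith [hu.1]
            have h7 : M * (a0/M) ≤ M * (u - mB) :=
              mul_le_mul_of_nonneg_left h6 hMpos.le
            have h8 : M * (a0/M) = a0 := by field_simp
            have h9 : M * (mB - u) = -(M * (u - mB)) := by ring
            linarith
          rw [intervalIntegral.integral_zero] at h1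
          have h2 := hΦdiff (mB + a0/M) y
          have h3 : mB ≤ mB + a0/M := by
            have h4 : 0 ≤ a0/M := by positivity
            linarith
          have h4 := hmid (mB + a0/M) h3 le_rfl
          linarith
    -- pointwise inequality
    have hpw : ∀ t, 0 ≤ t → t ∉ S →
        (vM t - vm t) * xd t + g/2 * |xd t| ≤ φ (x t) * xd t + δ := by
      intro t ht hts
      obtain ⟨k, hkK, hk1, hk2⟩ := hstate t ht
      have hf := hform t ht hts
      rw [hk1, hk2] at hf ⊢
      have hDk := hDpos k hkK
      have hDkm := hDmle k hkK
      have hxub : x t ≤ mB := by rw [hmBdef]; exact hupper t ht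
      have hxlb := hlower t ht
      have hDk0 := hDle0 k hkK
      have hDmA : vMk 0 - vmk 0 = Dm + A := by rw [hAdef]; ring
      rcases le_or_gt (x t) (vmk k) with hXm | hXm
      · have hxdv : xd t = c * ((vmk k - x t) / (vMk k - vmk k)) := by rw [hf]; ring
        have hxdnn : 0 ≤ xd t := by
          rw [hxdv]
          exact mul_nonneg hcpos.le (div_nonneg (by linarith) hDk.le)
        rw [abs_of_nonneg hxdnn]
        rcases le_or_gt (x t) (vmk k - r) with hXr | hXr
        · have hφ := hU k hkK (x t) hXr
          have h1 : (vMk k - vmk k) + g/2 - φ (x t) ≤ 0 := by linarith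
          have h2 : ((vMk k - vmk k) + g/2 - φ (x t)) * xd t ≤ 0 :=
            mul_nonpos_of_nonpos_of_nonneg h1 hxdnn
          have h3 : ((vMk k - vmk k) + g/2 - φ (x t)) * xd t
              = (vMk k - vmk k) * xd t + g/2 * xd t - φ (x t) * xd t := by ring
          rw [h3] at h2
          linarith
        · have hφlb : g/2 + Dm ≤ φ (x t) := hBlow (x t) (le_trans hXm (hmB k hkK))
          have hxdub : xd t ≤ c * r / Dm := by
            rw [hxdv]
            have h4 : (vmk k - x t) / (vMk k - vmk k) ≤ r / Dm :=
              div_le_div₀ hrpos.le (by linarith) hDm0 hDkm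
            calc c * ((vmk k - x t) / (vMk k - vmk k)) ≤ c * (r / Dm) :=
                  mul_le_mul_of_nonneg_left h4 hcpos.le
              _ = c * r / Dm := by ring
          have hfac : (vMk k - vmk k) + g/2 - φ (x t) ≤ A := by linarith
          have h2 : ((vMk k - vmk k) + g/2 - φ (x t)) * xd t ≤ A * (c * r / Dm) := by
            rcases le_or_gt ((vMk k - vmk k) + g/2 - φ (x t)) 0 with hfe | hfe
            · apply le_trans (mul_nonpos_of_nonpos_of_nonneg hfe hxdnn)
              have : 0 ≤ c * r / Dm := by positivity
              exact mul_nonneg hA0.le this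
            · exact mul_le_mul hfac hxdub hxdnn hA0.le
          have h3 : ((vMk k - vmk k) + g/2 - φ (x t)) * xd t
              = (vMk k - vmk k) * xd t + g/2 * xd t - φ (x t) * xd t := by ring
          rw [h3] at h2
          rw [hδdef]
          linarith
      · have hxdv : xd t = -(c * ((x t - vmk k) / (vMk k - vmk k))) := by rw [hf]; ring
        have hxdnp : xd t ≤ 0 := by
          rw [hxdv]
          exact neg_nonpos_of_nonneg
            (mul_nonneg hcpos.le (div_nonneg (by linarith) hDk.le))
        rw [abs_of_nonpos hxdnp]
        rcases le_or_gt (vmk k + r) (x t) with hXr | hXr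
        · have hφ := hDn k hkK (x t) hXr
          have h1 : φ (x t) + g/2 - (vMk k - vmk k) ≤ 0 := by linarith
          have h2 : (φ (x t) + g/2 - (vMk k - vmk k)) * (-(xd t)) ≤ 0 :=
            mul_nonpos_of_nonpos_of_nonneg h1 (by linarith)
          have h3 : (φ (x t) + g/2 - (vMk k - vmk k)) * (-(xd t))
              = -(φ (x t) * xd t) - g/2 * xd t + (vMk k - vmk k) * xd t := by ring
          rw [h3] at h2
          linarith
        · have hφub : φ (x t) ≤ g/2 + (vMk k - vmk k) :=
            hBup k hkK (x t) (by linarith)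
          have hnxdub : -(xd t) ≤ c * r / Dm := by
            rw [hxdv, neg_neg]
            have h4 : (x t - vmk k) / (vMk k - vmk k) ≤ r / Dm :=
              div_le_div₀ hrpos.le (by linarith) hDm0 hDkm
            calc c * ((x t - vmk k) / (vMk k - vmk k)) ≤ c * (r / Dm) :=
                  mul_le_mul_of_nonneg_left h4 hcpos.le
              _ = c * r / Dm := by ring
          have hfac : φ (x t) + g/2 - (vMk k - vmk k) ≤ A := by linarith
          have h2 : (φ (x t) + g/2 - (vMk k - vmk k)) * (-(xd t)) ≤ A * (c * r / Dm) := by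
            rcases le_or_gt (φ (x t) + g/2 - (vMk k - vmk k)) 0 with hfe | hfe
            · apply le_trans (mul_nonpos_of_nonpos_of_nonneg hfe (by linarith))
              have : 0 ≤ c * r / Dm := by positivity
              exact mul_nonneg hA0.le this
            · exact mul_le_mul hfac hnxdub (by linarith) hA0.le
          have h3 : (φ (x t) + g/2 - (vMk k - vmk k)) * (-(xd t))
              = -(φ (x t) * xd t) - g/2 * xd t + (vMk k - vmk k) * xd t := by ring
          rw [h3] at h2
          rw [hδdef]
          linarith
    -- integrate the pointwise inequality over [0, T]
    have hTineq : ∀ T : ℝ, 0 < T →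
        (∫ t in (0:ℝ)..T, (vM t - vm t) * xd t)
          ≤ (Φ mB + a0 * (a0/M) - Φ (x 0)) + δ * T
            - g/2 * (∫ t in (0:ℝ)..T, |xd t|) := by
      intro T hT0
      obtain ⟨hI3, hF3⟩ := hFTC φ Φ hφc hΦd 0 T le_rfl hT0.le
      have hI1 := hInt1 0 T le_rfl hT0.le
      have hI2 := hInt2 0 T le_rfl hT0.le
      have hImono : (∫ t in (0:ℝ)..T, ((vM t - vm t) * xd t + g/2 * |xd t|))
          ≤ ∫ t in (0:ℝ)..T, (φ (x t) * xd t + δ) := by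
        apply intervalIntegral.integral_mono_ae_restrict hT0.le
          (hI1.add (hI2.const_mul _)) (hI3.add intervalIntegrable_const)
        filter_upwards [haeS 0 T le_rfl] with u hu
        exact hpw u hu.1.1 hu.2
      rw [intervalIntegral.integral_add hI1 (hI2.const_mul _),
        intervalIntegral.integral_add hI3 intervalIntegrable_const,
        intervalIntegral.integral_const_mul, intervalIntegral.integral_const,
        smul_eq_mul, hF3] at hImono
      have hΦub := hCle (x T)
      nlinarith [hImono]
    -- pass to the limit
    obtain ⟨C0, hC0def⟩ : ∃ C0 : ℝ, C0 = Φ mB + a0 * (a0/M) - Φ (x 0) := ⟨_, rfl⟩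
    obtain ⟨ε2, hε2def⟩ : ∃ ε2 : ℝ, ε2 = η / (2 * g) := ⟨_, rfl⟩
    have hε2pos : 0 < ε2 := by rw [hε2def]; positivity
    have hbdd2 : ∀ᶠ T in atTop, (0:ℝ) ≤ T⁻¹ * ∫ t in (0:ℝ)..T, |xd t| := by
      filter_upwards [eventually_gt_atTop (0:ℝ)] with T hT
      exact mul_nonneg (inv_nonneg.2 hT.le)
        (intervalIntegral.integral_nonneg hT.le (fun u _ => abs_nonneg _))
    have hliminf : ∀ᶠ T in atTop, L - ε2 < T⁻¹ * ∫ t in (0:ℝ)..T, |xd t| := by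
      apply Filter.eventually_lt_of_lt_liminf
      · rw [hL]; linarith
      · exact ⟨0, Filter.eventually_map.2 hbdd2⟩
    have htail : Filter.Tendsto (fun T : ℝ => C0 / T) atTop (nhds 0) :=
      tendsto_const_nhds.div_atTop tendsto_id
    have hev4 : ∀ᶠ T in atTop, C0 / T < η/4 :=
      htail.eventually (gt_mem_nhds (by linarith))
    filter_upwards [eventually_gt_atTop (0:ℝ), hliminf, hev4] with T hT0 hf2 hC0T
    have h1 := hTineq T hT0
    rw [← hC0def] at h1
    have h2 : T⁻¹ * (∫ t in (0:ℝ)..T, (vM t - vm t) * xd t)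
        ≤ T⁻¹ * (C0 + δ * T - g/2 * ∫ t in (0:ℝ)..T, |xd t|) :=
      mul_le_mul_of_nonneg_left h1 (inv_nonneg.2 hT0.le)
    have h3 : T⁻¹ * (C0 + δ * T - g/2 * ∫ t in (0:ℝ)..T, |xd t|)
        = C0 / T + δ - g/2 * (T⁻¹ * ∫ t in (0:ℝ)..T, |xd t|) := by
      field_simp
    rw [h3] at h2
    have h5 : g/2 * (L - ε2) ≤ g/2 * (T⁻¹ * ∫ t in (0:ℝ)..T, |xd t|) :=
      mul_le_mul_of_nonneg_left hf2.le (by linarith)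
    have h6 : g/2 * ε2 = η/4 := by
      rw [hε2def]
      field_simp
      ring
    have h7 : -(L / 2 * g) = -(g/2 * L) := by ring
    have h8 : g/2 * (L - ε2) = g/2 * L - g/2 * ε2 := by ring
    linarith
  have hLB : ∀ᶠ T in atTop,
      -((vMk 0 - vmk 0) * (c * (vmk (K-1) - vmk 0) / (vMk (K-1) - vmk (K-1))))
        ≤ T⁻¹ * (∫ t in (0:ℝ)..T, (vM t - vm t) * xd t) := by
    set B : ℝ := (vMk 0 - vmk 0) * (c * (vmk (K-1) - vmk 0) / (vMk (K-1) - vmk (K-1))) with hBdef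
    filter_upwards [eventually_ge_atTop (1:ℝ)] with T hT
    have hT0 : (0:ℝ) < T := lt_of_lt_of_le one_pos hT
    have hmono' : (∫ _ in (0:ℝ)..T, -B) ≤ ∫ t in (0:ℝ)..T, (vM t - vm t) * xd t := by
      apply intervalIntegral.integral_mono_ae_restrict hT0.le intervalIntegrable_const
        (hInt1 0 T le_rfl hT0.le)
      filter_upwards [haeS 0 T le_rfl] with u hu
      obtain ⟨huI, huS⟩ := hu
      obtain ⟨k, hkK, hk1, hk2⟩ := hstate u huI.1
      rw [hk1, hk2]
      have hb1 := hxdbd u huI.1 huS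
      have hDk := hDpos k hkK
      have habs : |(vMk k - vmk k) * xd u| ≤ B := by
        rw [hBdef, abs_mul, abs_of_pos hDk]
        exact mul_le_mul (hDle0 k hkK) hb1 (abs_nonneg _)
          (by linarith [hDpos 0 (by omega : 0 < K)])
      have hneg := neg_abs_le ((vMk k - vmk k) * xd u)
      linarith
    rw [intervalIntegral.integral_const, smul_eq_mul] at hmono'
    have hstep : -B = T⁻¹ * ((T - 0) * (-B)) := by field_simp; ring
    rw [hstep]
    exact mul_le_mul_of_nonneg_left hmono' (inv_nonneg.2 hT0.le)
  have hcb1 : IsCoboundedUnder (· ≤ ·) atTop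
      (fun T : ℝ => T⁻¹ * ∫ t in (0:ℝ)..T, (vM t - vm t) * xd t) :=
    isCoboundedUnder_le_of_eventually_le atTop hLB
  have hmain : limsup (fun T : ℝ => T⁻¹ * ∫ t in (0:ℝ)..T, (vM t - vm t) * xd t) atTop
      ≤ -(L / 2 * g) := by
    apply le_of_forall_sub_le
    intro η hη
    have := Filter.limsup_le_of_le hcb1 (hEV η hη)
    linarith
  have hneg : -(L / 2 * g) < 0 := by nlinarith
  refine ⟨⟨hmain, hneg⟩, ?_⟩
  -- third conjunct
  have hfac : (0:ℝ) < ((n:ℝ) - 1) / (n:ℝ) := by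
    apply div_pos <;> linarith
  have heq3 : ∀ T : ℝ, (∫ t in (0:ℝ)..T, ((n : ℝ) - 1) / (n : ℝ) * ((vM t - vm t) * xd t))
      = ((n : ℝ) - 1) / (n : ℝ) * ∫ t in (0:ℝ)..T, (vM t - vm t) * xd t := by
    intro T
    exact intervalIntegral.integral_const_mul _ _
  have hev3 : ∀ᶠ T in atTop,
      T⁻¹ * (∫ t in (0:ℝ)..T, ((n : ℝ) - 1) / (n : ℝ) * ((vM t - vm t) * xd t))
        ≤ ((n : ℝ) - 1) / (n : ℝ) * (-(L / 2 * g) / 2) := by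
    have hη : 0 < -(-(L / 2 * g)) / 2 := by nlinarith
    filter_upwards [hEV (-(-(L / 2 * g)) / 2) hη] with T hT
    rw [heq3, mul_left_comm]
    exact mul_le_mul_of_nonneg_left (by linarith) (le_of_lt hfac)
  have hcb3 : IsCoboundedUnder (· ≤ ·) atTop
      (fun T : ℝ => T⁻¹ * ∫ t in (0:ℝ)..T, ((n : ℝ) - 1) / (n : ℝ) * ((vM t - vm t) * xd t)) := by
    apply isCoboundedUnder_le_of_eventually_le atTop
      (x := ((n : ℝ) - 1) / (n : ℝ) *
        (-((vMk 0 - vmk 0) * (c * (vmk (K-1) - vmk 0) / (vMk (K-1) - vmk (K-1))))))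
    filter_upwards [hLB] with T hT
    rw [heq3, mul_left_comm]
    exact mul_le_mul_of_nonneg_left hT (le_of_lt hfac)
  calc limsup _ atTop ≤ ((n : ℝ) - 1) / (n : ℝ) * (-(L / 2 * g) / 2) :=
        Filter.limsup_le_of_le hcb3 hev3
    _ < 0 := by
        apply mul_neg_of_pos_of_neg hfac
        nlinarith
end
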